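/- arXiv:0906.4642 — 7 statements merged into one kernel-verified Lean document; each statement's English description precedes it below -/
import Mathlib

section
/- Under Assumption (*), there exists a polynomial P in one variable with nonnegative real coefficients such that: if A = {±e^(1),…,±e^(k)}, then S(z_1,…,z_k) = P(∑_{j=1}^k (z_j + 1/z_j)) identically for all nonzero z_1,…,z_k; and if A = {ε_1 e^(1) + ⋯ + ε_k e^(k) : ε_j ∈ {−1,+1}}, then S(z_1,…,z_k) = P(∏_{j=1}^k (z_j + 1/z_j)) identically for all nonzero z_1,…,z_k. -/
open scoped BigOperators
open Classical

noncomputable section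

/-- Reflection in the hyperplane `x_i - x_j = 0`: swaps coordinates `i` and `j`. -/
def swapCoord {k : ℕ} (i j : Fin k) : Equiv.Perm (Fin k → ℤ) :=
  Equiv.arrowCongr (Equiv.swap i j) (Equiv.refl ℤ)

/-- Reflection in the hyperplane `x_i = 0`: negates the `i`-th coordinate. -/
def negCoord {k : ℕ} (i : Fin k) : Equiv.Perm (Fin k → ℤ) :=
  Equiv.piCongrRight fun j => if j = i then Equiv.neg ℤ else Equiv.refl ℤ

/-- The reflection group of type `B_k`, generated by the reflections in the hyperplanes
`x_i - x_j = 0` (`i < j`) and `x_1 = 0`. -/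
def BkGroup (k : ℕ) : Subgroup (Equiv.Perm (Fin k → ℤ)) :=
  Subgroup.closure
    ({g | ∃ i j : Fin k, i < j ∧ g = swapCoord i j} ∪
      {g | ∃ h : 0 < k, g = negCoord ⟨0, h⟩})

/-- The Grabiner–Magyar atomic step set `{±e⁽¹⁾, …, ±e⁽ᵏ⁾}`. -/
def stepsGM1 (k : ℕ) : Set (Fin k → ℤ) :=
  {a | ∃ i : Fin k, a = Pi.single i 1 ∨ a = -Pi.single i 1}

/-- The Grabiner–Magyar atomic step set `{ε₁e⁽¹⁾+⋯+εₖe⁽ᵏ⁾ : εⱼ ∈ {±1}}`. -/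
def stepsGM2 (k : ℕ) : Set (Fin k → ℤ) :=
  {a | ∀ j, a j = 1 ∨ a j = -1}

/-- The open Weyl chamber `0 < x₁ < ⋯ < x_k`. -/
def chamberOpen (k : ℕ) : Set (Fin k → ℤ) :=
  {x | StrictMono x ∧ ∀ j, 0 < x j}

/-- Assumption (*): `A` is one of the two Grabiner–Magyar step sets, `S` is a composite
step set over `A` closed under reflecting initial segments, and the (positive) weight `w`
is invariant under reflecting initial segments. -/
def AssumptionStar {k : ℕ} (A : Finset (Fin k → ℤ)) (S : Finset (List (Fin k → ℤ)))
    (w : List (Fin k → ℤ) → ℝ) : Prop :=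
  ((A : Set (Fin k → ℤ)) = stepsGM1 k ∨ (A : Set (Fin k → ℤ)) = stepsGM2 k) ∧
    (∀ s ∈ S, ∀ a ∈ s, a ∈ A) ∧ (∀ s ∈ S, 0 < w s) ∧
    ∀ s ∈ S, ∀ g ∈ BkGroup k, ∀ m ≤ s.length,
      ((s.take m).map (⇑g) ++ s.drop m) ∈ S ∧
        w ((s.take m).map (⇑g) ++ s.drop m) = w s

/-- The sequence of atomic steps of a walk with composite steps `f 0, f 1, …`. -/
def walkAtoms {k : ℕ} {S : Finset (List (Fin k → ℤ))} {n : ℕ}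
    (f : Fin n → {s // s ∈ S}) : List (Fin k → ℤ) :=
  (List.ofFn fun j => (f j : List (Fin k → ℤ))).flatten

/-- Generating function (weighted count) of `n`-step walks from `u` to `v`. -/
def Pn {k : ℕ} (S : Finset (List (Fin k → ℤ))) (w : List (Fin k → ℤ) → ℝ)
    (n : ℕ) (u v : Fin k → ℤ) : ℝ :=
  ∑ f : Fin n → {s // s ∈ S},
    if u + ∑ j, (f j : List (Fin k → ℤ)).sum = v then ∏ j, w (f j) else 0

/-- Generating function (weighted count) of `n`-step walks from `u` to `v`, all of whose
intermediate positions (after every atomic step) stay in the open chamber. -/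
def PnPlus {k : ℕ} (S : Finset (List (Fin k → ℤ))) (w : List (Fin k → ℤ) → ℝ)
    (n : ℕ) (u v : Fin k → ℤ) : ℝ :=
  ∑ f : Fin n → {s // s ∈ S},
    if (u + ∑ j, (f j : List (Fin k → ℤ)).sum = v) ∧
        ∀ m : ℕ, u + ((walkAtoms f).take m).sum ∈ chamberOpen k
      then ∏ j, w (f j) else 0

/-- The composite step generating function `S(z₁,…,z_k)`. -/
def compGF {k : ℕ} (S : Finset (List (Fin k → ℤ))) (w : List (Fin k → ℤ) → ℝ)
    (z : Fin k → ℂ) : ℂ :=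
  ∑ s ∈ S, (w s : ℂ) * ∏ j, z j ^ s.sum j

/-- The composite step generating function, as a function of real variables. -/
def compGFR {k : ℕ} (S : Finset (List (Fin k → ℤ))) (w : List (Fin k → ℤ) → ℝ)
    (x : Fin k → ℝ) : ℝ :=
  ∑ s ∈ S, w s * ∏ j, x j ^ s.sum j

/-- The set of maximal points of `(φ₁,…,φ_k) ↦ |S(e^{iφ₁},…,e^{iφ_k})|` in `[0,2π)^k`. -/
def maximalPoints {k : ℕ} (S : Finset (List (Fin k → ℤ))) (w : List (Fin k → ℤ) → ℝ) :
    Set (Fin k → ℝ) :=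
  {φ | (∀ j, φ j ∈ Set.Ico (0 : ℝ) (2 * Real.pi)) ∧
    ∀ ψ : Fin k → ℝ,
      ‖compGF S w fun j => Complex.exp (Complex.I * ψ j)‖ ≤
        ‖compGF S w fun j => Complex.exp (Complex.I * φ j)‖}


lemma swapCoord_apply {k : ℕ} (i j : Fin k) (x : Fin k → ℤ) (l : Fin k) :
    swapCoord i j x l = x (Equiv.swap i j l) := rfl

lemma negCoord_apply {k : ℕ} (i : Fin k) (x : Fin k → ℤ) (l : Fin k) :
    negCoord i x l = if l = i then -x l else x l := by
  simp only [negCoord, Equiv.piCongrRight_apply, Pi.map_apply]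
  split_ifs <;> simp

lemma swapCoord_mem {k : ℕ} (i j : Fin k) : swapCoord i j ∈ BkGroup k := by
  rcases lt_trichotomy i j with h | h | h
  · exact Subgroup.subset_closure (Or.inl ⟨i, j, h, rfl⟩)
  · subst h
    have : swapCoord i i = 1 := by
      ext x l; simp [swapCoord_apply, Equiv.swap_self]
    rw [this]; exact one_mem _
  · have : swapCoord i j = swapCoord j i := by
      ext x l; simp [swapCoord_apply, Equiv.swap_comm]
    rw [this]; exact Subgroup.subset_closure (Or.inl ⟨j, i, h, rfl⟩)

lemma negCoord_mem {k : ℕ} (hk : 0 < k) (i : Fin k) : negCoord i ∈ BkGroup k := by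
  have h0 : negCoord ⟨0, hk⟩ ∈ BkGroup k := Subgroup.subset_closure (Or.inr ⟨hk, rfl⟩)
  have key : negCoord i = swapCoord ⟨0, hk⟩ i * negCoord ⟨0, hk⟩ * swapCoord ⟨0, hk⟩ i := by
    ext x l
    simp only [Equiv.Perm.mul_apply, swapCoord_apply, negCoord_apply]
    rcases eq_or_ne l i with rfl | hl
    · simp [Equiv.swap_apply_right]
    · rcases eq_or_ne l ⟨0, hk⟩ with rfl | hl0
      · have hi0 : i ≠ (⟨0, hk⟩ : Fin k) := fun h => hl h.symm
        simp [Equiv.swap_apply_left, hl, hi0]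
      · simp [Equiv.swap_apply_of_ne_of_ne hl0 hl, hl, hl0]
  rw [key]
  exact mul_mem (mul_mem (swapCoord_mem _ _) h0) (swapCoord_mem _ _)

def flips {k : ℕ} (ε : Fin k → Bool) : Equiv.Perm (Fin k → ℤ) :=
  Equiv.piCongrRight fun j => if ε j then Equiv.neg ℤ else Equiv.refl ℤ

lemma flips_apply {k : ℕ} (ε : Fin k → Bool) (x : Fin k → ℤ) (l : Fin k) :
    flips ε x l = if ε l then -x l else x l := by
  simp only [flips, Equiv.piCongrRight_apply, Pi.map_apply]
  split_ifs <;> simp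

lemma flips_mem {k : ℕ} (hk : 0 < k) (ε : Fin k → Bool) : flips ε ∈ BkGroup k := by
  have key : ∀ t : Finset (Fin k), ∀ ε : Fin k → Bool,
      (∀ j, ε j = true → j ∈ t) → flips ε ∈ BkGroup k := by
    intro t
    induction t using Finset.induction_on with
    | empty =>
      intro ε hε
      have : flips ε = 1 := by
        ext x l
        have : ε l = false := by
          cases h : ε l
          · rfl
          · exact absurd (hε l h) (by simp)
        simp [flips_apply, this]
      rw [this]; exact one_mem _
    | @insert a t ha ih =>
      intro ε hε
      cases h : ε a with
      | false =>
        refine ih ε fun j hj => ?_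
        rcases Finset.mem_insert.mp (hε j hj) with rfl | hj'
        · rw [h] at hj; exact absurd hj (by simp)
        · exact hj'
      | true =>
        have hd : flips ε = negCoord a * flips (Function.update ε a false) := by
          ext x l
          simp only [Equiv.Perm.mul_apply, flips_apply, negCoord_apply]
          rcases eq_or_ne l a with rfl | hl
          · simp [Function.update_self, h]
          · simp [Function.update_of_ne hl, hl]
        rw [hd]
        refine mul_mem (negCoord_mem hk a) (ih _ fun j hj => ?_)
        rcases eq_or_ne j a with rfl | hja
        · rw [Function.update_self] at hj; exact absurd hj (by simp)
        · rw [Function.update_of_ne hja] at hj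
          rcases Finset.mem_insert.mp (hε j hj) with rfl | hj'
          · exact absurd rfl hja
          · exact hj'
  exact key Finset.univ ε (fun j _ => Finset.mem_univ j)

lemma swapCoord_neg {k : ℕ} (i j : Fin k) (x : Fin k → ℤ) :
    swapCoord i j (-x) = -(swapCoord i j x) := rfl

lemma swapCoord_single {k : ℕ} (i j : Fin k) :
    swapCoord i j (Pi.single i (1:ℤ)) = Pi.single j 1 := by
  funext l
  rw [swapCoord_apply]
  rcases eq_or_ne l j with rfl | hl
  · rw [Equiv.swap_apply_right]; simp
  · have : Equiv.swap i j l ≠ i := by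
      intro h
      apply hl
      have := congrArg (Equiv.swap i j) h
      simpa [Equiv.swap_apply_left, Equiv.swap_apply_self] using this
    simp [Pi.single_eq_of_ne this, Pi.single_eq_of_ne hl]

lemma negCoord_single {k : ℕ} (j : Fin k) :
    negCoord j (Pi.single j (1:ℤ)) = -Pi.single j 1 := by
  funext l
  rw [negCoord_apply]
  rcases eq_or_ne l j with rfl | hl
  · simp
  · simp [Pi.single_eq_of_ne hl]

lemma negCoord_neg {k : ℕ} (i : Fin k) (x : Fin k → ℤ) :
    negCoord i (-x) = -(negCoord i x) := by
  funext l
  simp only [negCoord_apply, Pi.neg_apply]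
  split_ifs <;> ring

lemma orbit_GM1 {k : ℕ} (hk : 0 < k) {a b : Fin k → ℤ}
    (ha : a ∈ stepsGM1 k) (hb : b ∈ stepsGM1 k) : ∃ g ∈ BkGroup k, g a = b := by
  obtain ⟨i, hi⟩ := ha
  obtain ⟨j, hj⟩ := hb
  rcases hi with rfl | rfl <;> rcases hj with rfl | rfl
  · exact ⟨swapCoord i j, swapCoord_mem i j, swapCoord_single i j⟩
  · refine ⟨negCoord j * swapCoord i j, mul_mem (negCoord_mem hk j) (swapCoord_mem i j), ?_⟩
    rw [Equiv.Perm.mul_apply, swapCoord_single, negCoord_single]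
  · refine ⟨negCoord j * swapCoord i j, mul_mem (negCoord_mem hk j) (swapCoord_mem i j), ?_⟩
    rw [Equiv.Perm.mul_apply, swapCoord_neg, swapCoord_single, negCoord_neg, negCoord_single,
      neg_neg]
  · refine ⟨swapCoord i j, swapCoord_mem i j, ?_⟩
    rw [swapCoord_neg, swapCoord_single]

lemma orbit_GM2 {k : ℕ} (hk : 0 < k) {a b : Fin k → ℤ}
    (ha : a ∈ stepsGM2 k) (hb : b ∈ stepsGM2 k) : ∃ g ∈ BkGroup k, g a = b := by
  refine ⟨flips (fun j => decide (a j ≠ b j)), flips_mem hk _, ?_⟩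
  funext l
  rw [flips_apply]
  rcases eq_or_ne (a l) (b l) with h | h
  · simp [h]
  · rcases ha l with h1 | h1 <;> rcases hb l with h2 | h2 <;> simp [h] <;> omega

section closure
variable {k : ℕ} {A : Finset (Fin k → ℤ)} {S : Finset (List (Fin k → ℤ))}
  {w : List (Fin k → ℤ) → ℝ}

lemma replace_prefix (hSA : ∀ s ∈ S, ∀ a ∈ s, a ∈ A)
    (hop : ∀ s ∈ S, ∀ g ∈ BkGroup k, ∀ m ≤ s.length,
      ((s.take m).map (⇑g) ++ s.drop m) ∈ S ∧ w ((s.take m).map (⇑g) ++ s.drop m) = w s)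
    (horb : ∀ a ∈ A, ∀ b ∈ A, ∃ g ∈ BkGroup k, g a = b) :
    ∀ m : ℕ, ∀ s ∈ S, ∀ u : List (Fin k → ℤ), u.length = m → m ≤ s.length →
      (∀ x ∈ u, x ∈ A) → (u ++ s.drop m) ∈ S ∧ w (u ++ s.drop m) = w s := by
  intro m
  induction m with
  | zero =>
    intro s hs u hu _ _
    have : u = [] := List.length_eq_zero_iff.mp hu
    subst this
    rw [List.nil_append, List.drop_zero]
    exact ⟨hs, rfl⟩
  | succ m ih =>
    intro s hs u hu hms hua
    have hm : m < s.length := hms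
    have hmu : m < u.length := by omega
    set a := s.get ⟨m, hm⟩ with hadef
    set b := u.get ⟨m, hmu⟩ with hbdef
    have haA : a ∈ A := hSA s hs a (s.get_mem _)
    have hbA : b ∈ A := hua b (u.get_mem _)
    obtain ⟨g, hg, hgab⟩ := horb a haA b hbA
    obtain ⟨hs1, hw1⟩ := hop s hs g hg (m+1) hms
    set s1 := (s.take (m+1)).map ⇑g ++ s.drop (m+1) with hs1def
    have hlen1 : s1.length = s.length := by
      simp only [hs1def, List.length_append, List.length_map, List.length_take,
        List.length_drop]
      omega
    have hub : u.take m ++ [b] = u := by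
      have h1 : u.take (m+1) = u.take m ++ (u[m]?).toList := List.take_succ
      have h2 : u[m]? = some b := by
        rw [List.getElem?_eq_getElem hmu]
        simp [hbdef]
      rw [h2] at h1
      have h3 : u.take (m+1) = u := by rw [← hu]; exact List.take_length
      rw [h3] at h1
      exact h1.symm
    have hdrop1 : s1.drop m = [g a] ++ s.drop (m+1) := by
      have h1 : s.take (m+1) = s.take m ++ [a] := by
        have h2 : s[m]? = some a := by
          rw [List.getElem?_eq_getElem hm]
          simp [hadef]
        rw [List.take_succ, h2]
        rfl
      have hnil : (List.drop m (List.map (⇑g) (List.take m s))) = [] :=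
        List.drop_eq_nil_of_le (by simp [List.length_take])
      rw [hs1def, h1, List.map_append, List.drop_append,
        List.drop_append, hnil]
      simp [List.length_take, Nat.min_eq_left hm.le, Nat.sub_eq_zero_of_le]
    obtain ⟨h2, hw2⟩ := ih s1 hs1 (u.take m)
      (by simp [List.length_take]; omega)
      (by rw [hlen1]; omega)
      (fun x hx => hua x (List.mem_of_mem_take hx))
    have key : u.take m ++ s1.drop m = u ++ s.drop (m+1) := by
      rw [hdrop1, hgab, ← List.append_assoc, hub]
    rw [key] at h2 hw2
    exact ⟨h2, hw2.trans hw1⟩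

lemma mem_of_length_eq (hSA : ∀ s ∈ S, ∀ a ∈ s, a ∈ A)
    (hop : ∀ s ∈ S, ∀ g ∈ BkGroup k, ∀ m ≤ s.length,
      ((s.take m).map (⇑g) ++ s.drop m) ∈ S ∧ w ((s.take m).map (⇑g) ++ s.drop m) = w s)
    (horb : ∀ a ∈ A, ∀ b ∈ A, ∃ g ∈ BkGroup k, g a = b)
    {s : List (Fin k → ℤ)} (hs : s ∈ S) {t : List (Fin k → ℤ)}
    (hts : t.length = s.length) (hta : ∀ x ∈ t, x ∈ A) : t ∈ S ∧ w t = w s := by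
  have := replace_prefix hSA hop horb s.length s hs t hts le_rfl hta
  simpa using this

end closure
section sums
variable {k : ℕ} {A : Finset (Fin k → ℤ)} {S : Finset (List (Fin k → ℤ))}
  {w : List (Fin k → ℤ) → ℝ}

lemma level_eq (hSA : ∀ s ∈ S, ∀ a ∈ s, a ∈ A)
    (hop : ∀ s ∈ S, ∀ g ∈ BkGroup k, ∀ m ≤ s.length,
      ((s.take m).map (⇑g) ++ s.drop m) ∈ S ∧ w ((s.take m).map (⇑g) ++ s.drop m) = w s)
    (horb : ∀ a ∈ A, ∀ b ∈ A, ∃ g ∈ BkGroup k, g a = b)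
    {m : ℕ} {s₀ : List (Fin k → ℤ)} (hs₀ : s₀ ∈ S) (hlen : s₀.length = m) :
    S.filter (fun s => s.length = m) =
      (Fintype.piFinset fun _ : Fin m => A).image List.ofFn := by
  ext s
  simp only [Finset.mem_filter, Finset.mem_image, Fintype.mem_piFinset]
  constructor
  · rintro ⟨hs, hsl⟩
    refine ⟨fun i => s.get ⟨i, by omega⟩, fun i => hSA s hs _ (s.get_mem _), ?_⟩
    apply List.ext_get (by simp [hsl])
    intro n h1 h2
    simp [List.get_ofFn]
  · rintro ⟨f, hf, rfl⟩
    have hl : (List.ofFn f).length = m := List.length_ofFn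
    refine ⟨?_, hl⟩
    refine (mem_of_length_eq hSA hop horb hs₀ (by rw [hl, hlen]) ?_).1
    intro x hx
    obtain ⟨i, rfl⟩ := List.mem_ofFn.mp hx
    exact hf i

lemma weight_const (hSA : ∀ s ∈ S, ∀ a ∈ s, a ∈ A)
    (hop : ∀ s ∈ S, ∀ g ∈ BkGroup k, ∀ m ≤ s.length,
      ((s.take m).map (⇑g) ++ s.drop m) ∈ S ∧ w ((s.take m).map (⇑g) ++ s.drop m) = w s)
    (horb : ∀ a ∈ A, ∀ b ∈ A, ∃ g ∈ BkGroup k, g a = b)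
    {s₀ s : List (Fin k → ℤ)} (hs₀ : s₀ ∈ S) (hs : s ∈ S)
    (hlen : s.length = s₀.length) : w s = w s₀ :=
  (mem_of_length_eq hSA hop horb hs₀ hlen (fun x hx => hSA s hs x hx)).2

lemma zpow_sum₀ {ι : Type*} {z : ℂ} (hz : z ≠ 0) (t : Finset ι) (n : ι → ℤ) :
    z ^ (∑ i ∈ t, n i) = ∏ i ∈ t, z ^ n i := by
  classical
  induction t using Finset.induction_on with
  | empty => simp
  | insert _ _ h ih => rw [Finset.sum_insert h, Finset.prod_insert h, zpow_add₀ hz, ih]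

lemma sum_level (hk : 0 < k) (z : Fin k → ℂ) (hz : ∀ j, z j ≠ 0) (m : ℕ) :
    ∑ f ∈ Fintype.piFinset (fun _ : Fin m => A), ∏ j, z j ^ (List.ofFn f).sum j
      = (∑ a ∈ A, ∏ j, z j ^ a j) ^ m := by
  have h1 : ∀ f : Fin m → (Fin k → ℤ),
      ∏ j, z j ^ (List.ofFn f).sum j = ∏ i, ∏ j, z j ^ (f i j) := by
    intro f
    rw [Finset.prod_comm]
    refine Finset.prod_congr rfl fun j _ => ?_
    have hsum : (List.ofFn f).sum j = ∑ i, f i j := by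
      rw [List.sum_ofFn]
      exact Finset.sum_apply j Finset.univ f
    rw [hsum, zpow_sum₀ (hz j)]
  rw [Finset.sum_congr rfl (fun f _ => h1 f)]
  rw [← Finset.prod_univ_sum (fun _ : Fin m => A) (fun _ a => ∏ j, z j ^ a j)]
  simp [Finset.prod_const]

end sums

section Ycomp
variable {k : ℕ} {A : Finset (Fin k → ℤ)}

lemma prod_zpow_single (z : Fin k → ℂ) (i : Fin k) :
    ∏ j, z j ^ ((Pi.single i 1 : Fin k → ℤ)) j = z i := by
  rw [Finset.prod_eq_single i]
  · simp
  · intro j _ hji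
    rw [Pi.single_eq_of_ne hji, zpow_zero]
  · intro h; exact absurd (Finset.mem_univ i) h

lemma prod_zpow_neg_single (z : Fin k → ℂ) (i : Fin k) :
    ∏ j, z j ^ ((-Pi.single i 1 : Fin k → ℤ)) j = (z i)⁻¹ := by
  rw [Finset.prod_eq_single i]
  · simp
  · intro j _ hji
    rw [Pi.neg_apply, Pi.single_eq_of_ne hji, neg_zero, zpow_zero]
  · intro h; exact absurd (Finset.mem_univ i) h

lemma Y_GM1 (hA : (A : Set (Fin k → ℤ)) = stepsGM1 k) (z : Fin k → ℂ) :
    ∑ a ∈ A, ∏ j, z j ^ a j = ∑ j, (z j + (z j)⁻¹) := by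
  classical
  set e : Fin k × Bool → (Fin k → ℤ) :=
    fun p => cond p.2 (Pi.single p.1 1) (-Pi.single p.1 1) with he
  have hsingle_ne : ∀ i i' : Fin k, (Pi.single i 1 : Fin k → ℤ) ≠ -Pi.single i' 1 := by
    intro i i' h
    have := congrFun h i
    rw [Pi.single_eq_same, Pi.neg_apply, Pi.single_apply] at this
    split_ifs at this <;> omega
  have hsingle_inj : ∀ i i' : Fin k, (Pi.single i 1 : Fin k → ℤ) = Pi.single i' 1 → i = i' := by
    intro i i' h
    have := congrFun h i
    rw [Pi.single_eq_same, Pi.single_apply] at this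
    split_ifs at this with hii
    · exact hii
    · omega
  have hAeq : A = Finset.univ.image e := by
    ext a
    have hmem : a ∈ A ↔ a ∈ stepsGM1 k := by rw [← hA]; exact Iff.rfl
    simp only [hmem, stepsGM1, Set.mem_setOf_eq, Finset.mem_image, Finset.mem_univ,
      true_and]
    constructor
    · rintro ⟨i, rfl | rfl⟩
      · exact ⟨(i, true), rfl⟩
      · exact ⟨(i, false), rfl⟩
    · rintro ⟨⟨i, b⟩, rfl⟩
      cases b
      · exact ⟨i, Or.inr rfl⟩
      · exact ⟨i, Or.inl rfl⟩
  have hinj : ∀ p ∈ (Finset.univ : Finset (Fin k × Bool)), ∀ q ∈ Finset.univ,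
      e p = e q → p = q := by
    rintro ⟨i, b⟩ - ⟨i', b'⟩ - h
    simp only [he] at h
    cases b <;> cases b' <;> simp only [Bool.cond_true, Bool.cond_false] at h
    · rw [hsingle_inj i i' (neg_inj.mp h)]
    · exact absurd h.symm (hsingle_ne i' i)
    · exact absurd h (hsingle_ne i i')
    · rw [hsingle_inj i i' h]
  rw [hAeq, Finset.sum_image hinj, Fintype.sum_prod_type]
  refine Finset.sum_congr rfl fun i _ => ?_
  rw [Fintype.sum_bool]
  simp only [he, Bool.cond_true, Bool.cond_false]
  rw [prod_zpow_single, prod_zpow_neg_single]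

lemma Y_GM2 (hA : (A : Set (Fin k → ℤ)) = stepsGM2 k) (z : Fin k → ℂ) :
    ∑ a ∈ A, ∏ j, z j ^ a j = ∏ j, (z j + (z j)⁻¹) := by
  classical
  set ee : (Fin k → Bool) → (Fin k → ℤ) :=
    fun ε j => cond (ε j) 1 (-1) with hee
  have hAeq : A = Finset.univ.image ee := by
    ext a
    have hmem : a ∈ A ↔ a ∈ stepsGM2 k := by rw [← hA]; exact Iff.rfl
    simp only [hmem, stepsGM2, Set.mem_setOf_eq, Finset.mem_image, Finset.mem_univ,
      true_and]
    constructor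
    · intro h
      refine ⟨fun j => decide (a j = 1), ?_⟩
      funext j
      rcases h j with h1 | h1 <;> simp [hee, h1]
    · rintro ⟨ε, rfl⟩
      intro j
      simp only [hee]
      cases ε j <;> simp
  have hinj : ∀ p ∈ (Finset.univ : Finset (Fin k → Bool)), ∀ q ∈ Finset.univ,
      ee p = ee q → p = q := by
    rintro p - q - h
    funext j
    have := congrFun h j
    simp only [hee] at this
    cases hp : p j <;> cases hq : q j <;> simp [hp, hq] at this ⊢
  rw [hAeq, Finset.sum_image hinj]
  have key := Finset.prod_univ_sum (fun _ : Fin k => (Finset.univ : Finset Bool))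
    (fun j b => z j ^ (cond b (1:ℤ) (-1)))
  rw [Fintype.piFinset_univ] at key
  rw [← key]
  refine (Finset.prod_congr rfl fun j _ => ?_).symm
  rw [Fintype.sum_bool]
  simp

end Ycomp

section main
variable {k : ℕ} {A : Finset (Fin k → ℤ)} {S : Finset (List (Fin k → ℤ))}
  {w : List (Fin k → ℤ) → ℝ}

lemma compGF_eq (hSA : ∀ s ∈ S, ∀ a ∈ s, a ∈ A)
    (hop : ∀ s ∈ S, ∀ g ∈ BkGroup k, ∀ m ≤ s.length,
      ((s.take m).map (⇑g) ++ s.drop m) ∈ S ∧ w ((s.take m).map (⇑g) ++ s.drop m) = w s)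
    (horb : ∀ a ∈ A, ∀ b ∈ A, ∃ g ∈ BkGroup k, g a = b)
    (hk : 0 < k) (z : Fin k → ℂ) (hz : ∀ j, z j ≠ 0) :
    compGF S w z = ∑ s ∈ S, ((w s / (A.card:ℝ) ^ s.length : ℝ) : ℂ) *
      (∑ a ∈ A, ∏ j, z j ^ a j) ^ s.length := by
  classical
  set Y : ℂ := ∑ a ∈ A, ∏ j, z j ^ a j with hY
  have hfib1 := Finset.sum_fiberwise_of_maps_to
    (fun s (hs : s ∈ S) => Finset.mem_image_of_mem List.length hs)
    (fun s => (w s : ℂ) * ∏ j, z j ^ s.sum j)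
  have hfib2 := Finset.sum_fiberwise_of_maps_to
    (fun s (hs : s ∈ S) => Finset.mem_image_of_mem List.length hs)
    (fun s => ((w s / (A.card:ℝ) ^ s.length : ℝ) : ℂ) * Y ^ s.length)
  rw [compGF, ← hfib1, ← hfib2]
  refine Finset.sum_congr rfl fun m hm => ?_
  obtain ⟨s₀, hs₀S, hs₀len⟩ := Finset.mem_image.mp hm
  have hlev := level_eq hSA hop horb hs₀S hs₀len
  have hofmem : ∀ f ∈ Fintype.piFinset fun _ : Fin m => A, List.ofFn f ∈ S ∧
      (List.ofFn f).length = m := by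
    intro f hf
    have : List.ofFn f ∈ S.filter (fun s => s.length = m) := by
      rw [hlev]; exact Finset.mem_image_of_mem _ hf
    exact ⟨(Finset.mem_filter.mp this).1, (Finset.mem_filter.mp this).2⟩
  have hwconst : ∀ f ∈ Fintype.piFinset fun _ : Fin m => A, w (List.ofFn f) = w s₀ := by
    intro f hf
    exact weight_const hSA hop horb hs₀S (hofmem f hf).1 (by rw [(hofmem f hf).2, hs₀len])
  have hinj : ∀ x ∈ Fintype.piFinset fun _ : Fin m => A, ∀ y ∈ Fintype.piFinset fun _ : Fin m => A,
      List.ofFn x = List.ofFn y → x = y := fun x _ y _ h => List.ofFn_injective h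
  have hcardne : ((A.card : ℂ) ^ m) ≠ 0 := by
    have h1 : s₀ ∈ S.filter (fun s => s.length = m) := Finset.mem_filter.mpr ⟨hs₀S, hs₀len⟩
    rw [hlev] at h1
    obtain ⟨f, hf, -⟩ := Finset.mem_image.mp h1
    have hpos : 0 < (Fintype.piFinset fun _ : Fin m => A).card := Finset.card_pos.mpr ⟨f, hf⟩
    rw [Fintype.card_piFinset_const] at hpos
    have h2 : A.card ^ m ≠ 0 := by omega
    exact_mod_cast Nat.cast_ne_zero.mpr h2
  rw [hlev, Finset.sum_image hinj, Finset.sum_image hinj]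
  have lhs_eq : ∑ f ∈ Fintype.piFinset (fun _ : Fin m => A),
      (w (List.ofFn f) : ℂ) * ∏ j, z j ^ (List.ofFn f).sum j = (w s₀ : ℂ) * Y ^ m := by
    rw [Finset.sum_congr rfl (fun f hf => by rw [hwconst f hf]), ← Finset.mul_sum,
      sum_level hk z hz m]
  have rhs_eq : ∑ f ∈ Fintype.piFinset (fun _ : Fin m => A),
      ((w (List.ofFn f) / (A.card:ℝ) ^ (List.ofFn f).length : ℝ) : ℂ) *
        Y ^ (List.ofFn f).length = (w s₀ : ℂ) * Y ^ m := by
    have hterm : ∀ f ∈ Fintype.piFinset fun _ : Fin m => A,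
        ((w (List.ofFn f) / (A.card:ℝ) ^ (List.ofFn f).length : ℝ) : ℂ) *
          Y ^ (List.ofFn f).length
          = ((w s₀ / (A.card:ℝ) ^ m : ℝ) : ℂ) * Y ^ m := by
      intro f hf
      rw [(hofmem f hf).2, hwconst f hf]
    rw [Finset.sum_congr rfl hterm, Finset.sum_const, Fintype.card_piFinset_const,
      nsmul_eq_mul]
    push_cast
    field_simp
  rw [lhs_eq, rhs_eq]

end main

/-- Lemma `lem:step_gen_fun_structure_typeC`: under Assumption (*), the
composite step generating function is a polynomial with nonnegative coefficients in
`∑ⱼ (zⱼ + 1/zⱼ)`, respectively in `∏ⱼ (zⱼ + 1/zⱼ)`. -/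
theorem compGF_structure {k : ℕ} (hk : 0 < k)
    (A : Finset (Fin k → ℤ)) (S : Finset (List (Fin k → ℤ))) (w : List (Fin k → ℤ) → ℝ)
    (hstar : AssumptionStar A S w) :
    ∃ P : Polynomial ℝ, (∀ i, 0 ≤ P.coeff i) ∧
      ((A : Set (Fin k → ℤ)) = stepsGM1 k →
        ∀ z : Fin k → ℂ, (∀ j, z j ≠ 0) →
          compGF S w z = Polynomial.aeval (∑ j, (z j + (z j)⁻¹)) P) ∧
      ((A : Set (Fin k → ℤ)) = stepsGM2 k →
        ∀ z : Fin k → ℂ, (∀ j, z j ≠ 0) →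
          compGF S w z = Polynomial.aeval (∏ j, (z j + (z j)⁻¹)) P) := by
  obtain ⟨hA, hSA, hwpos, hop⟩ := hstar
  have horb : ∀ a ∈ A, ∀ b ∈ A, ∃ g ∈ BkGroup k, g a = b := by
    intro a ha b hb
    rcases hA with h | h
    · exact orbit_GM1 hk (h ▸ Finset.mem_coe.mpr ha) (h ▸ Finset.mem_coe.mpr hb)
    · exact orbit_GM2 hk (h ▸ Finset.mem_coe.mpr ha) (h ▸ Finset.mem_coe.mpr hb)
  refine ⟨∑ s ∈ S, Polynomial.C (w s / (A.card:ℝ) ^ s.length) * Polynomial.X ^ s.length,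
    ?_, ?_, ?_⟩
  · intro i
    rw [Polynomial.finset_sum_coeff]
    refine Finset.sum_nonneg fun s hs => ?_
    rw [Polynomial.coeff_C_mul, Polynomial.coeff_X_pow]
    have h0 : 0 ≤ w s / (A.card:ℝ) ^ s.length :=
      div_nonneg (le_of_lt (hwpos s hs)) (by positivity)
    split_ifs
    · simpa using h0
    · simp
  · intro hA1 z hz
    rw [compGF_eq hSA hop horb hk z hz, Y_GM1 hA1 z, map_sum]
    refine Finset.sum_congr rfl fun s hs => ?_
    rw [map_mul, map_pow, Polynomial.aeval_C, Polynomial.aeval_X]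
    norm_num
  · intro hA2 z hz
    rw [compGF_eq hSA hop horb hk z hz, Y_GM2 hA2 z, map_sum]
    refine Finset.sum_congr rfl fun s hs => ?_
    rw [map_mul, map_pow, Polynomial.aeval_C, Polynomial.aeval_X]
    norm_num

end
end

section
/- Let P be a nonconstant polynomial in one variable with nonnegative real coefficients, let k ≥ 1, and let S(z_1,…,z_k) be either P(∑_{j=1}^k (z_j + 1/z_j)) or P(∏_{j=1}^k (z_j + 1/z_j)). Then for all (φ_1,…,φ_k) ∈ ℝ^k one has |S(e^{iφ_1},…,e^{iφ_k})| ≤ S(1,…,1); moreover, if equality |S(e^{iφ_1},…,e^{iφ_k})| = S(1,…,1) holds, then e^{iφ_j} ∈ {1, −1} for every j (i.e., every maximal point of (φ_1,…,φ_k) ↦ |S(e^{iφ_1},…,e^{iφ_k})| lies, modulo 2π, in the set {0,π}^k, while (0,…,0) is always a maximal point). -/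
open scoped BigOperators

private lemma expI_add_inv (φ : ℝ) :
    Complex.exp (Complex.I * φ) + (Complex.exp (Complex.I * φ))⁻¹
      = ((2 * Real.cos φ : ℝ) : ℂ) := by
  rw [← Complex.exp_neg, mul_comm Complex.I (φ : ℂ), Complex.exp_mul_I, ← neg_mul,
    Complex.exp_mul_I]
  rw [Complex.cos_neg, Complex.sin_neg]
  push_cast [← Complex.ofReal_cos]
  ring

private lemma poly_eval_le (P : Polynomial ℝ) (hP : ∀ i, 0 ≤ P.coeff i)
    {x y : ℝ} (hx : 0 ≤ x) (hxy : x ≤ y) : P.eval x ≤ P.eval y := by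
  rw [Polynomial.eval_eq_sum_range, Polynomial.eval_eq_sum_range]
  exact Finset.sum_le_sum fun i _ =>
    mul_le_mul_of_nonneg_left (pow_le_pow_left₀ hx hxy i) (hP i)

private lemma poly_eval_lt (P : Polynomial ℝ) (hP : ∀ i, 0 ≤ P.coeff i)
    (hPnc : P.natDegree ≠ 0) {x y : ℝ} (hx : 0 ≤ x) (hxy : x < y) :
    P.eval x < P.eval y := by
  rw [Polynomial.eval_eq_sum_range, Polynomial.eval_eq_sum_range]
  have hP0 : P ≠ 0 := fun h => hPnc (by simp [h])
  have hlead : 0 < P.coeff P.natDegree :=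
    lt_of_le_of_ne (hP _) (Ne.symm (Polynomial.leadingCoeff_ne_zero.mpr hP0))
  refine Finset.sum_lt_sum
    (fun i _ => mul_le_mul_of_nonneg_left (pow_le_pow_left₀ hx hxy.le i) (hP i))
    ⟨P.natDegree, Finset.self_mem_range_succ _, ?_⟩
  exact mul_lt_mul_of_pos_left (pow_lt_pow_left₀ hxy hx hPnc) hlead

private lemma poly_abs_le (P : Polynomial ℝ) (hP : ∀ i, 0 ≤ P.coeff i) (x : ℝ) :
    |P.eval x| ≤ P.eval |x| := by
  rw [Polynomial.eval_eq_sum_range, Polynomial.eval_eq_sum_range]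
  refine (Finset.abs_sum_le_sum_abs _ _).trans (Finset.sum_le_sum fun i _ => ?_)
  rw [abs_mul, abs_pow, abs_of_nonneg (hP i)]

private lemma cos_lt_one_of (φ : ℝ)
    (h : ¬(Complex.exp (Complex.I * φ) = 1 ∨ Complex.exp (Complex.I * φ) = -1)) :
    |Real.cos φ| < 1 := by
  by_contra hc
  push_neg at hc
  have h1 : |Real.cos φ| = 1 := le_antisymm (Real.abs_cos_le_one φ) hc
  have hs : Real.sin φ = 0 := by
    have h2 := Real.sin_sq_add_cos_sq φ
    have h3 : Real.cos φ ^ 2 = 1 := by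
      rw [← sq_abs, h1]; norm_num
    nlinarith [sq_nonneg (Real.sin φ)]
  have hexp : Complex.exp (Complex.I * φ) = (Real.cos φ : ℂ) := by
    rw [mul_comm, Complex.exp_mul_I, ← Complex.ofReal_cos, ← Complex.ofReal_sin, hs]
    simp
  rcases (abs_eq (by norm_num : (0:ℝ) ≤ 1)).mp h1 with h' | h'
  · exact h (Or.inl (by rw [hexp, h']; norm_num))
  · exact h (Or.inr (by rw [hexp, h']; norm_num))

/-- Lemma `lem:step_gen_fun_maxima`: for a type-`B` composite step
generating function `S`, the torus maximum of `|S|` is attained at `(0,…,0)`, i.e.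
`|S(e^{iφ₁},…,e^{iφ_k})| ≤ S(1,…,1)`, and every maximal point satisfies
`e^{iφⱼ} ∈ {1,-1}` for all `j`. Here `s1 = S(1,…,1)`, which equals `P(2k)` in the first
case and `P(2^k)` in the second case. -/
theorem compGF_torus_maxima (k : ℕ) (hk : 0 < k) (P : Polynomial ℝ)
    (hP : ∀ i, 0 ≤ P.coeff i) (hPnc : P.natDegree ≠ 0)
    (Sfun : (Fin k → ℂ) → ℂ) (s1 : ℝ)
    (hcase :
      ((∀ z : Fin k → ℂ, (∀ j, z j ≠ 0) →
          Sfun z = Polynomial.aeval (∑ j, (z j + (z j)⁻¹)) P) ∧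
        s1 = P.eval (2 * (k : ℝ))) ∨
      ((∀ z : Fin k → ℂ, (∀ j, z j ≠ 0) →
          Sfun z = Polynomial.aeval (∏ j, (z j + (z j)⁻¹)) P) ∧
        s1 = P.eval ((2 : ℝ) ^ k))) :
    ∀ φ : Fin k → ℝ,
      ‖Sfun fun j => Complex.exp (Complex.I * φ j)‖ ≤ s1 ∧
      (‖Sfun fun j => Complex.exp (Complex.I * φ j)‖ = s1 →
        ∀ j, Complex.exp (Complex.I * φ j) = 1 ∨
          Complex.exp (Complex.I * φ j) = -1) := by
  
  intro φ
  set z : Fin k → ℂ := fun j => Complex.exp (Complex.I * φ j) with hzdef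
  have hz0 : ∀ j, z j ≠ 0 := fun j => Complex.exp_ne_zero _
  have hcabs : ∀ j, |2 * Real.cos (φ j)| ≤ 2 := by
    intro j
    rw [abs_mul, abs_two]
    nlinarith [Real.abs_cos_le_one (φ j)]
  rcases hcase with ⟨hS, hs1⟩ | ⟨hS, hs1⟩
  · -- sum case
    set r : ℝ := ∑ j, 2 * Real.cos (φ j) with hrdef
    have hSz : Sfun z = ((P.eval r : ℝ) : ℂ) := by
      rw [hS z hz0, show (∑ j, (z j + (z j)⁻¹)) = ((r : ℝ) : ℂ) by
        rw [hrdef, Complex.ofReal_sum]; exact Finset.sum_congr rfl fun j _ => expI_add_inv (φ j),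
        show ((r : ℝ) : ℂ) = algebraMap ℝ ℂ r from rfl,
        Polynomial.aeval_algebraMap_apply_eq_algebraMap_eval]
      rfl
    have hrb : |r| ≤ 2 * k := by
      refine (Finset.abs_sum_le_sum_abs _ _).trans ?_
      calc ∑ j, |2 * Real.cos (φ j)| ≤ ∑ _j : Fin k, (2:ℝ) :=
            Finset.sum_le_sum fun j _ => hcabs j
        _ = 2 * k := by simp [Finset.card_univ, mul_comm]
    constructor
    · rw [hSz, Complex.norm_real, Real.norm_eq_abs, hs1]
      exact (poly_abs_le P hP r).trans (poly_eval_le P hP (abs_nonneg r) hrb)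
    · intro heq j
      by_contra hj
      have hlt : |Real.cos (φ j)| < 1 := cos_lt_one_of _ hj
      have hrlt : |r| < 2 * k := by
        refine (Finset.abs_sum_le_sum_abs _ _).trans_lt ?_
        calc ∑ j, |2 * Real.cos (φ j)| < ∑ _j : Fin k, (2:ℝ) := by
              refine Finset.sum_lt_sum (fun j _ => hcabs j)
                ⟨j, Finset.mem_univ j, ?_⟩
              rw [abs_mul, abs_two]; nlinarith
          _ = 2 * k := by simp [Finset.card_univ, mul_comm]
      have : ‖Sfun z‖ < s1 := by
        rw [hSz, Complex.norm_real, Real.norm_eq_abs, hs1]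
        exact (poly_abs_le P hP r).trans_lt
          (poly_eval_lt P hP hPnc (abs_nonneg r) hrlt)
      exact absurd heq this.ne
  · -- product case
    set r : ℝ := ∏ j, 2 * Real.cos (φ j) with hrdef
    have hSz : Sfun z = ((P.eval r : ℝ) : ℂ) := by
      rw [hS z hz0, show (∏ j, (z j + (z j)⁻¹)) = ((r : ℝ) : ℂ) by
        rw [hrdef, Complex.ofReal_prod]; exact Finset.prod_congr rfl fun j _ => expI_add_inv (φ j),
        show ((r : ℝ) : ℂ) = algebraMap ℝ ℂ r from rfl,
        Polynomial.aeval_algebraMap_apply_eq_algebraMap_eval]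
      rfl
    have habsr : |r| = ∏ j, |2 * Real.cos (φ j)| := by
      rw [hrdef, Finset.abs_prod]
    have hprodb : ∀ s : Finset (Fin k), ∏ j ∈ s, |2 * Real.cos (φ j)| ≤ 2 ^ s.card := by
      intro s
      calc ∏ j ∈ s, |2 * Real.cos (φ j)| ≤ ∏ _j ∈ s, (2:ℝ) :=
            Finset.prod_le_prod (fun j _ => abs_nonneg _) (fun j _ => hcabs j)
        _ = 2 ^ s.card := by rw [Finset.prod_const]
    have hrb : |r| ≤ 2 ^ k := by
      rw [habsr]
      simpa [Finset.card_univ] using hprodb Finset.univ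
    constructor
    · rw [hSz, Complex.norm_real, Real.norm_eq_abs, hs1]
      exact (poly_abs_le P hP r).trans (poly_eval_le P hP (abs_nonneg r) hrb)
    · intro heq j
      by_contra hj
      have hlt : |Real.cos (φ j)| < 1 := cos_lt_one_of _ hj
      have hclt : |2 * Real.cos (φ j)| < 2 := by
        rw [abs_mul, abs_two]; nlinarith
      have hrlt : |r| < 2 ^ k := by
        rw [habsr, ← Finset.mul_prod_erase Finset.univ _ (Finset.mem_univ j)]
        have hcard : (Finset.univ.erase j).card = k - 1 := by
          rw [Finset.card_erase_of_mem (Finset.mem_univ j), Finset.card_univ, Fintype.card_fin]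
        have h1 : ∏ i ∈ Finset.univ.erase j, |2 * Real.cos (φ i)| ≤ 2 ^ (k - 1) := by
          simpa [hcard] using hprodb (Finset.univ.erase j)
        have h2 : (0:ℝ) ≤ |2 * Real.cos (φ j)| := abs_nonneg _
        calc |2 * Real.cos (φ j)| * ∏ i ∈ Finset.univ.erase j, |2 * Real.cos (φ i)|
            ≤ |2 * Real.cos (φ j)| * 2 ^ (k - 1) := by
              exact mul_le_mul_of_nonneg_left h1 h2
          _ < 2 * 2 ^ (k - 1) := by
              exact mul_lt_mul_of_pos_right hclt (by positivity)
          _ = 2 ^ k := by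
              rw [← pow_succ']
              congr 1
              omega
      have : ‖Sfun z‖ < s1 := by
        rw [hSz, Complex.norm_real, Real.norm_eq_abs, hs1]
        exact (poly_abs_le P hP r).trans_lt
          (poly_eval_lt P hP hPnc (abs_nonneg r) hrlt)
      exact absurd heq this.ne
end

section
/- Let P be a nonconstant polynomial in one variable with nonnegative real coefficients and let k ≥ 1. Set S(z_1,…,z_k) = P(∑_{j=1}^k (z_j + 1/z_j)) and Λ = 2·P'(2k)/P(2k) in the first case, or S(z_1,…,z_k) = P(∏_{j=1}^k (z_j + 1/z_j)) and Λ = 2^k·P'(2^k)/P(2^k) in the second case (assuming P(2k) > 0, respectively P(2^k) > 0). Then there exist constants C > 0 and δ > 0 such that for all (φ_1,…,φ_k) ∈ ℝ^k with max_j |φ_j| < δ one has S(e^{iφ_1},…,e^{iφ_k}) ≠ 0 and | log|S(e^{iφ_1},…,e^{iφ_k})| − log S(1,…,1) + (Λ/2)·∑_{j=1}^k φ_j² | ≤ C · (max_j |φ_j|)⁴. -/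
lemma log1p_bound {v : ℝ} (hv : |v| ≤ 1/2) : |Real.log (1+v) - v| ≤ 2 * v^2 := by
  have h : |(-v)| < 1 := by rw [abs_neg]; linarith
  have h1 := Real.abs_log_sub_add_sum_range_le h 1
  simp [Finset.sum_range_one] at h1
  have h3 : (1:ℝ)/2 ≤ 1 - |v| := by linarith
  have h2 : v ^ 2 / (1 - |v|) ≤ 2 * v^2 := by
    rw [div_le_iff₀ (by linarith)]
    nlinarith [sq_nonneg v]
  calc |Real.log (1+v) - v| = |-v + Real.log (1 + v)| := by rw [neg_add_eq_sub]
    _ ≤ v ^ 2 / (1 - |v|) := h1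
    _ ≤ 2 * v^2 := h2

open Polynomial in
lemma poly_taylor_bound (P : Polynomial ℝ) (t0 : ℝ) :
    ∃ K : ℝ, 0 ≤ K ∧ ∀ s : ℝ, |s| ≤ 1 →
      |P.eval (t0 + s) - P.eval t0 - P.derivative.eval t0 * s| ≤ K * s ^ 2 := by
  set q := taylor t0 P with hq
  have hmon : Monic ((X : ℝ[X]) ^ 2) := monic_X_pow 2
  set m := q %ₘ (X ^ 2) with hm
  set h := q /ₘ (X ^ 2) with hh
  have hdec : m + X ^ 2 * h = q := modByMonic_add_div q (X ^ 2)
  have hq0 : q.coeff 0 = P.eval t0 := by rw [hq]; exact taylor_coeff_zero t0 P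
  have hq1 : q.coeff 1 = P.derivative.eval t0 := by rw [hq]; exact taylor_coeff_one t0 P
  -- coefficients of m
  have hdegm : m.degree < 2 := by
    simpa using degree_modByMonic_lt q hmon
  have hdegm' : m.degree ≤ 1 := by
    by_contra hcon
    push_neg at hcon
    have h2 := Nat.WithBot.add_one_le_of_lt hcon
    rw [one_add_one_eq_two] at h2
    exact absurd hdegm (not_lt.mpr h2)
  have hmc : m = C (m.coeff 1) * X + C (m.coeff 0) :=
    eq_X_add_C_of_degree_le_one hdegm'
  have hc0 : m.coeff 0 = P.eval t0 := by
    have h0 := congrArg (fun p => Polynomial.coeff p 0) hdec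
    simp only [coeff_add] at h0
    have h2 : ((X:ℝ[X]) ^ 2 * h).coeff 0 = 0 := by
      rw [mul_comm, coeff_mul_X_pow']; norm_num
    rw [h2, add_zero] at h0
    rw [h0, hq0]
  have hc1 : m.coeff 1 = P.derivative.eval t0 := by
    have h0 := congrArg (fun p => Polynomial.coeff p 1) hdec
    simp only [coeff_add] at h0
    have h2 : ((X:ℝ[X]) ^ 2 * h).coeff 1 = 0 := by
      rw [mul_comm, coeff_mul_X_pow']; norm_num
    rw [h2, add_zero] at h0
    rw [h0, hq1]
  -- bound h on [-1,1]
  obtain ⟨K, hK⟩ : ∃ K : ℝ, ∀ x ∈ Set.Icc (-1:ℝ) 1, ‖h.eval x‖ ≤ K :=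
    (isCompact_Icc).exists_bound_of_continuousOn (h.continuous_aeval.continuousOn)
  refine ⟨max K 0, le_max_right _ _, fun s hs => ?_⟩
  have hev : P.eval (t0 + s) = q.eval s := by
    rw [hq, taylor_eval, add_comm]
  have hsm : s ∈ Set.Icc (-1:ℝ) 1 := by
    rcases abs_le.mp hs with ⟨a, b⟩; exact ⟨a, b⟩
  have key : P.eval (t0 + s) - P.eval t0 - P.derivative.eval t0 * s = s ^ 2 * h.eval s := by
    rw [hev, ← hdec, eval_add, eval_mul]
    nth_rewrite 1 [hmc]
    simp only [eval_add, eval_mul, eval_C, eval_X, eval_pow]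
    rw [hc0, hc1]
    ring
  rw [key, abs_mul, abs_of_nonneg (sq_nonneg s)]
  have h2 : |h.eval s| ≤ max K 0 := le_trans (by simpa using hK s hsm) (le_max_left _ _)
  calc s ^ 2 * |h.eval s| ≤ s^2 * max K 0 :=
        mul_le_mul_of_nonneg_left h2 (sq_nonneg s)
    _ = max K 0 * s ^ 2 := by ring

lemma prod_one_sub_ge {ι : Type*} (s : Finset ι) (u : ι → ℝ)
    (h : ∀ j ∈ s, 0 ≤ u j ∧ u j ≤ 1) :
    1 - ∑ j ∈ s, u j ≤ ∏ j ∈ s, (1 - u j) := by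
  induction s using Finset.cons_induction with
  | empty => simp
  | cons a s ha ih =>
    rw [Finset.prod_cons, Finset.sum_cons]
    have hs := ih (fun j hj => h j (Finset.mem_cons_of_mem hj))
    have ha1 := h a (Finset.mem_cons_self a s)
    have hprod : (0:ℝ) ≤ ∏ j ∈ s, (1 - u j) :=
      Finset.prod_nonneg (fun j hj => by linarith [(h j (Finset.mem_cons_of_mem hj)).2])
    nlinarith [Finset.sum_nonneg (fun j hj => (h j (Finset.mem_cons_of_mem hj)).1)]

lemma prod_one_sub_le {ι : Type*} (s : Finset ι) (u : ι → ℝ)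
    (h : ∀ j ∈ s, 0 ≤ u j ∧ u j ≤ 1) :
    ∏ j ∈ s, (1 - u j) ≤ 1 - ∑ j ∈ s, u j + (∑ j ∈ s, u j) ^ 2 / 2 := by
  induction s using Finset.cons_induction with
  | empty => simp
  | cons a s ha ih =>
    rw [Finset.prod_cons, Finset.sum_cons]
    have hs := ih (fun j hj => h j (Finset.mem_cons_of_mem hj))
    have ha1 := h a (Finset.mem_cons_self a s)
    have hsum : (0:ℝ) ≤ ∑ j ∈ s, u j :=
      Finset.sum_nonneg (fun j hj => (h j (Finset.mem_cons_of_mem hj)).1)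
    nlinarith [hs, ha1.1, ha1.2, hsum]

lemma log_poly_expansion (P : Polynomial ℝ) (t0 : ℝ) (hp0 : 0 < P.eval t0) :
    ∃ ε C0 : ℝ, 0 < ε ∧ ε ≤ 1 ∧ 0 ≤ C0 ∧ ∀ s : ℝ, |s| ≤ ε →
      0 < P.eval (t0 + s) ∧
      |Real.log (P.eval (t0 + s)) - Real.log (P.eval t0) -
        P.derivative.eval t0 / P.eval t0 * s| ≤ C0 * s ^ 2 := by
  obtain ⟨K, hK0, hK⟩ := poly_taylor_bound P t0
  set p0 := P.eval t0 with hp0'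
  set p1 := P.derivative.eval t0 with hp1'
  set D := |p1| + K + 1 with hD
  have hD0 : 0 < D := by positivity
  refine ⟨min 1 (p0 / (2 * D)), 2 * D ^ 2 / p0 ^ 2 + K / p0, by positivity, min_le_left _ _,
    by positivity, fun s hs => ?_⟩
  have hs1 : |s| ≤ 1 := le_trans hs (min_le_left _ _)
  have hs2 : |s| ≤ p0 / (2 * D) := le_trans hs (min_le_right _ _)
  have hE := hK s hs1
  set E := P.eval (t0 + s) - p0 - p1 * s with hEdef
  have hsq : s ^ 2 ≤ |s| := by
    nlinarith [abs_nonneg s, sq_abs s]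
  have hnum : |P.eval (t0 + s) - p0| ≤ D * |s| := by
    have : P.eval (t0 + s) - p0 = p1 * s + E := by rw [hEdef]; ring
    rw [this]
    calc |p1 * s + E| ≤ |p1 * s| + |E| := abs_add_le _ _
      _ ≤ |p1| * |s| + K * s ^ 2 := by rw [abs_mul]; linarith
      _ ≤ |p1| * |s| + K * |s| := by nlinarith
      _ ≤ D * |s| := by rw [hD]; nlinarith [abs_nonneg s]
  have hhalf : |P.eval (t0 + s) - p0| ≤ p0 / 2 := by
    calc |P.eval (t0 + s) - p0| ≤ D * |s| := hnum
      _ ≤ D * (p0 / (2 * D)) := by nlinarith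
      _ = p0 / 2 := by field_simp
  have hpos : 0 < P.eval (t0 + s) := by
    have := abs_le.mp hhalf
    linarith [this.1]
  refine ⟨hpos, ?_⟩
  set v := (P.eval (t0 + s) - p0) / p0 with hv
  have hv2 : |v| ≤ 1 / 2 := by
    rw [hv, abs_div, abs_of_pos hp0, div_le_iff₀ hp0]
    linarith
  have hvD : |v| ≤ D * |s| / p0 := by
    rw [hv, abs_div, abs_of_pos hp0, div_le_div_iff_of_pos_right hp0]
    exact hnum
  have h1v : 1 + v = P.eval (t0 + s) / p0 := by
    rw [hv]; field_simp; ring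
  have hlog : Real.log (P.eval (t0 + s)) - Real.log p0 = Real.log (1 + v) := by
    rw [h1v, Real.log_div (ne_of_gt hpos) (ne_of_gt hp0)]
  have hvE : v - p1 / p0 * s = E / p0 := by
    rw [hv, hEdef]; field_simp
  have key : Real.log (P.eval (t0 + s)) - Real.log p0 - p1 / p0 * s =
      (Real.log (1 + v) - v) + E / p0 := by
    rw [hlog, ← hvE]; ring
  rw [key]
  have hb1 : |Real.log (1 + v) - v| ≤ 2 * v ^ 2 := log1p_bound hv2
  have hb2 : |E / p0| ≤ K * s ^ 2 / p0 := by
    rw [abs_div, abs_of_pos hp0, div_le_div_iff_of_pos_right hp0]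
    exact hE
  have hv4 : v ^ 2 ≤ (D * |s| / p0) ^ 2 := by
    have := sq_abs v
    nlinarith [abs_nonneg v]
  calc |(Real.log (1 + v) - v) + E / p0| ≤ |Real.log (1 + v) - v| + |E / p0| := abs_add_le _ _
    _ ≤ 2 * v ^ 2 + K * s ^ 2 / p0 := by linarith
    _ ≤ 2 * (D * |s| / p0) ^ 2 + K * s ^ 2 / p0 := by linarith
    _ = (2 * D ^ 2 / p0 ^ 2 + K / p0) * s ^ 2 := by
        rw [div_pow, mul_pow, sq_abs]
        field_simp

lemma exp_add_inv_eq (x : ℝ) :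
    Complex.exp (Complex.I * x) + (Complex.exp (Complex.I * x))⁻¹ =
      ((2 * Real.cos x : ℝ) : ℂ) := by
  rw [← Complex.exp_neg, mul_comm Complex.I (x:ℂ), ← neg_mul,
    Complex.exp_mul_I, Complex.exp_mul_I, Complex.cos_neg, Complex.sin_neg,
    ← Complex.ofReal_cos]
  push_cast
  ring

-- aeval of a real cast

lemma aeval_ofReal (P : Polynomial ℝ) (x : ℝ) :
    Polynomial.aeval ((x : ℂ)) P = ((P.eval x : ℝ) : ℂ) := by
  rw [show ((x:ℂ)) = algebraMap ℝ ℂ x from rfl,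
    Polynomial.aeval_algebraMap_apply]
  simp

-- sup facts

lemma sup_facts {k : ℕ} (hk : 0 < k) (φ : Fin k → ℝ) :
    (∀ j, |φ j| ≤ ⨆ j, |φ j|) ∧ 0 ≤ (⨆ j, |φ j|) := by
  have : Nonempty (Fin k) := ⟨⟨0, hk⟩⟩
  have hbdd : BddAbove (Set.range fun j => |φ j|) := (Set.finite_range _).bddAbove
  have h1 : ∀ j, |φ j| ≤ ⨆ j, |φ j| := fun j => le_ciSup hbdd j
  exact ⟨h1, le_trans (abs_nonneg _) (h1 (Classical.arbitrary _))⟩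

lemma main_helper (k : ℕ) (hk : 0 < k) (P : Polynomial ℝ) (t0 c cA cB : ℝ)
    (r : (Fin k → ℝ) → ℝ) (hp0 : 0 < P.eval t0) (hcA : 0 ≤ cA) (hcB : 0 ≤ cB)
    (hr1 : ∀ φ : Fin k → ℝ, (∀ j, |φ j| ≤ 1) → |r φ| ≤ cA * (⨆ j, |φ j|) ^ 2)
    (hr2 : ∀ φ : Fin k → ℝ, (∀ j, |φ j| ≤ 1) →
      |r φ + c * ∑ j, φ j ^ 2| ≤ cB * (⨆ j, |φ j|) ^ 4) :
    ∃ C δ : ℝ, 0 < C ∧ 0 < δ ∧ δ ≤ 1 ∧ ∀ φ : Fin k → ℝ, (∀ j, |φ j| < δ) →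
      0 < P.eval (t0 + r φ) ∧
      |Real.log (P.eval (t0 + r φ)) - Real.log (P.eval t0) +
        c * (P.derivative.eval t0 / P.eval t0) * ∑ j, φ j ^ 2| ≤
          C * (⨆ j, |φ j|) ^ 4 := by
  obtain ⟨ε, C0, hε0, hε1, hC0, hmain⟩ := log_poly_expansion P t0 hp0
  set q := P.derivative.eval t0 / P.eval t0 with hq
  set δ := min 1 (Real.sqrt (ε / (cA + 1))) with hδ
  have hδ0 : 0 < δ := by
    apply lt_min one_pos
    apply Real.sqrt_pos.mpr
    positivity
  refine ⟨C0 * cA ^ 2 + |q| * cB + 1, δ, by positivity, hδ0, min_le_left _ _, fun φ hφ => ?_⟩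
  have hne : Nonempty (Fin k) := ⟨⟨0, hk⟩⟩
  obtain ⟨hMj, hM0⟩ := sup_facts hk φ
  set M := ⨆ j, |φ j| with hM
  have hMδ : M ≤ δ := ciSup_le (fun j => (hφ j).le)
  have hM1 : ∀ j, |φ j| ≤ 1 := fun j => le_trans (hφ j).le (le_trans (min_le_left _ _) le_rfl)
  have hδsq : δ ^ 2 ≤ ε / (cA + 1) := by
    have h1 : δ ≤ Real.sqrt (ε / (cA + 1)) := min_le_right _ _
    have h2 : δ ^ 2 ≤ Real.sqrt (ε / (cA + 1)) ^ 2 := by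
      apply pow_le_pow_left₀ hδ0.le h1
    rwa [Real.sq_sqrt (by positivity)] at h2
  have hM2 : M ^ 2 ≤ ε / (cA + 1) :=
    le_trans (pow_le_pow_left₀ hM0 hMδ 2) hδsq
  have hrφ : |r φ| ≤ cA * M ^ 2 := hr1 φ hM1
  have hrε : |r φ| ≤ ε := by
    calc |r φ| ≤ cA * M ^ 2 := hrφ
      _ ≤ cA * (ε / (cA + 1)) := by nlinarith
      _ ≤ ε := by
          rw [mul_div_assoc']
          rw [div_le_iff₀ (by positivity)]
          nlinarith
  obtain ⟨hpos, hlog⟩ := hmain (r φ) hrε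
  refine ⟨hpos, ?_⟩
  have key : Real.log (P.eval (t0 + r φ)) - Real.log (P.eval t0) + c * q * ∑ j, φ j ^ 2 =
      (Real.log (P.eval (t0 + r φ)) - Real.log (P.eval t0) - q * r φ) +
        q * (r φ + c * ∑ j, φ j ^ 2) := by ring
  rw [key]
  have hr2' := hr2 φ hM1
  have hrsq : (r φ) ^ 2 ≤ cA ^ 2 * M ^ 4 := by
    nlinarith [sq_abs (r φ), abs_nonneg (r φ)]
  have hM4 : 0 ≤ M ^ 4 := by positivity
  calc |_ + q * (r φ + c * ∑ j, φ j ^ 2)|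
      ≤ |Real.log (P.eval (t0 + r φ)) - Real.log (P.eval t0) - q * r φ| +
        |q * (r φ + c * ∑ j, φ j ^ 2)| := abs_add_le _ _
    _ ≤ C0 * (r φ) ^ 2 + |q| * (cB * M ^ 4) := by
        refine add_le_add hlog ?_
        rw [abs_mul]
        exact mul_le_mul_of_nonneg_left hr2' (abs_nonneg q)
    _ ≤ (C0 * cA ^ 2 + |q| * cB + 1) * M ^ 4 := by nlinarith [abs_nonneg q]

lemma case1_bounds (k : ℕ) (hk : 0 < k) (φ : Fin k → ℝ) (hφ : ∀ j, |φ j| ≤ 1) :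
    |(∑ j, 2 * Real.cos (φ j)) - 2 * (k:ℝ)| ≤ (k:ℝ) * (⨆ j, |φ j|) ^ 2 ∧
    |(∑ j, 2 * Real.cos (φ j)) - 2 * (k:ℝ) + 1 * ∑ j, φ j ^ 2| ≤
      (5/48 * (k:ℝ)) * (⨆ j, |φ j|) ^ 4 := by
  obtain ⟨hMj, hM0⟩ := sup_facts hk φ
  set M := ⨆ j, |φ j| with hM
  have hsq : ∀ j, φ j ^ 2 ≤ M ^ 2 := fun j => by
    nlinarith [hMj j, sq_abs (φ j), abs_nonneg (φ j)]
  have hq4 : ∀ j, |φ j| ^ 4 ≤ M ^ 4 := fun j =>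
    pow_le_pow_left₀ (abs_nonneg _) (hMj j) 4
  have hsum2k : (∑ _j : Fin k, (2:ℝ)) = 2 * k := by
    simp [Finset.sum_const, Finset.card_univ, mul_comm]
  constructor
  · have h1 : (∑ j, 2 * Real.cos (φ j)) - 2 * (k:ℝ) = ∑ j, (2 * Real.cos (φ j) - 2) := by
      rw [Finset.sum_sub_distrib, hsum2k]
    rw [h1]
    calc |∑ j, (2 * Real.cos (φ j) - 2)| ≤ ∑ j, |2 * Real.cos (φ j) - 2| :=
          Finset.abs_sum_le_sum_abs _ _
      _ ≤ ∑ _j : Fin k, M ^ 2 := by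
          apply Finset.sum_le_sum
          intro j _
          have hc1 := Real.cos_le_one (φ j)
          have hc2 := Real.one_sub_sq_div_two_le_cos (x := φ j)
          have : |2 * Real.cos (φ j) - 2| ≤ φ j ^ 2 := by
            rw [abs_le]; constructor <;> nlinarith
          linarith [hsq j]
      _ = (k:ℝ) * M ^ 2 := by simp [Finset.sum_const, Finset.card_univ]
  · have h1 : (∑ j, 2 * Real.cos (φ j)) - 2 * (k:ℝ) + 1 * ∑ j, φ j ^ 2 =
        ∑ j, (2 * Real.cos (φ j) - 2 + φ j ^ 2) := by
      rw [Finset.sum_add_distrib, Finset.sum_sub_distrib, hsum2k]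
      ring
    rw [h1]
    calc |∑ j, (2 * Real.cos (φ j) - 2 + φ j ^ 2)|
        ≤ ∑ j, |2 * Real.cos (φ j) - 2 + φ j ^ 2| := Finset.abs_sum_le_sum_abs _ _
      _ ≤ ∑ _j : Fin k, 5/48 * M ^ 4 := by
          apply Finset.sum_le_sum
          intro j _
          have hc := Real.cos_bound (hφ j)
          have : |2 * Real.cos (φ j) - 2 + φ j ^ 2| = 2 * |Real.cos (φ j) - (1 - φ j ^ 2 / 2)| := by
            rw [show 2 * Real.cos (φ j) - 2 + φ j ^ 2 =
              2 * (Real.cos (φ j) - (1 - φ j ^ 2 / 2)) by ring, abs_mul]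
            norm_num
          rw [this]
          linarith [hq4 j]
      _ = 5/48 * (k:ℝ) * M ^ 4 := by
          simp [Finset.sum_const, Finset.card_univ]; ring
      _ = (5/48 * (k:ℝ)) * M ^ 4 := by ring

lemma case2_bounds (k : ℕ) (hk : 0 < k) (φ : Fin k → ℝ) (hφ : ∀ j, |φ j| ≤ 1) :
    |(∏ j, 2 * Real.cos (φ j)) - (2:ℝ) ^ k| ≤
      ((2:ℝ) ^ k * k / 2) * (⨆ j, |φ j|) ^ 2 ∧
    |(∏ j, 2 * Real.cos (φ j)) - (2:ℝ) ^ k + ((2:ℝ) ^ k / 2) * ∑ j, φ j ^ 2| ≤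
      ((2:ℝ) ^ k * ((k:ℝ) ^ 2 / 8 + 5/96 * k)) * (⨆ j, |φ j|) ^ 4 := by
  obtain ⟨hMj, hM0⟩ := sup_facts hk φ
  set M := ⨆ j, |φ j| with hM
  have hsq : ∀ j, φ j ^ 2 ≤ M ^ 2 := fun j => by
    nlinarith [hMj j, sq_abs (φ j), abs_nonneg (φ j)]
  have hq4 : ∀ j, |φ j| ^ 4 ≤ M ^ 4 := fun j =>
    pow_le_pow_left₀ (abs_nonneg _) (hMj j) 4
  set u : Fin k → ℝ := fun j => 1 - Real.cos (φ j) with hu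
  have hu01 : ∀ j ∈ Finset.univ, 0 ≤ u j ∧ u j ≤ 1 := by
    intro j _
    have hc1 := Real.cos_le_one (φ j)
    have hc2 := Real.one_sub_sq_div_two_le_cos (x := φ j)
    have h1 : φ j ^ 2 ≤ 1 := by nlinarith [hφ j, sq_abs (φ j), abs_nonneg (φ j)]
    constructor
    · simp only [hu]; linarith
    · simp only [hu]; nlinarith
  have huφ : ∀ j, u j ≤ φ j ^ 2 / 2 := fun j => by
    have := Real.one_sub_sq_div_two_le_cos (x := φ j)
    simp only [hu]; linarith
  have hu0 : ∀ j, 0 ≤ u j := fun j => (hu01 j (Finset.mem_univ j)).1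
  have hsumu : ∑ j, u j ≤ (k:ℝ) * M ^ 2 / 2 := by
    calc ∑ j, u j ≤ ∑ j, φ j ^ 2 / 2 := Finset.sum_le_sum (fun j _ => huφ j)
      _ ≤ ∑ _j : Fin k, M ^ 2 / 2 := Finset.sum_le_sum (fun j _ => by linarith [hsq j])
      _ = (k:ℝ) * M ^ 2 / 2 := by simp [Finset.sum_const, Finset.card_univ]; ring
  have hsumu0 : 0 ≤ ∑ j, u j := Finset.sum_nonneg (fun j _ => hu0 j)
  have hprodcos : (∏ j, Real.cos (φ j)) = ∏ j, (1 - u j) := by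
    apply Finset.prod_congr rfl
    intro j _
    simp [hu]
  have hge := prod_one_sub_ge Finset.univ u hu01
  have hle := prod_one_sub_le Finset.univ u hu01
  have hprodfact : (∏ j, 2 * Real.cos (φ j)) = (2:ℝ) ^ k * ∏ j, Real.cos (φ j) := by
    rw [Finset.prod_mul_distrib, Finset.prod_const, Finset.card_univ, Fintype.card_fin]
  have h2k : (0:ℝ) < 2 ^ k := by positivity
  constructor
  · rw [hprodfact]
    have h1 : |(∏ j, Real.cos (φ j)) - 1| ≤ ∑ j, u j := by
      rw [hprodcos, abs_le]
      have hub : (∏ j ∈ Finset.univ, (1 - u j)) ≤ 1 :=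
        Finset.prod_le_one (fun j hj => by linarith [(hu01 j hj).2])
          (fun j hj => by linarith [(hu01 j hj).1])
      constructor <;> [linarith [hge]; linarith [hub, hsumu0]]
    calc |(2:ℝ) ^ k * ∏ j, Real.cos (φ j) - 2 ^ k| = 2 ^ k * |(∏ j, Real.cos (φ j)) - 1| := by
          rw [show (2:ℝ) ^ k * ∏ j, Real.cos (φ j) - 2 ^ k
            = 2 ^ k * ((∏ j, Real.cos (φ j)) - 1) by ring, abs_mul, abs_of_pos h2k]
      _ ≤ 2 ^ k * ((k:ℝ) * M ^ 2 / 2) := by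
          apply mul_le_mul_of_nonneg_left _ h2k.le
          linarith
      _ = ((2:ℝ) ^ k * k / 2) * M ^ 2 := by ring
  · rw [hprodfact]
    have hkey : (2:ℝ) ^ k * ∏ j, Real.cos (φ j) - 2 ^ k + ((2:ℝ) ^ k / 2) * ∑ j, φ j ^ 2
        = 2 ^ k * (((∏ j, Real.cos (φ j)) - 1 + ∑ j, u j) + ∑ j, (φ j ^ 2 / 2 - u j)) := by
      have hsplit : ∑ j, (φ j ^ 2 / 2 - u j) = (∑ j, φ j ^ 2) / 2 - ∑ j, u j := by
        rw [Finset.sum_sub_distrib, ← Finset.sum_div]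
      rw [hsplit]
      ring
    rw [hkey, abs_mul, abs_of_pos h2k]
    have hb1 : |(∏ j, Real.cos (φ j)) - 1 + ∑ j, u j| ≤ (∑ j, u j) ^ 2 / 2 := by
      rw [hprodcos, abs_le]
      constructor
      · linarith [hge, sq_nonneg (∑ j, u j)]
      · linarith [hle]
    have hb2 : |∑ j, (φ j ^ 2 / 2 - u j)| ≤ 5/96 * (k:ℝ) * M ^ 4 := by
      calc |∑ j, (φ j ^ 2 / 2 - u j)| ≤ ∑ j, |φ j ^ 2 / 2 - u j| :=
            Finset.abs_sum_le_sum_abs _ _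
        _ ≤ ∑ _j : Fin k, 5/96 * M ^ 4 := by
            apply Finset.sum_le_sum
            intro j _
            have hc := Real.cos_bound (hφ j)
            have : φ j ^ 2 / 2 - u j = Real.cos (φ j) - (1 - φ j ^ 2 / 2) := by
              simp [hu]; ring
            rw [this]
            calc |Real.cos (φ j) - (1 - φ j ^ 2 / 2)| ≤ |φ j| ^ 4 * (5/96) := hc
              _ ≤ 5/96 * M ^ 4 := by linarith [hq4 j]
        _ = 5/96 * (k:ℝ) * M ^ 4 := by simp [Finset.sum_const, Finset.card_univ]; ring
    have hsq2 : (∑ j, u j) ^ 2 / 2 ≤ (k:ℝ) ^ 2 / 8 * M ^ 4 := by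
      nlinarith [hsumu, hsumu0]
    calc (2:ℝ) ^ k * |((∏ j, Real.cos (φ j)) - 1 + ∑ j, u j) + ∑ j, (φ j ^ 2 / 2 - u j)|
        ≤ 2 ^ k * ((∑ j, u j) ^ 2 / 2 + 5/96 * (k:ℝ) * M ^ 4) := by
          apply mul_le_mul_of_nonneg_left _ h2k.le
          calc |((∏ j, Real.cos (φ j)) - 1 + ∑ j, u j) + ∑ j, (φ j ^ 2 / 2 - u j)|
              ≤ |(∏ j, Real.cos (φ j)) - 1 + ∑ j, u j| + |∑ j, (φ j ^ 2 / 2 - u j)| :=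
                abs_add_le _ _
            _ ≤ (∑ j, u j) ^ 2 / 2 + 5/96 * (k:ℝ) * M ^ 4 := add_le_add hb1 hb2
      _ ≤ 2 ^ k * ((k:ℝ) ^ 2 / 8 * M ^ 4 + 5/96 * (k:ℝ) * M ^ 4) := by
          apply mul_le_mul_of_nonneg_left _ h2k.le
          linarith
      _ = ((2:ℝ) ^ k * ((k:ℝ) ^ 2 / 8 + 5/96 * k)) * M ^ 4 := by ring
open scoped BigOperators

/-- Lemma `lem:step_gen_fun_asymptotics`, second-order form: local
expansion of `log |S(e^{iφ₁},…,e^{iφ_k})|` near the origin, with `Λ = 2 P'(2k)/P(2k)`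
(respectively `Λ = 2^k P'(2^k)/P(2^k)`), and `s1 = S(1,…,1)`. -/
theorem compGF_log_expansion (k : ℕ) (hk : 0 < k) (P : Polynomial ℝ)
    (hP : ∀ i, 0 ≤ P.coeff i) (hPnc : P.natDegree ≠ 0)
    (Sfun : (Fin k → ℂ) → ℂ) (s1 Λ : ℝ)
    (hcase :
      ((∀ z : Fin k → ℂ, (∀ j, z j ≠ 0) →
          Sfun z = Polynomial.aeval (∑ j, (z j + (z j)⁻¹)) P) ∧
        0 < P.eval (2 * (k : ℝ)) ∧
        s1 = P.eval (2 * (k : ℝ)) ∧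
        Λ = 2 * P.derivative.eval (2 * (k : ℝ)) / P.eval (2 * (k : ℝ))) ∨
      ((∀ z : Fin k → ℂ, (∀ j, z j ≠ 0) →
          Sfun z = Polynomial.aeval (∏ j, (z j + (z j)⁻¹)) P) ∧
        0 < P.eval ((2 : ℝ) ^ k) ∧
        s1 = P.eval ((2 : ℝ) ^ k) ∧
        Λ = 2 ^ k * P.derivative.eval ((2 : ℝ) ^ k) / P.eval ((2 : ℝ) ^ k))) :
    ∃ C δ : ℝ, 0 < C ∧ 0 < δ ∧
      ∀ φ : Fin k → ℝ, (∀ j, |φ j| < δ) →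
        Sfun (fun j => Complex.exp (Complex.I * φ j)) ≠ 0 ∧
        |Real.log ‖Sfun fun j => Complex.exp (Complex.I * φ j)‖ -
            Real.log s1 + Λ / 2 * ∑ j, φ j ^ 2| ≤
          C * (⨆ j, |φ j|) ^ 4 := by
  rcases hcase with ⟨hSf, hp0, hs1, hΛ⟩ | ⟨hSf, hp0, hs1, hΛ⟩
  · -- sum case
    set t0 : ℝ := 2 * (k : ℝ) with ht0
    set r : (Fin k → ℝ) → ℝ := fun φ => (∑ j, 2 * Real.cos (φ j)) - t0 with hr
    obtain ⟨C, δ, hC, hδ, hδ1, hmain⟩ :=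
      main_helper k hk P t0 1 (k : ℝ) (5/48 * (k:ℝ)) r hp0 (by positivity) (by positivity)
        (fun φ h => (case1_bounds k hk φ h).1)
        (fun φ h => (case1_bounds k hk φ h).2)
    refine ⟨C, δ, hC, hδ, fun φ hφ => ?_⟩
    obtain ⟨hpos, hbound⟩ := hmain φ hφ
    have hval : Sfun (fun j => Complex.exp (Complex.I * φ j)) =
        ((P.eval (t0 + r φ) : ℝ) : ℂ) := by
      rw [hSf _ (fun j => Complex.exp_ne_zero _)]
      have hsum : (∑ j, (Complex.exp (Complex.I * φ j) + (Complex.exp (Complex.I * φ j))⁻¹))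
          = (((∑ j, 2 * Real.cos (φ j) : ℝ)) : ℂ) := by
        rw [Complex.ofReal_sum]
        exact Finset.sum_congr rfl (fun j _ => exp_add_inv_eq (φ j))
      rw [hsum, aeval_ofReal]
      have harg : t0 + r φ = ∑ j, 2 * Real.cos (φ j) := by
        simp only [hr]
        rw [add_comm, sub_add_cancel]
      rw [harg]
    have habs : ‖Sfun fun j => Complex.exp (Complex.I * φ j)‖ =
        P.eval (t0 + r φ) := by
      rw [hval, Complex.norm_real, Real.norm_eq_abs, abs_of_pos hpos]
    refine ⟨by rw [hval]; exact_mod_cast ne_of_gt hpos, ?_⟩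
    rw [habs, hs1]
    have hΛ2 : Λ / 2 = 1 * (P.derivative.eval t0 / P.eval t0) := by
      rw [hΛ]; ring
    rw [hΛ2]
    exact hbound
  · -- product case
    set t0 : ℝ := (2:ℝ) ^ k with ht0
    set r : (Fin k → ℝ) → ℝ := fun φ => (∏ j, 2 * Real.cos (φ j)) - t0 with hr
    obtain ⟨C, δ, hC, hδ, hδ1, hmain⟩ :=
      main_helper k hk P t0 ((2:ℝ) ^ k / 2) ((2:ℝ) ^ k * k / 2)
        ((2:ℝ) ^ k * ((k:ℝ) ^ 2 / 8 + 5/96 * k)) r hp0 (by positivity) (by positivity)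
        (fun φ h => (case2_bounds k hk φ h).1)
        (fun φ h => (case2_bounds k hk φ h).2)
    refine ⟨C, δ, hC, hδ, fun φ hφ => ?_⟩
    obtain ⟨hpos, hbound⟩ := hmain φ hφ
    have hval : Sfun (fun j => Complex.exp (Complex.I * φ j)) =
        ((P.eval (t0 + r φ) : ℝ) : ℂ) := by
      rw [hSf _ (fun j => Complex.exp_ne_zero _)]
      have hsum : (∏ j, (Complex.exp (Complex.I * φ j) + (Complex.exp (Complex.I * φ j))⁻¹))
          = (((∏ j, 2 * Real.cos (φ j) : ℝ)) : ℂ) := by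
        rw [Complex.ofReal_prod]
        exact Finset.prod_congr rfl (fun j _ => exp_add_inv_eq (φ j))
      rw [hsum, aeval_ofReal]
      have harg : t0 + r φ = ∏ j, 2 * Real.cos (φ j) := by
        simp only [hr]
        rw [add_comm, sub_add_cancel]
      rw [harg]
    have habs : ‖Sfun fun j => Complex.exp (Complex.I * φ j)‖ =
        P.eval (t0 + r φ) := by
      rw [hval, Complex.norm_real, Real.norm_eq_abs, abs_of_pos hpos]
    refine ⟨by rw [hval]; exact_mod_cast ne_of_gt hpos, ?_⟩
    rw [habs, hs1]
    have hΛ2 : Λ / 2 = ((2:ℝ) ^ k / 2) * (P.derivative.eval t0 / P.eval t0) := by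
      rw [hΛ]; ring
    rw [hΛ2]
    exact hbound
end

section
/- Under Assumption (*) with S nonconstant, let φ̂ = (φ̂_1,…,φ̂_k) ∈ {0,π}^k be a maximal point of (φ_1,…,φ_k) ↦ |S(e^{iφ_1},…,e^{iφ_k})|, and let u = (u_1,…,u_k) ∈ L. Then for all (φ_1,…,φ_k) ∈ ℝ^k: det_{1≤j,m≤k}( sin(u_m(φ̂_j + φ_j)) ) = (−1)^{(∑_{j=1}^k u_j φ̂_j)/π} · det_{1≤j,m≤k}( sin(u_m φ_j) ). -/
open scoped BigOperators
open Classical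

noncomputable section

namespace SDIaux

lemma neg1_ne {F : Type*} [Field F] : (-1 : F) ≠ 0 :=
  neg_ne_zero.mpr one_ne_zero

lemma pm (n : ℤ) : (-1:ℝ)^n = 1 ∨ (-1:ℝ)^n = -1 := by
  rcases Int.even_or_odd n with h | h
  · left; exact h.neg_one_zpow
  · right; exact h.neg_one_zpow

lemma zne (n : ℤ) : (-1:ℝ)^n ≠ 0 := zpow_ne_zero _ neg1_ne

lemma le_one (n : ℤ) : (-1:ℝ)^n ≤ 1 := by rcases pm n with h | h <;> rw [h] <;> norm_num

lemma zabs (n : ℤ) : |(-1:ℝ)^n| = 1 := by rcases pm n with h | h <;> rw [h] <;> norm_num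

lemma zcongr {a b : ℤ} (h : Even (a - b)) : (-1:ℝ)^a = (-1:ℝ)^b := by
  obtain ⟨t, ht⟩ := h
  have hab : a = b + 2*t := by omega
  subst hab
  rw [zpow_add₀ (neg1_ne (F := ℝ)), zpow_mul]
  norm_num

lemma prod_zpow {F : Type*} [Field F] {ι : Type*} (s : Finset ι) (f : ι → ℤ) :
    ∏ j ∈ s, (-1:F)^(f j) = (-1:F)^(∑ j ∈ s, f j) := by
  induction s using Finset.cons_induction with
  | empty => simp
  | cons a s ha ih =>
      rw [Finset.prod_cons, Finset.sum_cons, ih, zpow_add₀ (neg1_ne (F := F))]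

lemma swapCoord_apply {k : ℕ} (i j : Fin k) (x : Fin k → ℤ) (m : Fin k) :
    swapCoord i j x m = x (Equiv.swap i j m) := by
  simp [swapCoord, Equiv.arrowCongr]

lemma swapCoord_neg {k : ℕ} (i j : Fin k) (x : Fin k → ℤ) :
    swapCoord i j (-x) = -(swapCoord i j x) := by
  funext m; simp [swapCoord_apply]

lemma swapCoord_single {k : ℕ} (i j : Fin k) :
    swapCoord i j (Pi.single i 1) = Pi.single j 1 := by
  funext m
  rw [swapCoord_apply]
  simp only [Pi.single_apply]
  by_cases h1 : m = i <;> by_cases h2 : m = j <;>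
    simp_all [Equiv.swap_apply_def] <;> omega

lemma swapCoord_self {k : ℕ} (i : Fin k) : swapCoord i i = 1 := by
  ext x m
  rw [swapCoord_apply]
  simp

lemma swapCoord_comm {k : ℕ} (i j : Fin k) : swapCoord i j = swapCoord j i := by
  unfold swapCoord
  rw [Equiv.swap_comm]

lemma swapCoord_mem {k : ℕ} (i j : Fin k) : swapCoord i j ∈ BkGroup k := by
  rcases lt_trichotomy i j with h | h | h
  · exact Subgroup.subset_closure (Or.inl ⟨i, j, h, rfl⟩)
  · subst h; rw [swapCoord_self]; exact one_mem _
  · rw [swapCoord_comm]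
    exact Subgroup.subset_closure (Or.inl ⟨j, i, h, rfl⟩)

lemma gm2_even {k : ℕ} {u : Fin k → ℤ}
    (hu : u ∈ Submodule.span ℤ (stepsGM2 k)) (i j : Fin k) :
    Even (u i - u j) := by
  induction hu using Submodule.span_induction with
  | mem x hx => rcases hx i with h | h <;> rcases hx j with h' | h' <;>
      rw [h, h'] <;> decide
  | zero => simp
  | add x y hx hy ihx ihy =>
      have : (x + y) i - (x + y) j = (x i - x j) + (y i - y j) := by
        simp [Pi.add_apply]; ring
      rw [this]; exact ihx.add ihy
  | smul c x hx ih =>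
      have : (c • x) i - (c • x) j = c * (x i - x j) := by
        simp [Pi.smul_apply, smul_eq_mul]; ring
      rw [this]; exact ih.mul_left c

end SDIaux


namespace SDIaux

lemma ge_neg_one (n : ℤ) : (-1:ℝ) ≤ (-1:ℝ)^n := by
  rcases pm n with h | h <;> rw [h] <;> norm_num

lemma gm1_const {k : ℕ} (S : Finset (List (Fin k → ℤ))) (w : List (Fin k → ℤ) → ℝ)
    (A : Finset (Fin k → ℤ)) (hA : (A : Set (Fin k → ℤ)) = stepsGM1 k)
    (hSA : ∀ s ∈ S, ∀ a ∈ s, a ∈ A) (hw : ∀ s ∈ S, 0 < w s)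
    (hcl : ∀ s ∈ S, ∀ g ∈ BkGroup k, ∀ m ≤ s.length,
      ((s.take m).map (⇑g) ++ s.drop m) ∈ S ∧ w ((s.take m).map (⇑g) ++ s.drop m) = w s)
    (hnonconst : ∃ z z' : Fin k → ℂ, (∀ j, z j ≠ 0) ∧ (∀ j, z' j ≠ 0) ∧
      compGF S w z ≠ compGF S w z')
    (φhat : Fin k → ℝ) (hφhat : ∀ j, φhat j = 0 ∨ φhat j = Real.pi)
    (hmax : φhat ∈ maximalPoints S w)
    (p q : Fin k) (hp : φhat p = 0) (hq : φhat q = Real.pi) : False := by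
  classical
  set εZ : Fin k → ℤ := fun j => if φhat j = 0 then 0 else 1 with hεZ
  set E : (Fin k → ℤ) → ℤ := fun v => ∑ j, εZ j * v j with hE
  have hz : ∀ j, Complex.exp (Complex.I * (φhat j)) = (-1 : ℂ) ^ (εZ j) := by
    intro j
    rcases hφhat j with h | h
    · rw [h]; simp [hεZ, h]
    · rw [h]
      have h1 : εZ j = 1 := by simp [hεZ, h, Real.pi_ne_zero]
      rw [h1, zpow_one, mul_comm]
      exact Complex.exp_pi_mul_I
  have hVφ : compGF S w (fun j => Complex.exp (Complex.I * φhat j)) =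
      ((∑ s ∈ S, w s * (-1:ℝ)^(E s.sum) : ℝ) : ℂ) := by
    unfold compGF
    push_cast
    refine Finset.sum_congr rfl fun s hs => ?_
    congr 1
    calc ∏ j, Complex.exp (Complex.I * φhat j) ^ (s.sum j)
        = ∏ j, (-1:ℂ) ^ (εZ j * s.sum j) := by
          refine Finset.prod_congr rfl fun j _ => ?_
          rw [hz j, ← zpow_mul]
      _ = (-1:ℂ) ^ (E s.sum) := prod_zpow _ _
  set W : ℝ := ∑ s ∈ S, w s with hWdef
  set T : ℝ := ∑ s ∈ S, w s * (-1:ℝ)^(E s.sum) with hTdef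
  have hW0 : 0 ≤ W := Finset.sum_nonneg fun s hs => (hw s hs).le
  have hV0 : (compGF S w fun j => Complex.exp (Complex.I * ((fun _ : Fin k => (0:ℝ)) j))) =
      ((W : ℝ) : ℂ) := by
    unfold compGF
    push_cast
    simp only [Complex.ofReal_zero, mul_zero, Complex.exp_zero, one_zpow,
      Finset.prod_const_one, mul_one]
    rw [hWdef]
    push_cast
    rfl
  have hles : |T| ≤ W := by
    calc |T| ≤ ∑ s ∈ S, |w s * (-1:ℝ)^(E s.sum)| := Finset.abs_sum_le_sum_abs _ _
      _ = W := Finset.sum_congr rfl fun s hs => by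
          rw [abs_mul, zabs, mul_one, abs_of_pos (hw s hs)]
  have hgeq : W ≤ |T| := by
    have hm := hmax.2 (fun _ => 0)
    rw [hV0, hVφ, Complex.norm_real, Complex.norm_real, Real.norm_eq_abs, Real.norm_eq_abs,
      abs_of_nonneg hW0] at hm
    exact hm
  have habs : |T| = W := le_antisymm hles hgeq
  have hsign : ∃ c : ℝ, ∀ s ∈ S, (-1:ℝ)^(E s.sum) = c := by
    rcases (abs_eq hW0).mp habs with hTW | hTW
    · refine ⟨1, fun s hs => ?_⟩
      have hzero : ∑ s ∈ S, w s * (1 - (-1:ℝ)^(E s.sum)) = 0 := by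
        have h2 : ∑ s ∈ S, w s * (1 - (-1:ℝ)^(E s.sum)) = W - T := by
          rw [hWdef, hTdef, ← Finset.sum_sub_distrib]
          exact Finset.sum_congr rfl fun s _ => by ring
        rw [h2, hTW]; ring
      have hnn : ∀ s ∈ S, 0 ≤ w s * (1 - (-1:ℝ)^(E s.sum)) := fun s hs =>
        mul_nonneg (hw s hs).le (by linarith [le_one (E s.sum)])
      have h3 := (Finset.sum_eq_zero_iff_of_nonneg hnn).mp hzero s hs
      rcases mul_eq_zero.mp h3 with h | h
      · exact absurd h (hw s hs).ne'
      · linarith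
    · refine ⟨-1, fun s hs => ?_⟩
      have hzero : ∑ s ∈ S, w s * ((-1:ℝ)^(E s.sum) + 1) = 0 := by
        have h2 : ∑ s ∈ S, w s * ((-1:ℝ)^(E s.sum) + 1) = T + W := by
          rw [hWdef, hTdef, ← Finset.sum_add_distrib]
          exact Finset.sum_congr rfl fun s _ => by ring
        rw [h2, hTW]; ring
      have hnn : ∀ s ∈ S, 0 ≤ w s * ((-1:ℝ)^(E s.sum) + 1) := fun s hs =>
        mul_nonneg (hw s hs).le (by linarith [ge_neg_one (E s.sum)])
      have h3 := (Finset.sum_eq_zero_iff_of_nonneg hnn).mp hzero s hs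
      rcases mul_eq_zero.mp h3 with h | h
      · exact absurd h (hw s hs).ne'
      · linarith
  obtain ⟨s0, hs0, hs0ne⟩ : ∃ s0 ∈ S, s0 ≠ [] := by
    by_contra hcon
    push_neg at hcon
    obtain ⟨z, z', _, _, hne⟩ := hnonconst
    apply hne
    unfold compGF
    refine Finset.sum_congr rfl fun s hs => ?_
    rw [hcon s hs]
    simp
  obtain ⟨a, t, rfl⟩ := List.exists_cons_of_ne_nil hs0ne
  have haA : a ∈ (A : Set (Fin k → ℤ)) := hSA _ hs0 a (List.mem_cons_self (a := a) (l := t))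
  rw [hA] at haA
  obtain ⟨i, hi⟩ := haA
  have hlist : ∀ (g : Equiv.Perm (Fin k → ℤ)) (x : Fin k → ℤ) (l : List (Fin k → ℤ)),
      ((x :: l).take 1).map (⇑g) ++ (x :: l).drop 1 = g x :: l := by
    intro g x l; simp
  have h1 := hcl (a :: t) hs0 (swapCoord i q) (swapCoord_mem i q) 1 (by simp)
  rw [hlist] at h1
  set b := swapCoord i q a with hbdef
  have hb : b = Pi.single q 1 ∨ b = -Pi.single q 1 := by
    rcases hi with h | h
    · left; rw [hbdef, h, swapCoord_single]
    · right; rw [hbdef, h, swapCoord_neg, swapCoord_single]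
  have h2 := hcl (b :: t) h1.1 (swapCoord q p) (swapCoord_mem q p) 1 (by simp)
  rw [hlist] at h2
  set b2 := swapCoord q p b with hb2def
  have hb2 : b2 = Pi.single p 1 ∨ b2 = -Pi.single p 1 := by
    rcases hb with h | h
    · left; rw [hb2def, h, swapCoord_single]
    · right; rw [hb2def, h, swapCoord_neg, swapCoord_single]
  have hEadd : ∀ x y : Fin k → ℤ, E (x + y) = E x + E y := by
    intro x y
    simp only [hE, Pi.add_apply, mul_add]
    exact Finset.sum_add_distrib
  have hEneg : ∀ x : Fin k → ℤ, E (-x) = -E x := by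
    intro x
    simp [hE, Pi.neg_apply, mul_neg, Finset.sum_neg_distrib]
  have hEsingle : ∀ r : Fin k, E (Pi.single r 1) = εZ r := by
    intro r
    simp [hE, Pi.single_apply]
  have hεq : εZ q = 1 := by simp [hεZ, hq, Real.pi_ne_zero]
  have hεp : εZ p = 0 := by simp [hεZ, hp]
  obtain ⟨c, hc⟩ := hsign
  have hc1 := hc _ h1.1
  have hc2 := hc _ h2.1
  have hEbneg : (-1:ℝ)^(E b) = -1 := by
    rcases hb with h | h
    · rw [h, hEsingle, hεq]; norm_num
    · rw [h, hEneg, hEsingle, hεq]; norm_num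
  have hEb2v : (-1:ℝ)^(E b2) = 1 := by
    rcases hb2 with h | h
    · rw [h, hEsingle, hεp]; norm_num
    · rw [h, hEneg, hEsingle, hεp]; norm_num
  rw [List.sum_cons, hEadd, zpow_add₀ (neg1_ne (F := ℝ)), hEbneg] at hc1
  rw [List.sum_cons, hEadd, zpow_add₀ (neg1_ne (F := ℝ)), hEb2v] at hc2
  exact zne (E t.sum) (by linarith)

end SDIaux

/-- Lemma `lem:step_gen_fun_det_identity`: the sine determinant
identity at a maximal point `φ̂ ∈ {0,π}^k`. The integer `e` is
`(∑ⱼ uⱼ φ̂ⱼ)/π`. -/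
theorem sine_det_identity_at_maximal_point {k : ℕ} (hk : 0 < k)
    (A : Finset (Fin k → ℤ)) (S : Finset (List (Fin k → ℤ))) (w : List (Fin k → ℤ) → ℝ)
    (hstar : AssumptionStar A S w)
    (hnonconst : ∃ z z' : Fin k → ℂ, (∀ j, z j ≠ 0) ∧ (∀ j, z' j ≠ 0) ∧
      compGF S w z ≠ compGF S w z')
    (φhat : Fin k → ℝ)
    (hφhat : ∀ j, φhat j = 0 ∨ φhat j = Real.pi)
    (hmax : φhat ∈ maximalPoints S w)
    (u : Fin k → ℤ) (huL : u ∈ Submodule.span ℤ (A : Set (Fin k → ℤ)))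
    (e : ℤ) (he : (e : ℝ) * Real.pi = ∑ j, (u j : ℝ) * φhat j) :
    ∀ φ : Fin k → ℝ,
      Matrix.det (Matrix.of fun j m : Fin k =>
          Real.sin ((u m : ℝ) * (φhat j + φ j))) =
        (-1 : ℝ) ^ e *
          Matrix.det (Matrix.of fun j m : Fin k => Real.sin ((u m : ℝ) * φ j)) := by
  obtain ⟨hA, hSA, hw, hcl⟩ := hstar
  have hpi : (Real.pi : ℝ) ≠ 0 := Real.pi_ne_zero
  classical
  set εZ : Fin k → ℤ := fun j => if φhat j = 0 then 0 else 1 with hεZ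
  have hφε : ∀ j, φhat j = (εZ j : ℝ) * Real.pi := by
    intro j
    rcases hφhat j with h | h
    · simp [hεZ, h]
    · simp [hεZ, h, hpi]
  have he' : e = ∑ j, u j * εZ j := by
    have h1 : ((e : ℝ)) * Real.pi = ((∑ j, u j * εZ j : ℤ) : ℝ) * Real.pi := by
      rw [he]
      push_cast
      rw [Finset.sum_mul]
      exact Finset.sum_congr rfl fun j _ => by rw [hφε j]; ring
    exact_mod_cast mul_right_cancel₀ hpi h1
  have hD : (∀ i j : Fin k, φhat i = φhat j) ∨ (∀ i j : Fin k, Even (u i - u j)) := by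
    rcases hA with hA1 | hA2
    · left
      by_contra hcon
      push_neg at hcon
      obtain ⟨j1, j2, hne⟩ := hcon
      obtain ⟨p, q, hp, hq⟩ : ∃ p q : Fin k, φhat p = 0 ∧ φhat q = Real.pi := by
        rcases hφhat j1 with h1 | h1 <;> rcases hφhat j2 with h2 | h2
        · exact absurd (h1.trans h2.symm) hne
        · exact ⟨j1, j2, h1, h2⟩
        · exact ⟨j2, j1, h2, h1⟩
        · exact absurd (h1.trans h2.symm) hne
      exact SDIaux.gm1_const S w A hA1 hSA hw hcl hnonconst φhat hφhat hmax p q hp hq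
    · right
      rw [hA2] at huL
      exact fun i j => SDIaux.gm2_even huL i j
  intro φ
  have hentry : ∀ j m : Fin k, Real.sin ((u m : ℝ) * (φhat j + φ j)) =
      (-1:ℝ)^(u m * εZ j) * Real.sin ((u m : ℝ) * φ j) := by
    intro j m
    have harg : (u m : ℝ) * (φhat j + φ j) =
        (u m : ℝ) * φ j + ((u m * εZ j : ℤ) : ℝ) * Real.pi := by
      rw [hφε j]; push_cast; ring
    rw [harg, Real.sin_add_int_mul_pi]
  rcases hD with hcon | hpar
  · have hsame : ∀ j, εZ j = εZ ⟨0, hk⟩ := fun j => by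
      simp only [hεZ, hcon j ⟨0, hk⟩]
    have hM : (Matrix.of fun j m : Fin k => Real.sin ((u m : ℝ) * (φhat j + φ j))) =
        Matrix.of fun j m : Fin k =>
          ((-1:ℝ)^(u m * εZ ⟨0, hk⟩)) *
            (Matrix.of fun j m : Fin k => Real.sin ((u m : ℝ) * φ j)) j m := by
      ext j m
      simp only [Matrix.of_apply]
      rw [hentry j m, hsame j]
    rw [hM, Matrix.det_mul_row]
    congr 1
    rw [SDIaux.prod_zpow]
    apply SDIaux.zcongr
    have hss : ∑ m, u m * εZ ⟨0, hk⟩ = ∑ j, u j * εZ j :=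
      Finset.sum_congr rfl fun j _ => by rw [hsame j]
    rw [hss, ← he']
    simp
  · have hcongr : ∀ j m : Fin k, (-1:ℝ)^(u m * εZ j) = (-1:ℝ)^(u ⟨0, hk⟩ * εZ j) := by
      intro j m
      apply SDIaux.zcongr
      have h2 : u m * εZ j - u ⟨0, hk⟩ * εZ j = (u m - u ⟨0, hk⟩) * εZ j := by ring
      rw [h2]
      exact (hpar m ⟨0, hk⟩).mul_right _
    have hM : (Matrix.of fun j m : Fin k => Real.sin ((u m : ℝ) * (φhat j + φ j))) =
        Matrix.of fun j m : Fin k =>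
          ((-1:ℝ)^(u ⟨0, hk⟩ * εZ j)) *
            (Matrix.of fun j m : Fin k => Real.sin ((u m : ℝ) * φ j)) j m := by
      ext j m
      simp only [Matrix.of_apply]
      rw [hentry j m, hcongr j m]
    rw [hM, Matrix.det_mul_column]
    congr 1
    rw [SDIaux.prod_zpow]
    apply SDIaux.zcongr
    rw [he', ← Finset.sum_sub_distrib]
    apply Finset.even_sum
    intro j _
    have h2 : u ⟨0, hk⟩ * εZ j - u j * εZ j = (u ⟨0, hk⟩ - u j) * εZ j := by ring
    rw [h2]
    exact (hpar ⟨0, hk⟩ j).mul_right _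

end
end

section
/- (Determinant factorisation on an annulus.) Let 0 ≤ r* < R* and let B_1,…,B_k : ℂ → ℂ be analytic and one-valued on the annulus {x ∈ ℂ : r* ≤ |x| < R*}. Let x_1,…,x_k ∈ ℂ and r, R satisfy r* < r < min_j |x_j| ≤ max_j |x_j| < R < R*. Then det_{1≤j,m≤k}( B_m(x_j) ) = (∏_{1≤j<m≤k}(x_m − x_j)) · det_{1≤j,m≤k}( (2πi)^{−1} ∮_{|ξ|=R} B_m(ξ)/∏_{ℓ=1}^{j}(ξ − x_ℓ) dξ − (2πi)^{−1} ∮_{|ξ|=r} B_m(ξ)/∏_{ℓ=1}^{j}(ξ − x_ℓ) dξ ), where the contours are positively oriented circles about the origin. -/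
open Finset

lemma aux_key (a b c : ℂ) (hb : b ≠ 0) : a⁻¹ * b * (c * b⁻¹) = a⁻¹ * c := by
  rw [mul_comm c b⁻¹, mul_assoc, ← mul_assoc b b⁻¹ c, mul_inv_cancel₀ hb, one_mul]

lemma aux_pf {ι : Type*} [DecidableEq ι] (s : Finset ι) (hs : s.Nonempty) (v : ι → ℂ)
    (hv : Set.InjOn v s) (ξ : ℂ) (hξ : ∀ ℓ ∈ s, ξ ≠ v ℓ) :
    (∏ ℓ ∈ s, (ξ - v ℓ))⁻¹ = ∑ i ∈ s, (∏ ℓ ∈ s.erase i, (v i - v ℓ))⁻¹ * (ξ - v i)⁻¹ := by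
  have h1 := Lagrange.sum_basis hv hs
  have h2 : ∑ i ∈ s, ∏ ℓ ∈ s.erase i, ((v i - v ℓ)⁻¹ * (ξ - v ℓ)) = 1 := by
    have := congrArg (Polynomial.eval ξ) h1
    simpa [Lagrange.basis, Lagrange.basisDivisor, Polynomial.eval_finset_sum,
      Polynomial.eval_prod] using this
  have hP : ∀ ℓ ∈ s, ξ - v ℓ ≠ 0 := fun ℓ hℓ => sub_ne_zero.2 (hξ ℓ hℓ)
  calc (∏ ℓ ∈ s, (ξ - v ℓ))⁻¹
      = (∑ i ∈ s, ∏ ℓ ∈ s.erase i, ((v i - v ℓ)⁻¹ * (ξ - v ℓ))) * (∏ ℓ ∈ s, (ξ - v ℓ))⁻¹ := by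
        rw [h2, one_mul]
    _ = ∑ i ∈ s, (∏ ℓ ∈ s.erase i, (v i - v ℓ))⁻¹ * (ξ - v i)⁻¹ := by
        rw [Finset.sum_mul]
        refine Finset.sum_congr rfl fun i hi => ?_
        have h3 : ∏ ℓ ∈ s.erase i, (ξ - v ℓ) ≠ 0 :=
          Finset.prod_ne_zero_iff.2 fun ℓ hℓ => hP ℓ (Finset.mem_of_mem_erase hℓ)
        rw [Finset.prod_mul_distrib, ← Finset.mul_prod_erase _ _ hi, Finset.prod_inv_distrib,
          mul_inv]
        exact aux_key _ _ _ h3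
open Metric Set

lemma aux_circleIntegral_sum {ι : Type*} (s : Finset ι) (f : ι → ℂ → ℂ) (c : ℂ) (R : ℝ)
    (h : ∀ i ∈ s, CircleIntegrable (f i) c R) :
    (∮ z in C(c, R), ∑ i ∈ s, f i z) = ∑ i ∈ s, ∮ z in C(c, R), f i z := by
  simp only [circleIntegral, Finset.smul_sum]
  exact intervalIntegral.integral_finset_sum fun i hi => ((circleIntegrable_iff R).1 (h i hi))

lemma aux_circleIntegral_add {f g : ℂ → ℂ} {c : ℂ} {R : ℝ} (hf : CircleIntegrable f c R)
    (hg : CircleIntegrable g c R) :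
    (∮ z in C(c, R), (f z + g z)) = (∮ z in C(c, R), f z) + ∮ z in C(c, R), g z := by
  simp only [circleIntegral, smul_add]
  exact intervalIntegral.integral_add hf.out hg.out

lemma aux_res {rs Rs r R : ℝ} (hrs : 0 ≤ rs) (hr : rs < r) (hR : R < Rs)
    (f : ℂ → ℂ)
    (hf : AnalyticOnNhd ℂ f {x : ℂ | rs ≤ ‖x‖ ∧ ‖x‖ < Rs})
    (w : ℂ) (hw1 : r < ‖w‖) (hw2 : ‖w‖ < R) :
    (∮ ξ in C(0, R), f ξ * (ξ - w)⁻¹) - (∮ ξ in C(0, r), f ξ * (ξ - w)⁻¹)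
      = 2 * Real.pi * Complex.I * f w := by
  have h0r : (0:ℝ) < r := lt_of_le_of_lt hrs hr
  have hrR : r ≤ R := (hw1.trans hw2).le
  have h0R : (0:ℝ) < R := h0r.trans_le hrR
  have hann : ∀ z : ℂ, z ∈ closedBall (0:ℂ) R \ ball (0:ℂ) r → AnalyticAt ℂ f z := by
    intro z hz
    refine hf z ?_
    simp only [Set.mem_diff, mem_closedBall, mem_ball, Complex.dist_eq, sub_zero, not_lt] at hz
    exact ⟨hr.le.trans hz.2, lt_of_le_of_lt hz.1 hR⟩
  have hmem : ∀ ρ : ℝ, r ≤ ρ → ρ ≤ R →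
      ∀ z ∈ sphere (0:ℂ) ρ, z ∈ closedBall (0:ℂ) R \ ball (0:ℂ) r := by
    intro ρ h1 h2 z hz
    simp only [mem_sphere_iff_norm, sub_zero] at hz
    simp only [Set.mem_diff, mem_closedBall, mem_ball, Complex.dist_eq, sub_zero, not_lt, hz]
    exact ⟨h2, h1⟩
  have hne : ∀ ρ : ℝ, ‖w‖ ≠ ρ → ∀ z ∈ sphere (0:ℂ) ρ, z ≠ w := by
    intro ρ hρ z hz h
    subst h
    simp only [mem_sphere_iff_norm, sub_zero] at hz
    exact hρ hz
  have hneR := hne R hw2.ne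
  have hner := hne r hw1.ne'
  -- equality of the two integrals of the dslope
  have key : (∮ z in C(0, R), dslope f w z) = ∮ z in C(0, r), dslope f w z := by
    refine Complex.circleIntegral_eq_of_differentiable_on_annulus_off_countable h0r hrR
      (Set.countable_singleton w) ?_ ?_
    · intro z hz
      rcases eq_or_ne z w with rfl | hzw
      · exact ((continuousAt_dslope_same).2 (hann z hz).differentiableAt).continuousWithinAt
      · exact ((continuousWithinAt_dslope_of_ne hzw).2
          (hann z hz).continuousAt.continuousWithinAt)
    · rintro z ⟨hz, hzw⟩
      have hzw' : z ≠ w := by simpa using hzw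
      have : z ∈ closedBall (0:ℂ) R \ ball (0:ℂ) r :=
        ⟨ball_subset_closedBall hz.1, fun h => hz.2 (ball_subset_closedBall h)⟩
      exact (differentiableAt_dslope_of_ne hzw').2 (hann z this).differentiableAt
  -- pointwise identity away from w
  have hid : ∀ z : ℂ, z ≠ w → f z * (z - w)⁻¹ = dslope f w z + f w * (z - w)⁻¹ := by
    intro z hzw
    rw [dslope_of_ne f hzw, slope_def_field]
    have h' : z - w ≠ 0 := sub_ne_zero.2 hzw
    field_simp
    ring
  -- circle integrability facts
  have hds : ∀ ρ : ℝ, r ≤ ρ → ρ ≤ R → (‖w‖ ≠ ρ) →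
      CircleIntegrable (dslope f w) 0 ρ := by
    intro ρ h1 h2 h3
    refine ContinuousOn.circleIntegrable (h0r.le.trans h1) ?_
    intro z hz
    exact (continuousWithinAt_dslope_of_ne (hne ρ h3 z hz)).2
      (hann z (hmem ρ h1 h2 z hz)).continuousAt.continuousWithinAt
  have hsi : ∀ ρ : ℝ, 0 ≤ ρ → (‖w‖ ≠ ρ) →
      CircleIntegrable (fun z => f w * (z - w)⁻¹) 0 ρ := by
    intro ρ h1 h3
    refine ContinuousOn.circleIntegrable h1 ?_
    intro z hz
    exact (continuousWithinAt_const.mul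
      (((continuousWithinAt_id.sub continuousWithinAt_const).inv₀
        (sub_ne_zero.2 (hne ρ h3 z hz)))))
  -- rewrite the two integrals
  have hsplit : ∀ ρ : ℝ, r ≤ ρ → ρ ≤ R → (‖w‖ ≠ ρ) →
      (∮ ξ in C(0, ρ), f ξ * (ξ - w)⁻¹)
        = (∮ ξ in C(0, ρ), dslope f w ξ) + f w * ∮ ξ in C(0, ρ), (ξ - w)⁻¹ := by
    intro ρ h1 h2 h3
    rw [circleIntegral.integral_congr (h0r.le.trans h1)
      (fun z hz => hid z (hne ρ h3 z hz)),
      aux_circleIntegral_add (hds ρ h1 h2 h3) (hsi ρ (h0r.le.trans h1) h3),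
      circleIntegral.integral_const_mul]
  have hR2 : (∮ ξ in C(0, R), (ξ - w)⁻¹) = 2 * Real.pi * Complex.I :=
    circleIntegral.integral_sub_inv_of_mem_ball (by
      simp [mem_ball, Complex.dist_eq, hw2])
  have hr2 : (∮ ξ in C(0, r), (ξ - w)⁻¹) = 0 := by
    refine Complex.circleIntegral_eq_zero_of_differentiable_on_off_countable h0r.le
      Set.countable_empty ?_ ?_
    · intro z hz
      have : z ≠ w := by
        simp only [mem_closedBall, Complex.dist_eq, sub_zero] at hz
        intro h; rw [h] at hz; exact absurd hz (not_le.2 hw1)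
      exact ((continuousWithinAt_id.sub continuousWithinAt_const).inv₀ (sub_ne_zero.2 this))
    · rintro z ⟨hz, -⟩
      have : z ≠ w := by
        simp only [mem_ball, Complex.dist_eq, sub_zero] at hz
        intro h; rw [h] at hz; exact absurd hz (not_lt.2 hw1.le)
      exact ((differentiableAt_id.sub (differentiableAt_const w)).inv (sub_ne_zero.2 this))
  rw [hsplit R hrR le_rfl hw2.ne, hsplit r le_rfl hrR hw1.ne', hR2, hr2, key]
  ring

lemma aux_entry {k : ℕ} {rs Rs r R : ℝ} (hrs : 0 ≤ rs) (hr : rs < r) (hR : R < Rs)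
    (f : ℂ → ℂ) (hf : AnalyticOnNhd ℂ f {z : ℂ | rs ≤ ‖z‖ ∧ ‖z‖ < Rs})
    (x : Fin k → ℂ) (hinj : Function.Injective x)
    (hrx : ∀ j, r < ‖x j‖) (hxR : ∀ j, ‖x j‖ < R)
    (s : Finset (Fin k)) (hs : s.Nonempty) :
    (2 * (Real.pi : ℂ) * Complex.I)⁻¹ * (∮ ξ in C(0, R), f ξ / ∏ ℓ ∈ s, (ξ - x ℓ)) -
      (2 * (Real.pi : ℂ) * Complex.I)⁻¹ * (∮ ξ in C(0, r), f ξ / ∏ ℓ ∈ s, (ξ - x ℓ))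
    = ∑ i ∈ s, (∏ ℓ ∈ s.erase i, (x i - x ℓ))⁻¹ * f (x i) := by
  obtain ⟨j0, hj0⟩ := hs
  have h0r : (0:ℝ) < r := lt_of_le_of_lt hrs hr
  have hrR : r ≤ R := ((hrx j0).trans (hxR j0)).le
  have hsne : s.Nonempty := ⟨j0, hj0⟩
  have hsph : ∀ ρ : ℝ, (∀ ℓ, ‖x ℓ‖ ≠ ρ) → ∀ z ∈ sphere (0:ℂ) ρ, ∀ ℓ, z ≠ x ℓ := by
    intro ρ hρ z hz ℓ h
    subst h
    simp only [mem_sphere_iff_norm, sub_zero] at hz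
    exact hρ ℓ hz
  have hIρ : ∀ ρ : ℝ, r ≤ ρ → ρ ≤ R → (∀ ℓ, ‖x ℓ‖ ≠ ρ) →
      (∮ ξ in C(0, ρ), f ξ / ∏ ℓ ∈ s, (ξ - x ℓ))
        = ∑ i ∈ s, (∏ ℓ ∈ s.erase i, (x i - x ℓ))⁻¹ *
            ∮ ξ in C(0, ρ), f ξ * (ξ - x i)⁻¹ := by
    intro ρ h1 h2 h3
    have hρ0 : (0:ℝ) < ρ := h0r.trans_le h1
    have hfc : ContinuousOn f (sphere (0:ℂ) ρ) := by
      intro z hz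
      refine (hf z ?_).continuousAt.continuousWithinAt
      simp only [mem_sphere_iff_norm, sub_zero] at hz
      exact ⟨hz ▸ (hr.le.trans h1), hz ▸ lt_of_le_of_lt h2 hR⟩
    rw [circleIntegral.integral_congr (c := 0) (R := ρ) hρ0.le
      (g := fun ξ => ∑ i ∈ s, (∏ ℓ ∈ s.erase i, (x i - x ℓ))⁻¹ * (f ξ * (ξ - x i)⁻¹)) ?_]
    · rw [aux_circleIntegral_sum]
      · exact Finset.sum_congr rfl fun i hi => circleIntegral.integral_const_mul _ _ _ _
      · intro i hi
        refine ContinuousOn.circleIntegrable hρ0.le ?_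
        exact continuousOn_const.mul (hfc.mul ((continuousOn_id.sub continuousOn_const).inv₀
          (fun z hz => sub_ne_zero.2 (hsph ρ h3 z hz i))))
    · intro ξ hξ
      have := aux_pf s hsne x (hinj.injOn) ξ (fun ℓ _ => hsph ρ h3 ξ hξ ℓ)
      simp only [div_eq_mul_inv, this, Finset.mul_sum]
      exact Finset.sum_congr rfl fun i hi => by ring
  have hxρR : ∀ ℓ, ‖x ℓ‖ ≠ R := fun ℓ => (hxR ℓ).ne
  have hxρr : ∀ ℓ, ‖x ℓ‖ ≠ r := fun ℓ => (hrx ℓ).ne'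
  rw [hIρ R hrR le_rfl hxρR, hIρ r le_rfl hrR hxρr, ← mul_sub, ← Finset.sum_sub_distrib]
  have : ∀ i ∈ s, (∏ ℓ ∈ s.erase i, (x i - x ℓ))⁻¹ * (∮ ξ in C(0, R), f ξ * (ξ - x i)⁻¹) -
      (∏ ℓ ∈ s.erase i, (x i - x ℓ))⁻¹ * (∮ ξ in C(0, r), f ξ * (ξ - x i)⁻¹)
      = 2 * Real.pi * Complex.I * ((∏ ℓ ∈ s.erase i, (x i - x ℓ))⁻¹ * f (x i)) := by
    intro i hi
    rw [← mul_sub, aux_res hrs hr hR f hf (x i) (hrx i) (hxR i)]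
    ring
  rw [Finset.sum_congr rfl this, ← Finset.mul_sum, ← mul_assoc,
    inv_mul_cancel₀ Complex.two_pi_I_ne_zero, one_mul]



open scoped BigOperators

/-- Lemma `lem:det_factorisation`: factorisation of a determinant whose
columns are analytic functions on an annulus, via Laurent-coefficient contour integrals. -/
theorem det_factorisation_annulus {k : ℕ} (hk : 0 < k) (rs Rs : ℝ)
    (hrs : 0 ≤ rs) (hrsRs : rs < Rs)
    (B : Fin k → ℂ → ℂ)
    (hB : ∀ m, AnalyticOnNhd ℂ (B m) {x : ℂ | rs ≤ ‖x‖ ∧ ‖x‖ < Rs})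
    (x : Fin k → ℂ) (r R : ℝ)
    (hr : rs < r) (hrx : ∀ j, r < ‖x j‖)
    (hxR : ∀ j, ‖x j‖ < R) (hR : R < Rs) :
    Matrix.det (Matrix.of fun j m : Fin k => B m (x j)) =
      (∏ p ∈ Finset.univ.filter (fun p : Fin k × Fin k => p.1 < p.2), (x p.2 - x p.1)) *
        Matrix.det (Matrix.of fun j m : Fin k =>
          (2 * (Real.pi : ℂ) * Complex.I)⁻¹ *
              (∮ ξ in C(0, R), B m ξ / ∏ ℓ ∈ Finset.univ.filter (· ≤ j), (ξ - x ℓ)) -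
            (2 * (Real.pi : ℂ) * Complex.I)⁻¹ *
              (∮ ξ in C(0, r), B m ξ / ∏ ℓ ∈ Finset.univ.filter (· ≤ j), (ξ - x ℓ))) := by
  classical
  by_cases hinj : Function.Injective x
  · -- notation
    set s : Fin k → Finset (Fin k) := fun j => Finset.univ.filter (· ≤ j) with hs
    have hmem : ∀ i j : Fin k, i ∈ s j ↔ i ≤ j := by
      intro i j; simp [hs]
    have hsne : ∀ j, (s j).Nonempty := fun j => ⟨j, (hmem j j).2 le_rfl⟩
    set A : Matrix (Fin k) (Fin k) ℂ := Matrix.of fun i m => B m (x i) with hA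
    set L : Matrix (Fin k) (Fin k) ℂ :=
      Matrix.of (fun j i => if i ≤ j then (∏ ℓ ∈ (s j).erase i, (x i - x ℓ))⁻¹ else 0) with hL
    have hC : (Matrix.of fun j m : Fin k =>
        (2 * (Real.pi : ℂ) * Complex.I)⁻¹ *
            (∮ ξ in C(0, R), B m ξ / ∏ ℓ ∈ Finset.univ.filter (· ≤ j), (ξ - x ℓ)) -
          (2 * (Real.pi : ℂ) * Complex.I)⁻¹ *
            (∮ ξ in C(0, r), B m ξ / ∏ ℓ ∈ Finset.univ.filter (· ≤ j), (ξ - x ℓ))) = L * A := by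
      ext j m
      rw [Matrix.mul_apply, Matrix.of_apply]
      have h1 := aux_entry hrs hr hR (B m) (hB m) x hinj hrx hxR (s j) (hsne j)
      calc (2 * (Real.pi : ℂ) * Complex.I)⁻¹ *
            (∮ ξ in C(0, R), B m ξ / ∏ ℓ ∈ Finset.univ.filter (· ≤ j), (ξ - x ℓ)) -
          (2 * (Real.pi : ℂ) * Complex.I)⁻¹ *
            (∮ ξ in C(0, r), B m ξ / ∏ ℓ ∈ Finset.univ.filter (· ≤ j), (ξ - x ℓ))
          = ∑ i ∈ s j, (∏ ℓ ∈ (s j).erase i, (x i - x ℓ))⁻¹ * B m (x i) := h1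
        _ = ∑ i, L j i * A i m := by
            rw [hs, Finset.sum_filter]
            refine Finset.sum_congr rfl fun i _ => ?_
            rw [hL, hA, Matrix.of_apply, Matrix.of_apply, ite_mul, zero_mul]
    have hLtri : L.BlockTriangular OrderDual.toDual := by
      intro i j hij
      have : ¬ j ≤ i := not_le.2 hij
      simp only [hL, Matrix.of_apply, if_neg this]
    have herase : ∀ j : Fin k, (s j).erase j = Finset.univ.filter (· < j) := by
      intro j
      ext ℓ
      simp only [Finset.mem_erase, hmem, Finset.mem_filter, Finset.mem_univ, true_and]
      constructor
      · rintro ⟨h1, h2⟩; exact lt_of_le_of_ne h2 h1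
      · intro h; exact ⟨h.ne, h.le⟩
    have hdetL : L.det = ∏ j, (∏ ℓ ∈ Finset.univ.filter (· < j), (x j - x ℓ))⁻¹ := by
      rw [Matrix.det_of_lowerTriangular L hLtri]
      refine Finset.prod_congr rfl fun j _ => ?_
      rw [hL, Matrix.of_apply, if_pos le_rfl, herase j]
    have hP : ∀ j : Fin k, (∏ ℓ ∈ Finset.univ.filter (· < j), (x j - x ℓ)) ≠ 0 := by
      intro j
      refine Finset.prod_ne_zero_iff.2 fun ℓ hℓ => sub_ne_zero.2 fun h => ?_
      exact (ne_of_lt (Finset.mem_filter.1 hℓ).2) (hinj h).symm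
    have hVprod : (∏ p ∈ Finset.univ.filter (fun p : Fin k × Fin k => p.1 < p.2),
        (x p.2 - x p.1)) = ∏ j, ∏ ℓ ∈ Finset.univ.filter (· < j), (x j - x ℓ) := by
      rw [Finset.prod_filter]
      calc (∏ p : Fin k × Fin k, if p.1 < p.2 then x p.2 - x p.1 else 1)
          = ∏ p : Fin k × Fin k, (if p.2 < p.1 then x p.1 - x p.2 else 1) :=
            Fintype.prod_equiv (Equiv.prodComm (Fin k) (Fin k))
              (fun p => if p.1 < p.2 then x p.2 - x p.1 else 1)
              (fun p => if p.2 < p.1 then x p.1 - x p.2 else 1) (fun p => rfl)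
        _ = ∏ j, ∏ ℓ, (if ℓ < j then x j - x ℓ else 1) := Fintype.prod_prod_type _
        _ = ∏ j, ∏ ℓ ∈ Finset.univ.filter (· < j), (x j - x ℓ) := by
            exact Finset.prod_congr rfl fun j _ => (Finset.prod_filter _ _).symm
    rw [hC, Matrix.det_mul, hdetL, hVprod, ← mul_assoc, ← Finset.prod_mul_distrib]
    have : ∀ j ∈ (Finset.univ : Finset (Fin k)),
        (∏ ℓ ∈ Finset.univ.filter (· < j), (x j - x ℓ)) *
          (∏ ℓ ∈ Finset.univ.filter (· < j), (x j - x ℓ))⁻¹ = 1 :=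
      fun j _ => mul_inv_cancel₀ (hP j)
    rw [Finset.prod_congr rfl this, Finset.prod_const_one, one_mul]
  · rcases Function.not_injective_iff.1 hinj with ⟨a, b, hxy, hab⟩
    have hdet : Matrix.det (Matrix.of fun j m : Fin k => B m (x j)) = 0 :=
      Matrix.det_zero_of_row_eq hab (funext fun m => congrArg (B m) hxy)
    have hV0 : (∏ p ∈ Finset.univ.filter (fun p : Fin k × Fin k => p.1 < p.2),
        (x p.2 - x p.1)) = 0 := by
      rcases hab.lt_or_gt with h | h
      · exact Finset.prod_eq_zero
          (Finset.mem_filter.2 ⟨Finset.mem_univ ((a, b) : Fin k × Fin k), h⟩)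
          (sub_eq_zero.2 hxy.symm)
      · exact Finset.prod_eq_zero
          (Finset.mem_filter.2 ⟨Finset.mem_univ ((b, a) : Fin k × Fin k), h⟩)
          (sub_eq_zero.2 hxy)
    rw [hdet, hV0, zero_mul]
end

section
/- (Determinant factorisation, odd symmetry.) Let R_1*, R_2* > 0 and let A : ℂ × ℂ → ℂ be analytic on {(x,y) : |x| < R_1*, |y| < R_2*} with A(−x,y) = −A(x,y) for all such (x,y). Let x_1,…,x_k, y_1,…,y_k ∈ ℂ and R_1, R_2 satisfy max_j |x_j| < R_1 < R_1* and max_j |y_j| < R_2 < R_2*. Then det_{1≤j,m≤k}( A(x_j, y_m) ) = (∏_{j=1}^k x_j) · (∏_{1≤j<m≤k}(x_m² − x_j²)(y_m − y_j)) · det_{1≤j,m≤k}( (2πi)^{−2} ∮_{|ξ|=R_1} ∮_{|η|=R_2} A(ξ,η) / ( (∏_{ℓ=1}^{j}(ξ² − x_ℓ²)) · (∏_{ℓ=1}^{m}(η − y_ℓ)) ) dη dξ ), where the contours are positively oriented circles about the origin. -/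
open scoped BigOperators


open Complex Metric Finset Polynomial

section Aux

lemma filter_lt_eq_Iio' {k : ℕ} (j : Fin k) :
    Finset.univ.filter (· < j) = Finset.Iio j := by ext; simp

lemma filter_le_eq_Iic' {k : ℕ} (j : Fin k) :
    Finset.univ.filter (· ≤ j) = Finset.Iic j := by ext; simp

lemma prod_filter_lt_eq' {k : ℕ} (j : Fin k) (g : Fin k → ℂ) (g' : ℕ → ℂ)
    (hg : ∀ ℓ : Fin k, g' ℓ = g ℓ) :
    ∏ ℓ ∈ Finset.univ.filter (· < j), g ℓ = ∏ ℓ ∈ Finset.range (j : ℕ), g' ℓ := by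
  rw [filter_lt_eq_Iio', ← Nat.Iio_eq_range, ← Fin.map_valEmbedding_Iio, Finset.prod_map]
  exact Finset.prod_congr rfl fun ℓ _ => (hg ℓ).symm

lemma prod_filter_le_eq' {k : ℕ} (j : Fin k) (g : Fin k → ℂ) (g' : ℕ → ℂ)
    (hg : ∀ ℓ : Fin k, g' ℓ = g ℓ) :
    ∏ ℓ ∈ Finset.univ.filter (· ≤ j), g ℓ = ∏ ℓ ∈ Finset.range ((j : ℕ) + 1), g' ℓ := by
  have : Finset.range ((j : ℕ) + 1) = Finset.Iic (j : ℕ) := by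
    ext n; simp [Nat.lt_succ_iff]
  rw [filter_le_eq_Iic', this, ← Fin.map_valEmbedding_Iic, Finset.prod_map]
  exact Finset.prod_congr rfl fun ℓ _ => (hg ℓ).symm

lemma teleN' (v : ℕ → ℂ) (u z : ℂ) (n : ℕ) (hz : ∀ ℓ, ℓ < n → z - v ℓ ≠ 0) :
    (z - u) * ∑ j ∈ Finset.range n, (∏ ℓ ∈ Finset.range j, (u - v ℓ)) *
      (∏ ℓ ∈ Finset.range (j+1), (z - v ℓ))⁻¹ =
      1 - (∏ ℓ ∈ Finset.range n, (u - v ℓ)) * (∏ ℓ ∈ Finset.range n, (z - v ℓ))⁻¹ := by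
  induction n with
  | zero => simp
  | succ n ih =>
    have hzn : ∀ ℓ, ℓ < n → z - v ℓ ≠ 0 := fun ℓ h => hz ℓ (h.trans (Nat.lt_succ_self n))
    have hZ : (∏ ℓ ∈ Finset.range n, (z - v ℓ)) ≠ 0 :=
      Finset.prod_ne_zero_iff.mpr (fun ℓ hℓ => hzn ℓ (Finset.mem_range.mp hℓ))
    have hzlast : z - v n ≠ 0 := hz n (Nat.lt_succ_self n)
    rw [Finset.sum_range_succ, mul_add, ih hzn]
    rw [Finset.prod_range_succ, Finset.prod_range_succ]
    field_simp
    ring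

lemma tele' {k : ℕ} (v : Fin k → ℂ) (u z : ℂ) (hz : ∀ ℓ, z - v ℓ ≠ 0)
    (h0 : ∏ ℓ, (u - v ℓ) = 0) :
    ∑ j : Fin k, (∏ ℓ ∈ Finset.univ.filter (· < j), (u - v ℓ)) *
      (∏ ℓ ∈ Finset.univ.filter (· ≤ j), (z - v ℓ))⁻¹ = (z - u)⁻¹ := by
  classical
  set vN : ℕ → ℂ := fun n => if h : n < k then v ⟨n, h⟩ else 0 with hvN
  have hvN' : ∀ ℓ : Fin k, vN ℓ = v ℓ := fun ℓ => by simp [hvN, ℓ.isLt]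
  have hterm : ∀ j : Fin k,
      (∏ ℓ ∈ Finset.univ.filter (· < j), (u - v ℓ)) *
        (∏ ℓ ∈ Finset.univ.filter (· ≤ j), (z - v ℓ))⁻¹ =
      (∏ ℓ ∈ Finset.range (j : ℕ), (u - vN ℓ)) *
        (∏ ℓ ∈ Finset.range ((j : ℕ) + 1), (z - vN ℓ))⁻¹ := by
    intro j
    rw [prod_filter_lt_eq' j _ (fun n => u - vN n)
        (fun ℓ => by show u - vN ℓ = u - v ℓ; rw [hvN' ℓ]),
      prod_filter_le_eq' j _ (fun n => z - vN n)
        (fun ℓ => by show z - vN ℓ = z - v ℓ; rw [hvN' ℓ])]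
  calc ∑ j : Fin k, (∏ ℓ ∈ Finset.univ.filter (· < j), (u - v ℓ)) *
        (∏ ℓ ∈ Finset.univ.filter (· ≤ j), (z - v ℓ))⁻¹
      = ∑ j ∈ Finset.range k, (∏ ℓ ∈ Finset.range j, (u - vN ℓ)) *
        (∏ ℓ ∈ Finset.range (j+1), (z - vN ℓ))⁻¹ := by
        rw [← Fin.sum_univ_eq_sum_range]
        exact Finset.sum_congr rfl fun j _ => hterm j
    _ = (z - u)⁻¹ := by
        have hzN : ∀ ℓ, ℓ < k → z - vN ℓ ≠ 0 := by
          intro ℓ hℓ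
          have := hz ⟨ℓ, hℓ⟩
          rwa [← hvN' ⟨ℓ, hℓ⟩] at this
        have h0' : (∏ ℓ ∈ Finset.range k, (u - vN ℓ)) = 0 := by
          rw [← Fin.prod_univ_eq_prod_range fun n => u - vN n, ← h0]
          exact Finset.prod_congr rfl fun ℓ _ => by rw [hvN' ℓ]
        have := teleN' vN u z k hzN
        rw [h0', zero_mul, sub_zero] at this
        exact eq_inv_of_mul_eq_one_right (by rw [mul_comm] at this; rwa [mul_comm])

lemma det_newton' {k : ℕ} (w : Fin k → ℂ) :
    Matrix.det (Matrix.of fun j j' : Fin k =>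
      ∏ ℓ ∈ Finset.univ.filter (· < j'), (w j - w ℓ)) =
      ∏ i : Fin k, ∏ j ∈ Finset.Ioi i, (w j - w i) := by
  have hdeg : ∀ j' : Fin k,
      (∏ ℓ ∈ Finset.univ.filter (· < j'), (X - C (w ℓ))).natDegree = (j' : ℕ) := by
    intro j'
    rw [Polynomial.natDegree_prod _ _ (fun i _ => X_sub_C_ne_zero (w i))]
    simp [Polynomial.natDegree_X_sub_C, filter_lt_eq_Iio', Fin.card_Iio]
  have hmonic : ∀ j' : Fin k,
      (∏ ℓ ∈ Finset.univ.filter (· < j'), (X - C (w ℓ))).Monic :=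
    fun j' => monic_prod_of_monic _ _ (fun i _ => monic_X_sub_C (w i))
  have h := Matrix.det_eval_matrixOfPolynomials_eq_det_vandermonde w
    (fun j' => ∏ ℓ ∈ Finset.univ.filter (· < j'), (X - C (w ℓ))) hdeg hmonic
  rw [← Matrix.det_vandermonde w, h]
  congr 1
  ext j j'
  simp [Polynomial.eval_prod]

lemma circleIntegral_sum' {ι : Type*} (s : Finset ι) (f : ι → ℂ → ℂ) {c : ℂ} {R : ℝ}
    (h : ∀ i ∈ s, CircleIntegrable (f i) c R) :
    (∮ z in C(c, R), ∑ i ∈ s, f i z) = ∑ i ∈ s, ∮ z in C(c, R), f i z := by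
  simp only [circleIntegral, Finset.smul_sum]
  rw [intervalIntegral.integral_finset_sum (fun i hi => (h i hi).out)]

lemma oddCauchy' {R : ℝ} (hR : 0 < R) (f : ℂ → ℂ)
    (hf : DifferentiableOn ℂ f (Metric.closedBall 0 R))
    {w : ℂ} (hw : ‖w‖ < R) (hfw : f (-w) = - f w) :
    (∮ ξ in C(0, R), (w * (ξ ^ 2 - w ^ 2)⁻¹) * f ξ) = (2 * (Real.pi : ℂ) * Complex.I) * f w := by
  have hwb : w ∈ Metric.ball (0 : ℂ) R := by simpa using hw
  have hwb' : -w ∈ Metric.ball (0 : ℂ) R := by simpa using hw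
  have habs : ∀ ξ ∈ Metric.sphere (0 : ℂ) R, ‖ξ‖ = R := by
    intro ξ hξ; simpa using hξ
  have hne1 : ∀ ξ ∈ Metric.sphere (0 : ℂ) R, ξ - w ≠ 0 := by
    intro ξ hξ
    refine sub_ne_zero.mpr fun h => hw.ne ?_
    rw [← h]; exact habs ξ hξ
  have hne2 : ∀ ξ ∈ Metric.sphere (0 : ℂ) R, ξ + w ≠ 0 := by
    intro ξ hξ h
    have h' : ξ = -w := by linear_combination h
    have h2 := habs ξ hξ
    rw [h'] at h2; simp only [norm_neg] at h2
    exact hw.ne h2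
  have hfc : ContinuousOn f (Metric.sphere (0 : ℂ) R) :=
    hf.continuousOn.mono Metric.sphere_subset_closedBall
  have hint1 : CircleIntegrable (fun ξ => (ξ - w)⁻¹ * f ξ) 0 R :=
    ContinuousOn.circleIntegrable hR.le
      (((continuousOn_id.sub continuousOn_const).inv₀ hne1).mul hfc)
  have hint2 : CircleIntegrable (fun ξ => (ξ + w)⁻¹ * f ξ) 0 R :=
    ContinuousOn.circleIntegrable hR.le
      (((continuousOn_id.add continuousOn_const).inv₀ hne2).mul hfc)
  have hcongr : (∮ ξ in C(0, R), (w * (ξ ^ 2 - w ^ 2)⁻¹) * f ξ) =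
      ∮ ξ in C(0, R), (2 : ℂ)⁻¹ * ((ξ - w)⁻¹ * f ξ - (ξ + w)⁻¹ * f ξ) := by
    refine circleIntegral.integral_congr hR.le fun ξ hξ => ?_
    have h1 := hne1 ξ hξ
    have h2 := hne2 ξ hξ
    have hsq : ξ ^ 2 - w ^ 2 = (ξ - w) * (ξ + w) := by ring
    rw [hsq]
    field_simp
    ring
  rw [hcongr, circleIntegral.integral_const_mul,
    circleIntegral.integral_sub hint1 hint2]
  have h1 : (∮ ξ in C(0, R), (ξ - w)⁻¹ * f ξ) = (2 * (Real.pi : ℂ) * Complex.I) * f w := by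
    have := hf.circleIntegral_sub_inv_smul hwb
    simpa [smul_eq_mul] using this
  have h2 : (∮ ξ in C(0, R), (ξ + w)⁻¹ * f ξ) =
      -((2 * (Real.pi : ℂ) * Complex.I) * f w) := by
    have := hf.circleIntegral_sub_inv_smul hwb'
    simp only [smul_eq_mul, sub_neg_eq_add, hfw] at this
    rw [this]; ring
  rw [h1, h2]
  ring

end Aux

lemma entry_key {k : ℕ} (R1s R2s : ℝ)
    (A : ℂ → ℂ → ℂ)
    (hA : AnalyticOnNhd ℂ (fun p : ℂ × ℂ => A p.1 p.2)
      {p : ℂ × ℂ | ‖p.1‖ < R1s ∧ ‖p.2‖ < R2s})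
    (hodd : ∀ x y : ℂ, ‖x‖ < R1s → ‖y‖ < R2s → A (-x) y = -A x y)
    (x y : Fin k → ℂ) (R1 R2 : ℝ)
    (hx : ∀ j, ‖x j‖ < R1) (hR1 : R1 < R1s)
    (hy : ∀ j, ‖y j‖ < R2) (hR2 : R2 < R2s) (j m : Fin k) :
    x j * ∑ j' : Fin k, (∏ ℓ ∈ Finset.univ.filter (· < j'), (x j ^ 2 - x ℓ ^ 2)) *
      ∑ m' : Fin k, (∏ ℓ ∈ Finset.univ.filter (· < m'), (y m - y ℓ)) *
        (((2 * (Real.pi : ℂ) * Complex.I) ^ 2)⁻¹ *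
          (∮ ξ in C(0, R1), ∮ η in C(0, R2),
            A ξ η / ((∏ ℓ ∈ Finset.univ.filter (· ≤ j'), (ξ ^ 2 - x ℓ ^ 2)) *
              ∏ ℓ ∈ Finset.univ.filter (· ≤ m'), (η - y ℓ)))) = A (x j) (y m) := by
  classical
  have hR1pos : 0 < R1 := (norm_nonneg (x j)).trans_lt (hx j)
  have hR2pos : 0 < R2 := (norm_nonneg (y m)).trans_lt (hy m)
  have hxs : ∀ ℓ, ‖x ℓ‖ < R1s := fun ℓ => (hx ℓ).trans hR1
  have hys : ∀ ℓ, ‖y ℓ‖ < R2s := fun ℓ => (hy ℓ).trans hR2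
  set tp : ℂ := 2 * (Real.pi : ℂ) * Complex.I with htp
  have htpne : tp ≠ 0 := by
    rw [htp]
    simp [Real.pi_ne_zero, Complex.I_ne_zero, Complex.ofReal_ne_zero]
  -- slice differentiability in the second variable
  have hslice2 : ∀ ξ : ℂ, ‖ξ‖ < R1s →
      DifferentiableOn ℂ (A ξ) (Metric.closedBall 0 R2) := by
    intro ξ hξ η hη
    have hηa : ‖η‖ < R2s := by
      have : ‖η‖ ≤ R2 := by
        simpa using Metric.mem_closedBall.mp hη
      exact this.trans_lt hR2
    have hd := (hA (ξ, η) ⟨hξ, hηa⟩).differentiableAt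
    have hg : DifferentiableAt ℂ (fun z : ℂ => ((ξ, z) : ℂ × ℂ)) η :=
      (differentiableAt_const ξ).prodMk differentiableAt_id
    have := DifferentiableAt.comp (f := fun z : ℂ => ((ξ, z) : ℂ × ℂ)) η hd hg
    exact (this : DifferentiableAt ℂ (fun z => A ξ z) η).differentiableWithinAt
  -- slice differentiability in the first variable, at y m
  have hslice1 : DifferentiableOn ℂ (fun ξ => A ξ (y m)) (Metric.closedBall 0 R1) := by
    intro ξ hξ
    have hξa : ‖ξ‖ < R1s := by
      have : ‖ξ‖ ≤ R1 := by
        simpa using Metric.mem_closedBall.mp hξ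
      exact this.trans_lt hR1
    have hd := (hA (ξ, y m) ⟨hξa, hys m⟩).differentiableAt
    have hg : DifferentiableAt ℂ (fun z : ℂ => ((z, y m) : ℂ × ℂ)) ξ :=
      differentiableAt_id.prodMk (differentiableAt_const (y m))
    have := DifferentiableAt.comp (f := fun z : ℂ => ((z, y m) : ℂ × ℂ)) ξ hd hg
    exact (this : DifferentiableAt ℂ (fun z => A z (y m)) ξ).differentiableWithinAt
  -- the Cauchy integral formula in the second variable
  have cauchy_eta : ∀ ξ : ℂ, ‖ξ‖ < R1s →
      (∮ η in C(0, R2), A ξ η * (η - y m)⁻¹) = tp * A ξ (y m) := by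
    intro ξ hξ
    have hym : y m ∈ Metric.ball (0 : ℂ) R2 := by simpa using hy m
    have h := (hslice2 ξ hξ).circleIntegral_sub_inv_smul hym
    calc (∮ η in C(0, R2), A ξ η * (η - y m)⁻¹)
        = ∮ η in C(0, R2), (η - y m)⁻¹ • A ξ η := by
          congr 1; funext η; simp [smul_eq_mul, mul_comm]
      _ = tp * A ξ (y m) := by rw [h]; simp [htp, smul_eq_mul]
  -- nonvanishing of Q on the circle |η| = R2
  have hQne : ∀ m' : Fin k, ∀ η : ℂ, ‖η‖ = R2 →
      (∏ ℓ ∈ Finset.univ.filter (· ≤ m'), (η - y ℓ)) ≠ 0 := by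
    intro m' η hη
    refine Finset.prod_ne_zero_iff.mpr fun ℓ _ => sub_ne_zero.mpr fun h => ?_
    rw [h] at hη; exact (hy ℓ).ne hη
  -- nonvanishing of P on the circle |ξ| = R1
  have hPne : ∀ j' : Fin k, ∀ ξ : ℂ, ‖ξ‖ = R1 →
      (∏ ℓ ∈ Finset.univ.filter (· ≤ j'), (ξ ^ 2 - x ℓ ^ 2)) ≠ 0 := by
    intro j' ξ hξ
    refine Finset.prod_ne_zero_iff.mpr fun ℓ _ => sub_ne_zero.mpr fun h => ?_
    have h1 : ‖ξ ^ 2‖ = R1 ^ 2 := by rw [norm_pow, hξ]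
    have h2 : ‖x ℓ ^ 2‖ < R1 ^ 2 := by
      rw [norm_pow]
      exact pow_lt_pow_left₀ (hx ℓ) (norm_nonneg _) two_ne_zero
    rw [h] at h1; rw [h1] at h2; exact lt_irrefl _ h2
  -- continuity of slices of A on the sphere |η| = R2
  have contA2 : ∀ ξ : ℂ, ‖ξ‖ < R1s →
      ContinuousOn (A ξ) (Metric.sphere 0 R2) := by
    intro ξ hξ η hη
    have hηa : ‖η‖ = R2 := by simpa using hη
    have hd := (hA (ξ, η) ⟨hξ, by rw [hηa]; exact hR2⟩).continuousAt
    have hg : ContinuousAt (fun z : ℂ => ((ξ, z) : ℂ × ℂ)) η := by fun_prop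
    have := ContinuousAt.comp (f := fun z : ℂ => ((ξ, z) : ℂ × ℂ)) (x := η) hd hg
    exact (this : ContinuousAt (fun z => A ξ z) η).continuousWithinAt
  -- integrability in η
  have int_eta : ∀ ξ : ℂ, ‖ξ‖ < R1s → ∀ m' : Fin k,
      CircleIntegrable (fun η => A ξ η *
        (∏ ℓ ∈ Finset.univ.filter (· ≤ m'), (η - y ℓ))⁻¹) 0 R2 := by
    intro ξ hξ m'
    refine ContinuousOn.circleIntegrable hR2pos.le ((contA2 ξ hξ).mul ?_)
    refine ContinuousOn.inv₀
      (Continuous.continuousOn (continuous_finset_prod _ fun ℓ _ =>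
        continuous_id.sub continuous_const)) ?_
    intro η hη
    exact hQne m' η (by simpa using hη)
  -- individual factors of P are nonzero on the circle
  have hfacne : ∀ ξ : ℂ, ‖ξ‖ = R1 → ∀ ℓ : Fin k, ξ ^ 2 - x ℓ ^ 2 ≠ 0 := by
    intro ξ hξ ℓ
    refine sub_ne_zero.mpr fun h => ?_
    have h1 : ‖ξ ^ 2‖ = R1 ^ 2 := by rw [norm_pow, hξ]
    have h2 : ‖x ℓ ^ 2‖ < R1 ^ 2 := by
      rw [norm_pow]
      exact pow_lt_pow_left₀ (hx ℓ) (norm_nonneg _) two_ne_zero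
    rw [h] at h1; rw [h1] at h2; exact lt_irrefl _ h2
  -- inner collapse: summing over m' recovers the Cauchy kernel in η
  have inner : ∀ ξ : ℂ, ‖ξ‖ = R1 →
      ∑ m' : Fin k, (∏ ℓ ∈ Finset.univ.filter (· < m'), (y m - y ℓ)) *
        (∮ η in C(0, R2), A ξ η * (∏ ℓ ∈ Finset.univ.filter (· ≤ m'), (η - y ℓ))⁻¹)
        = tp * A ξ (y m) := by
    intro ξ hξ
    have hξs : ‖ξ‖ < R1s := by rw [hξ]; exact hR1
    calc ∑ m' : Fin k, (∏ ℓ ∈ Finset.univ.filter (· < m'), (y m - y ℓ)) *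
          (∮ η in C(0, R2), A ξ η * (∏ ℓ ∈ Finset.univ.filter (· ≤ m'), (η - y ℓ))⁻¹)
        = ∑ m' : Fin k, ∮ η in C(0, R2),
            (∏ ℓ ∈ Finset.univ.filter (· < m'), (y m - y ℓ)) *
              (A ξ η * (∏ ℓ ∈ Finset.univ.filter (· ≤ m'), (η - y ℓ))⁻¹) := by
          exact Finset.sum_congr rfl fun m' _ =>
            (circleIntegral.integral_const_mul _ _ _ _).symm
      _ = ∮ η in C(0, R2), ∑ m' : Fin k,
            (∏ ℓ ∈ Finset.univ.filter (· < m'), (y m - y ℓ)) *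
              (A ξ η * (∏ ℓ ∈ Finset.univ.filter (· ≤ m'), (η - y ℓ))⁻¹) := by
          refine (circleIntegral_sum' Finset.univ _ fun m' _ => ?_).symm
          exact IntervalIntegrable.const_mul (int_eta ξ hξs m') _
      _ = ∮ η in C(0, R2), A ξ η * (η - y m)⁻¹ := by
          refine circleIntegral.integral_congr hR2pos.le fun η hη => ?_
          have hηa : ‖η‖ = R2 := by simpa using hη
          have hz : ∀ ℓ : Fin k, η - y ℓ ≠ 0 := by
            intro ℓ
            refine sub_ne_zero.mpr fun h => ?_
            rw [h] at hηa; exact (hy ℓ).ne hηa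
          have h0 : ∏ ℓ : Fin k, (y m - y ℓ) = 0 :=
            Finset.prod_eq_zero (Finset.mem_univ m) (sub_self _)
          have ht := tele' y (y m) η hz h0
          calc ∑ m' : Fin k, (∏ ℓ ∈ Finset.univ.filter (· < m'), (y m - y ℓ)) *
                (A ξ η * (∏ ℓ ∈ Finset.univ.filter (· ≤ m'), (η - y ℓ))⁻¹)
              = A ξ η * ∑ m' : Fin k,
                  (∏ ℓ ∈ Finset.univ.filter (· < m'), (y m - y ℓ)) *
                    (∏ ℓ ∈ Finset.univ.filter (· ≤ m'), (η - y ℓ))⁻¹ := by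
                rw [Finset.mul_sum]
                exact Finset.sum_congr rfl fun m' _ => by ring
            _ = A ξ η * (η - y m)⁻¹ := by rw [ht]
      _ = tp * A ξ (y m) := cauchy_eta ξ hξs
  -- circle integrability of the ξ-integrand
  have int_xi : ∀ j' m' : Fin k, CircleIntegrable (fun ξ =>
      ((∏ ℓ ∈ Finset.univ.filter (· ≤ j'), (ξ ^ 2 - x ℓ ^ 2))⁻¹ *
        ∮ η in C(0, R2), A ξ η *
          (∏ ℓ ∈ Finset.univ.filter (· ≤ m'), (η - y ℓ))⁻¹)) 0 R1 := by
    intro j' m'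
    have habs1 : ∀ θ : ℝ, ‖circleMap 0 R1 θ‖ = R1 := fun θ => by
      rw [norm_circleMap_zero, abs_of_pos hR1pos]
    have habs2 : ∀ θ : ℝ, ‖circleMap 0 R2 θ‖ = R2 := fun θ => by
      rw [norm_circleMap_zero, abs_of_pos hR2pos]
    have contP : Continuous fun θ : ℝ =>
        ((∏ ℓ ∈ Finset.univ.filter (· ≤ j'), ((circleMap 0 R1 θ) ^ 2 - x ℓ ^ 2))⁻¹ : ℂ) := by
      apply Continuous.inv₀
      · exact continuous_finset_prod _ fun ℓ _ =>
          (((continuous_circleMap 0 R1).pow 2).sub continuous_const)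
      · intro θ
        exact hPne j' _ (habs1 θ)
    have jointA : Continuous fun p : ℝ × ℝ =>
        A (circleMap 0 R1 p.1) (circleMap 0 R2 p.2) := by
      rw [continuous_iff_continuousAt]
      intro p
      have hmem : ((circleMap 0 R1 p.1, circleMap 0 R2 p.2) : ℂ × ℂ) ∈
          {p : ℂ × ℂ | ‖p.1‖ < R1s ∧ ‖p.2‖ < R2s} := by
        constructor
        · rw [habs1]; exact hR1
        · rw [habs2]; exact hR2
      have hg : ContinuousAt (fun p : ℝ × ℝ =>
          ((circleMap 0 R1 p.1, circleMap 0 R2 p.2) : ℂ × ℂ)) p := by fun_prop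
      have := ContinuousAt.comp
        (f := fun p : ℝ × ℝ => ((circleMap 0 R1 p.1, circleMap 0 R2 p.2) : ℂ × ℂ))
        (x := p) (hA _ hmem).continuousAt hg
      exact this
    have contQinv : Continuous fun φ : ℝ =>
        ((∏ ℓ ∈ Finset.univ.filter (· ≤ m'), ((circleMap 0 R2 φ) - y ℓ))⁻¹ : ℂ) := by
      apply Continuous.inv₀
      · exact continuous_finset_prod _ fun ℓ _ =>
          ((continuous_circleMap 0 R2).sub continuous_const)
      · intro φ
        exact hQne m' _ (habs2 φ)
    have contI : Continuous fun θ : ℝ =>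
        (∮ η in C(0, R2), A (circleMap 0 R1 θ) η *
          (∏ ℓ ∈ Finset.univ.filter (· ≤ m'), (η - y ℓ))⁻¹) := by
      simp only [circleIntegral]
      refine intervalIntegral.continuous_parametric_intervalIntegral_of_continuous' ?_ _ _
      have : Continuous fun p : ℝ × ℝ => deriv (circleMap 0 R2) p.2 •
          (A (circleMap 0 R1 p.1) (circleMap 0 R2 p.2) *
            (∏ ℓ ∈ Finset.univ.filter (· ≤ m'), (circleMap 0 R2 p.2 - y ℓ))⁻¹) := by
        simp only [deriv_circleMap]
        exact (((continuous_circleMap 0 R2).comp continuous_snd).mul continuous_const).smul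
          (jointA.mul (contQinv.comp continuous_snd))
      exact this
    exact (contP.mul contI).intervalIntegrable 0 (2 * Real.pi)
  -- rewriting the double integral
  have step1 : ∀ j' m' : Fin k,
      (∮ ξ in C(0, R1), ∮ η in C(0, R2), A ξ η /
          ((∏ ℓ ∈ Finset.univ.filter (· ≤ j'), (ξ ^ 2 - x ℓ ^ 2)) *
            ∏ ℓ ∈ Finset.univ.filter (· ≤ m'), (η - y ℓ)))
      = ∮ ξ in C(0, R1), ((∏ ℓ ∈ Finset.univ.filter (· ≤ j'), (ξ ^ 2 - x ℓ ^ 2))⁻¹ *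
          ∮ η in C(0, R2), A ξ η *
            (∏ ℓ ∈ Finset.univ.filter (· ≤ m'), (η - y ℓ))⁻¹) := by
    intro j' m'
    congr 1
    funext ξ
    rw [← circleIntegral.integral_const_mul]
    congr 1
    funext η
    rw [div_eq_mul_inv, mul_inv]
    ring
  -- the main computation
  calc x j * ∑ j' : Fin k, (∏ ℓ ∈ Finset.univ.filter (· < j'), (x j ^ 2 - x ℓ ^ 2)) *
      ∑ m' : Fin k, (∏ ℓ ∈ Finset.univ.filter (· < m'), (y m - y ℓ)) *
        ((tp ^ 2)⁻¹ *
          (∮ ξ in C(0, R1), ∮ η in C(0, R2),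
            A ξ η / ((∏ ℓ ∈ Finset.univ.filter (· ≤ j'), (ξ ^ 2 - x ℓ ^ 2)) *
              ∏ ℓ ∈ Finset.univ.filter (· ≤ m'), (η - y ℓ))))
      = ∑ p : Fin k × Fin k, (tp ^ 2)⁻¹ * ∮ ξ in C(0, R1),
          ((x j * (∏ ℓ ∈ Finset.univ.filter (· < p.1), (x j ^ 2 - x ℓ ^ 2)) *
              ∏ ℓ ∈ Finset.univ.filter (· < p.2), (y m - y ℓ)) *
            ((∏ ℓ ∈ Finset.univ.filter (· ≤ p.1), (ξ ^ 2 - x ℓ ^ 2))⁻¹ *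
              ∮ η in C(0, R2), A ξ η *
                (∏ ℓ ∈ Finset.univ.filter (· ≤ p.2), (η - y ℓ))⁻¹)) := by
        rw [Fintype.sum_prod_type, Finset.mul_sum]
        refine Finset.sum_congr rfl fun j' _ => ?_
        rw [Finset.mul_sum, Finset.mul_sum]
        refine Finset.sum_congr rfl fun m' _ => ?_
        rw [step1 j' m', circleIntegral.integral_const_mul]
        ring
    _ = (tp ^ 2)⁻¹ * ∮ ξ in C(0, R1), ∑ p : Fin k × Fin k,
          ((x j * (∏ ℓ ∈ Finset.univ.filter (· < p.1), (x j ^ 2 - x ℓ ^ 2)) *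
              ∏ ℓ ∈ Finset.univ.filter (· < p.2), (y m - y ℓ)) *
            ((∏ ℓ ∈ Finset.univ.filter (· ≤ p.1), (ξ ^ 2 - x ℓ ^ 2))⁻¹ *
              ∮ η in C(0, R2), A ξ η *
                (∏ ℓ ∈ Finset.univ.filter (· ≤ p.2), (η - y ℓ))⁻¹)) := by
        rw [← Finset.mul_sum]
        congr 1
        refine (circleIntegral_sum' Finset.univ _ fun p _ => ?_).symm
        exact IntervalIntegrable.const_mul (int_xi p.1 p.2) _
    _ = (tp ^ 2)⁻¹ * ∮ ξ in C(0, R1),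
          tp * ((x j * (ξ ^ 2 - x j ^ 2)⁻¹) * A ξ (y m)) := by
        congr 1
        refine circleIntegral.integral_congr hR1pos.le fun ξ hξ => ?_
        have hξa : ‖ξ‖ = R1 := by simpa using hξ
        have htele : ∑ j' : Fin k,
            (∏ ℓ ∈ Finset.univ.filter (· < j'), (x j ^ 2 - x ℓ ^ 2)) *
              (∏ ℓ ∈ Finset.univ.filter (· ≤ j'), (ξ ^ 2 - x ℓ ^ 2))⁻¹
            = (ξ ^ 2 - x j ^ 2)⁻¹ := by
          have hz : ∀ ℓ : Fin k, ξ ^ 2 - (fun ℓ => x ℓ ^ 2) ℓ ≠ 0 := fun ℓ => hfacne ξ hξa ℓ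
          have h0 : ∏ ℓ : Fin k, (x j ^ 2 - (fun ℓ => x ℓ ^ 2) ℓ) = 0 :=
            Finset.prod_eq_zero (Finset.mem_univ j) (sub_self _)
          exact tele' (fun ℓ => x ℓ ^ 2) (x j ^ 2) (ξ ^ 2) hz h0
        have hinner := inner ξ hξa
        calc ∑ p : Fin k × Fin k,
              ((x j * (∏ ℓ ∈ Finset.univ.filter (· < p.1), (x j ^ 2 - x ℓ ^ 2)) *
                  ∏ ℓ ∈ Finset.univ.filter (· < p.2), (y m - y ℓ)) *
                ((∏ ℓ ∈ Finset.univ.filter (· ≤ p.1), (ξ ^ 2 - x ℓ ^ 2))⁻¹ *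
                  ∮ η in C(0, R2), A ξ η *
                    (∏ ℓ ∈ Finset.univ.filter (· ≤ p.2), (η - y ℓ))⁻¹))
            = x j * ((∑ j' : Fin k,
                (∏ ℓ ∈ Finset.univ.filter (· < j'), (x j ^ 2 - x ℓ ^ 2)) *
                  (∏ ℓ ∈ Finset.univ.filter (· ≤ j'), (ξ ^ 2 - x ℓ ^ 2))⁻¹) *
              (∑ m' : Fin k,
                (∏ ℓ ∈ Finset.univ.filter (· < m'), (y m - y ℓ)) *
                  (∮ η in C(0, R2), A ξ η *
                    (∏ ℓ ∈ Finset.univ.filter (· ≤ m'), (η - y ℓ))⁻¹))) := by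
              rw [Fintype.sum_mul_sum, Fintype.sum_prod_type, Finset.mul_sum]
              refine Finset.sum_congr rfl fun j' _ => ?_
              rw [Finset.mul_sum]
              exact Finset.sum_congr rfl fun m' _ => by ring
          _ = tp * ((x j * (ξ ^ 2 - x j ^ 2)⁻¹) * A ξ (y m)) := by
              rw [htele, hinner]; ring
    _ = (tp ^ 2)⁻¹ * (tp * ∮ ξ in C(0, R1),
          (x j * (ξ ^ 2 - x j ^ 2)⁻¹) * A ξ (y m)) := by
        rw [circleIntegral.integral_const_mul]
    _ = A (x j) (y m) := by
        rw [oddCauchy' hR1pos (fun ξ => A ξ (y m)) hslice1 (hx j)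
          (hodd (x j) (y m) (hxs j) (hys m))]
        rw [← htp]
        field_simp

lemma prod_pairs' {k : ℕ} (f : Fin k → Fin k → ℂ) :
    ∏ p ∈ Finset.univ.filter (fun p : Fin k × Fin k => p.1 < p.2), f p.1 p.2 =
      ∏ i : Fin k, ∏ jj ∈ Finset.Ioi i, f i jj := by
  rw [Finset.prod_filter, Fintype.prod_prod_type]
  refine Finset.prod_congr rfl fun i _ => ?_
  rw [← Finset.prod_filter]
  congr 1
  ext jj; simp

/-- Lemma `lem:det_factorisation_taylor`: factorisation of the
determinant of an analytic function of two variables which is odd in the first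
variable. -/
theorem det_factorisation_odd {k : ℕ} (hk : 0 < k) (R1s R2s : ℝ)
    (hR1s : 0 < R1s) (hR2s : 0 < R2s)
    (A : ℂ → ℂ → ℂ)
    (hA : AnalyticOnNhd ℂ (fun p : ℂ × ℂ => A p.1 p.2)
      {p : ℂ × ℂ | ‖p.1‖ < R1s ∧ ‖p.2‖ < R2s})
    (hodd : ∀ x y : ℂ, ‖x‖ < R1s → ‖y‖ < R2s → A (-x) y = -A x y)
    (x y : Fin k → ℂ) (R1 R2 : ℝ)
    (hx : ∀ j, ‖x j‖ < R1) (hR1 : R1 < R1s)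
    (hy : ∀ j, ‖y j‖ < R2) (hR2 : R2 < R2s) :
    Matrix.det (Matrix.of fun j m : Fin k => A (x j) (y m)) =
      (∏ j, x j) *
        (∏ p ∈ Finset.univ.filter (fun p : Fin k × Fin k => p.1 < p.2),
          ((x p.2 ^ 2 - x p.1 ^ 2) * (y p.2 - y p.1))) *
        Matrix.det (Matrix.of fun j m : Fin k =>
          ((2 * (Real.pi : ℂ) * Complex.I) ^ 2)⁻¹ *
            (∮ ξ in C(0, R1), (∮ η in C(0, R2),
              A ξ η / ((∏ ℓ ∈ Finset.univ.filter (· ≤ j), (ξ ^ 2 - x ℓ ^ 2)) *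
                ∏ ℓ ∈ Finset.univ.filter (· ≤ m), (η - y ℓ))))) := by
  classical
  have entry := entry_key R1s R2s A hA hodd x y R1 R2 hx hR1 hy hR2
  set L : Matrix (Fin k) (Fin k) ℂ := Matrix.of fun j j' : Fin k =>
    ∏ ℓ ∈ Finset.univ.filter (· < j'), (x j ^ 2 - x ℓ ^ 2) with hL
  set B : Matrix (Fin k) (Fin k) ℂ := Matrix.of fun j' m' : Fin k =>
    ((2 * (Real.pi : ℂ) * Complex.I) ^ 2)⁻¹ *
      (∮ ξ in C(0, R1), (∮ η in C(0, R2),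
        A ξ η / ((∏ ℓ ∈ Finset.univ.filter (· ≤ j'), (ξ ^ 2 - x ℓ ^ 2)) *
          ∏ ℓ ∈ Finset.univ.filter (· ≤ m'), (η - y ℓ)))) with hB
  set U : Matrix (Fin k) (Fin k) ℂ := Matrix.of fun m' m : Fin k =>
    ∏ ℓ ∈ Finset.univ.filter (· < m'), (y m - y ℓ) with hU
  have hM : (Matrix.of fun j m : Fin k => A (x j) (y m)) =
      Matrix.diagonal x * (L * (B * U)) := by
    ext j m
    rw [Matrix.of_apply, ← entry j m]
    rw [Matrix.diagonal_mul, Matrix.mul_apply]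
    congr 1
    refine Finset.sum_congr rfl fun j' _ => ?_
    rw [Matrix.mul_apply]
    rw [hL]
    simp only [Matrix.of_apply]
    congr 1
    refine Finset.sum_congr rfl fun m' _ => ?_
    rw [hB, hU]
    simp only [Matrix.of_apply]
    ring
  rw [hM, Matrix.det_mul, Matrix.det_mul, Matrix.det_mul, Matrix.det_diagonal]
  have hdetL : L.det = ∏ i : Fin k, ∏ jj ∈ Finset.Ioi i, (x jj ^ 2 - x i ^ 2) := by
    have := det_newton' (fun ℓ => x ℓ ^ 2)
    simpa [hL] using this
  have hdetU : U.det = ∏ i : Fin k, ∏ jj ∈ Finset.Ioi i, (y jj - y i) := by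
    have h1 : U = (Matrix.of fun mm m' : Fin k =>
        ∏ ℓ ∈ Finset.univ.filter (· < m'), (y mm - y ℓ)).transpose := by
      ext a b; rfl
    rw [h1, Matrix.det_transpose]
    exact det_newton' y
  rw [hdetL, hdetU]
  have hpairs : ∏ p ∈ Finset.univ.filter (fun p : Fin k × Fin k => p.1 < p.2),
      ((x p.2 ^ 2 - x p.1 ^ 2) * (y p.2 - y p.1)) =
      (∏ i : Fin k, ∏ jj ∈ Finset.Ioi i, (x jj ^ 2 - x i ^ 2)) *
        (∏ i : Fin k, ∏ jj ∈ Finset.Ioi i, (y jj - y i)) := by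
    rw [Finset.prod_mul_distrib]
    congr 1
    · exact prod_pairs' (fun a b => x b ^ 2 - x a ^ 2)
    · exact prod_pairs' (fun a b => y b - y a)
  rw [hpairs]
  ring
end

section
/- Let k ≥ 1, let 0 ≤ a ≤ k, and let u_1,…,u_k be real numbers with 0 < u_1 < u_2 < ⋯ < u_k. Let D be the determinant of the k×k matrix whose (j,m)-entry equals (−1)^m u_m^{j−1} if j ≤ a and u_m^{j−a−1} if j > a. Then (−1)^{a(a+1)/2} · D > 0; in particular D ≠ 0. -/
open scoped BigOperators

open Finset Matrix Module

private def cRow (k a : ℕ) (x : ℝ) : Fin k → ℝ := fun j => if (j : ℕ) < a then x ^ (j : ℕ) else 0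

private def dRow (k a : ℕ) (x : ℝ) : Fin k → ℝ :=
  fun j => if (j : ℕ) < a then 0 else x ^ ((j : ℕ) - a)

private def PMat (k a : ℕ) (u : Fin k → ℝ) (S : Finset (Fin k)) : Matrix (Fin k) (Fin k) ℝ :=
  Matrix.of (S.piecewise (fun m => cRow k a (u m)) (fun m => dRow k a (u m)))

private lemma detM_expand (k a : ℕ) (u : Fin k → ℝ) :
    (Matrix.of fun j m : Fin k =>
        if (j : ℕ) < a then (-1 : ℝ) ^ ((m : ℕ) + 1) * u m ^ (j : ℕ)
        else u m ^ ((j : ℕ) - a)).det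
      = ∑ S : Finset (Fin k),
          (∏ m ∈ S, (-1 : ℝ) ^ ((m : ℕ) + 1)) * (PMat k a u S).det := by
  classical
  set ε : Fin k → ℝ := fun m => (-1 : ℝ) ^ ((m : ℕ) + 1) with hε
  set A : Fin k → (Fin k → ℝ) := fun m => ε m • cRow k a (u m) with hA
  set B : Fin k → (Fin k → ℝ) := fun m => dRow k a (u m) with hB
  rw [← Matrix.det_transpose]
  have hT : (Matrix.of fun j m : Fin k =>
        if (j : ℕ) < a then (-1 : ℝ) ^ ((m : ℕ) + 1) * u m ^ (j : ℕ)
        else u m ^ ((j : ℕ) - a))ᵀ = Matrix.of (A + B) := by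
    ext m j
    simp only [Matrix.transpose_apply, Matrix.of_apply, hA, hB, Pi.add_apply, Pi.smul_apply,
      smul_eq_mul, cRow, dRow, hε]
    by_cases hj : (j : ℕ) < a <;> simp [hj]
  rw [hT]
  have expand := MultilinearMap.map_add_univ
    (Matrix.detRowAlternating (R := ℝ) (n := Fin k)).toMultilinearMap A B
  have hstep : (Matrix.of (A + B)).det = ∑ S : Finset (Fin k), (Matrix.of (S.piecewise A B)).det :=
    expand
  rw [hstep]
  refine Finset.sum_congr rfl fun S _ => ?_
  have h1 : S.piecewise A B
      = S.piecewise (fun m => ε m • (S.piecewise (fun m => cRow k a (u m)) B) m)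
          (S.piecewise (fun m => cRow k a (u m)) B) := by
    funext m
    by_cases hm : m ∈ S <;>
      simp [Finset.piecewise_eq_of_mem _ _ _ , Finset.piecewise_eq_of_notMem, hm, hA,
        Finset.piecewise_eq_of_mem]
  have h2 := MultilinearMap.map_piecewise_smul
    (Matrix.detRowAlternating (R := ℝ) (n := Fin k)).toMultilinearMap ε
    (S.piecewise (fun m => cRow k a (u m)) B) S
  have h3 : (Matrix.of (S.piecewise A B)).det
      = (∏ m ∈ S, ε m) • (PMat k a u S).det := by
    rw [show (Matrix.of (S.piecewise A B)).det
        = Matrix.detRowAlternating (S.piecewise A B) from rfl, h1]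
    exact h2
  rw [h3, smul_eq_mul]

private lemma not_li_of_span {n N : ℕ} {ι : Type*} [Fintype ι] (v : ι → (Fin n → ℝ))
    (T : Finset ι) (w : Fin N → (Fin n → ℝ))
    (hmem : ∀ m ∈ T, v m ∈ Submodule.span ℝ (Set.range w)) (hcard : N < T.card) :
    ¬ LinearIndependent ℝ v := by
  intro hli
  set W := Submodule.span ℝ (Set.range w) with hW
  have hli2 : LinearIndependent ℝ (fun m : ↥T => v m) :=
    hli.comp (Subtype.val : ↥T → ι) Subtype.val_injective
  let bfun : ↥T → ↥W := fun m => ⟨v m, hmem m m.2⟩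
  have hlib : LinearIndependent ℝ bfun := by
    apply LinearIndependent.of_comp W.subtype
    exact hli2
  have hc := hlib.fintype_card_le_finrank
  have hWle : finrank ℝ W ≤ N := by
    have := finrank_range_le_card (R := ℝ) w
    simpa [Set.finrank, Fintype.card_fin] using this
  rw [Fintype.card_coe] at hc
  omega

private lemma PMat_det_zero (k a : ℕ) (ha : a ≤ k) (u : Fin k → ℝ) (S : Finset (Fin k))
    (hcard : S.card ≠ a) : (PMat k a u S).det = 0 := by
  classical
  have hrow : ∀ m, (PMat k a u S) m = S.piecewise (fun m => cRow k a (u m))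
      (fun m => dRow k a (u m)) m := fun m => rfl
  have hcS : S.card ≤ k := by
    simpa using Finset.card_le_card (Finset.subset_univ S)
  refine AlternatingMap.map_linearDependent (Matrix.detRowAlternating (R := ℝ) (n := Fin k))
    _ ?_
  rcases lt_or_gt_of_ne hcard with hlt | hgt
  · -- S.card < a : rows in Sᶜ live in span of basis vectors with index ≥ a
    refine not_li_of_span _ Sᶜ
      (fun j : Fin (k - a) => (Pi.single (⟨a + (j : ℕ), by omega⟩ : Fin k) (1 : ℝ) : Fin k → ℝ)) ?_ ?_
    · intro m hm
      have hms : m ∉ S := by simpa using hm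
      have hrow' : (PMat k a u S) m = dRow k a (u m) := by
        simp only [PMat]
        exact Finset.piecewise_eq_of_notMem S (fun m => cRow k a (u m)) (fun m => dRow k a (u m)) hms
      rw [hrow']
      have hd : dRow k a (u m) = ∑ j : Fin (k - a),
          (u m) ^ (j : ℕ) • (Pi.single (⟨a + (j : ℕ), by omega⟩ : Fin k) (1 : ℝ) : Fin k → ℝ) := by
        funext j'
        simp only [dRow, Finset.sum_apply, Pi.smul_apply, smul_eq_mul]
        by_cases hj' : (j' : ℕ) < a
        · rw [if_pos hj']
          apply (Finset.sum_eq_zero ?_).symm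
          intro j _
          rw [Pi.single_apply, if_neg, mul_zero]
          intro h
          have := congrArg Fin.val h
          simp at this
          omega
        · rw [if_neg hj']
          have hj'a : a ≤ (j' : ℕ) := le_of_not_gt hj'
          have hj'k : (j' : ℕ) - a < k - a := by have := j'.2; omega
          rw [Finset.sum_eq_single (⟨(j' : ℕ) - a, hj'k⟩ : Fin (k - a))]
          · rw [Pi.single_apply, if_pos, mul_one]
            apply Fin.ext
            simp
            omega
          · intro j _ hj
            rw [Pi.single_apply, if_neg, mul_zero]
            intro h
            apply hj
            apply Fin.ext
            have := congrArg Fin.val h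
            simp at this ⊢
            omega
          · intro h
            exact absurd (Finset.mem_univ _) h
      rw [hd]
      exact Submodule.sum_mem _ fun j _ =>
        Submodule.smul_mem _ _ (Submodule.subset_span ⟨j, rfl⟩)
    · rw [Finset.card_compl, Fintype.card_fin]
      omega
  · -- a < S.card : rows in S live in span of basis vectors with index < a
    refine not_li_of_span _ S
      (fun j : Fin a => (Pi.single (⟨(j : ℕ), by omega⟩ : Fin k) (1 : ℝ) : Fin k → ℝ)) ?_ ?_
    · intro m hm
      have hrow' : (PMat k a u S) m = cRow k a (u m) := by
        simp only [PMat]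
        exact Finset.piecewise_eq_of_mem S (fun m => cRow k a (u m)) (fun m => dRow k a (u m)) hm
      rw [hrow']
      have hd : cRow k a (u m) = ∑ j : Fin a,
          (u m) ^ (j : ℕ) • (Pi.single (⟨(j : ℕ), by omega⟩ : Fin k) (1 : ℝ) : Fin k → ℝ) := by
        funext j'
        simp only [cRow, Finset.sum_apply, Pi.smul_apply, smul_eq_mul]
        by_cases hj' : (j' : ℕ) < a
        · rw [if_pos hj']
          rw [Finset.sum_eq_single (⟨(j' : ℕ), hj'⟩ : Fin a)]
          · rw [Pi.single_apply, if_pos, mul_one]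
            apply Fin.ext
            simp
          · intro j _ hj
            rw [Pi.single_apply, if_neg, mul_zero]
            intro h
            apply hj
            apply Fin.ext
            have := congrArg Fin.val h
            simp at this ⊢
            omega
          · intro h
            exact absurd (Finset.mem_univ _) h
        · rw [if_neg hj']
          apply (Finset.sum_eq_zero ?_).symm
          intro j _
          rw [Pi.single_apply, if_neg, mul_zero]
          intro h
          have := congrArg Fin.val h
          simp at this
          omega
      rw [hd]
      exact Submodule.sum_mem _ fun j _ =>
        Submodule.smul_mem _ _ (Submodule.subset_span ⟨j, rfl⟩)
    · omega

private noncomputable def blockEquiv {k a b : ℕ} (S : Finset (Fin k)) (hS : S.card = a) (hcS : Sᶜ.card = b) :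
    (Fin a ⊕ Fin b) ≃ Fin k :=
  Equiv.ofBijective
    (Sum.elim (fun r => S.orderEmbOfFin hS r) (fun r => Sᶜ.orderEmbOfFin hcS r)) <| by
  constructor
  · rintro (r | r) (s | s) h <;> simp only [Sum.elim_inl, Sum.elim_inr] at h
    · exact congrArg Sum.inl ((S.orderEmbOfFin hS).injective h)
    · exfalso
      have h1 := Finset.orderEmbOfFin_mem S hS r
      have h2 := Finset.orderEmbOfFin_mem Sᶜ hcS s
      rw [← h] at h2
      exact (Finset.mem_compl.1 h2) h1
    · exfalso
      have h1 := Finset.orderEmbOfFin_mem S hS s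
      have h2 := Finset.orderEmbOfFin_mem Sᶜ hcS r
      rw [h] at h2
      exact (Finset.mem_compl.1 h2) h1
    · exact congrArg Sum.inr ((Sᶜ.orderEmbOfFin hcS).injective h)
  · intro x
    by_cases hx : x ∈ S
    · have : x ∈ Set.range (S.orderEmbOfFin hS) := by
        rw [Finset.range_orderEmbOfFin]; exact hx
      obtain ⟨r, hr⟩ := this
      exact ⟨Sum.inl r, hr⟩
    · have : x ∈ Set.range (Sᶜ.orderEmbOfFin hcS) := by
        rw [Finset.range_orderEmbOfFin]; simpa using hx
      obtain ⟨r, hr⟩ := this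
      exact ⟨Sum.inr r, hr⟩

private lemma blockEquiv_inl {k a b : ℕ} (S : Finset (Fin k)) (hS : S.card = a)
    (hcS : Sᶜ.card = b) (r : Fin a) : blockEquiv S hS hcS (Sum.inl r) = S.orderEmbOfFin hS r := rfl

private lemma blockEquiv_inr {k a b : ℕ} (S : Finset (Fin k)) (hS : S.card = a)
    (hcS : Sᶜ.card = b) (r : Fin b) : blockEquiv S hS hcS (Sum.inr r) = Sᶜ.orderEmbOfFin hcS r :=
  rfl

private noncomputable def shuffle {k : ℕ} (a b : ℕ) (hab : a + b = k) (S : Finset (Fin k)) (hS : S.card = a)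
    (hcS : Sᶜ.card = b) : Equiv.Perm (Fin k) :=
  (finSumFinEquiv.trans (finCongr hab)).symm.trans (blockEquiv S hS hcS)

private lemma PMat_det_eq (k a b : ℕ) (hab : a + b = k) (u : Fin k → ℝ) (S : Finset (Fin k))
    (hS : S.card = a) (hcS : Sᶜ.card = b) :
    (PMat k a u S).det
      = ((Equiv.Perm.sign (shuffle a b hab S hS hcS) : ℤ) : ℝ)
        * ((Matrix.vandermonde fun r : Fin a => u (S.orderEmbOfFin hS r)).det
          * (Matrix.vandermonde fun r : Fin b => u (Sᶜ.orderEmbOfFin hcS r)).det) := by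
  classical
  set g := blockEquiv S hS hcS with hg
  set e := finSumFinEquiv.trans (finCongr hab) with he
  set Q := (PMat k a u S).submatrix g e with hQ
  have h0 : PMat k a u S = Q.submatrix g.symm e.symm := by
    rw [hQ, Matrix.submatrix_submatrix]
    simp [Equiv.self_comp_symm]
  have h1 : Q.submatrix g.symm e.symm
      = (Q.submatrix g.symm g.symm).submatrix id (shuffle a b hab S hS hcS) := by
    ext i j
    simp only [Matrix.submatrix_apply, id_eq]
    have hj : (shuffle a b hab S hS hcS) j = g (e.symm j) := rfl
    rw [hj, Equiv.symm_apply_apply]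
  have h2 : Q = Matrix.fromBlocks
      (Matrix.vandermonde fun r : Fin a => u (S.orderEmbOfFin hS r)) 0 0
      (Matrix.vandermonde fun r : Fin b => u (Sᶜ.orderEmbOfFin hcS r)) := by
    ext i j
    rcases i with r | r <;> rcases j with s | s
    · have hmem : (g (Sum.inl r)) ∈ S := by
        rw [hg, blockEquiv_inl]; exact Finset.orderEmbOfFin_mem S hS r
      have hcol : ((e (Sum.inl s)) : ℕ) = (s : ℕ) := by simp [he]
      simp only [hQ, Matrix.submatrix_apply, Matrix.fromBlocks_apply₁₁]
      show (PMat k a u S) (g (Sum.inl r)) (e (Sum.inl s)) = _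
      rw [show (PMat k a u S) (g (Sum.inl r)) = cRow k a (u (g (Sum.inl r))) from
        Finset.piecewise_eq_of_mem S (fun m => cRow k a (u m)) (fun m => dRow k a (u m)) hmem]
      simp only [cRow, hcol, Matrix.vandermonde]
      rw [if_pos (by omega : (s : ℕ) < a)]
      rw [hg, blockEquiv_inl]
      simp
    · have hmem : (g (Sum.inl r)) ∈ S := by
        rw [hg, blockEquiv_inl]; exact Finset.orderEmbOfFin_mem S hS r
      have hcol : ((e (Sum.inr s)) : ℕ) = a + (s : ℕ) := by simp [he]
      simp only [hQ, Matrix.submatrix_apply, Matrix.fromBlocks_apply₁₂]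
      show (PMat k a u S) (g (Sum.inl r)) (e (Sum.inr s)) = _
      rw [show (PMat k a u S) (g (Sum.inl r)) = cRow k a (u (g (Sum.inl r))) from
        Finset.piecewise_eq_of_mem S (fun m => cRow k a (u m)) (fun m => dRow k a (u m)) hmem]
      simp only [cRow, hcol]
      rw [if_neg (by omega)]
      rfl
    · have hmem : (g (Sum.inr r)) ∉ S := by
        rw [hg, blockEquiv_inr]
        exact Finset.mem_compl.1 (Finset.orderEmbOfFin_mem Sᶜ hcS r)
      have hcol : ((e (Sum.inl s)) : ℕ) = (s : ℕ) := by simp [he]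
      simp only [hQ, Matrix.submatrix_apply, Matrix.fromBlocks_apply₂₁]
      show (PMat k a u S) (g (Sum.inr r)) (e (Sum.inl s)) = _
      rw [show (PMat k a u S) (g (Sum.inr r)) = dRow k a (u (g (Sum.inr r))) from
        Finset.piecewise_eq_of_notMem S (fun m => cRow k a (u m)) (fun m => dRow k a (u m)) hmem]
      simp only [dRow, hcol]
      rw [if_pos (by omega : (s : ℕ) < a)]
      rfl
    · have hmem : (g (Sum.inr r)) ∉ S := by
        rw [hg, blockEquiv_inr]
        exact Finset.mem_compl.1 (Finset.orderEmbOfFin_mem Sᶜ hcS r)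
      have hcol : ((e (Sum.inr s)) : ℕ) = a + (s : ℕ) := by simp [he]
      simp only [hQ, Matrix.submatrix_apply, Matrix.fromBlocks_apply₂₂]
      show (PMat k a u S) (g (Sum.inr r)) (e (Sum.inr s)) = _
      rw [show (PMat k a u S) (g (Sum.inr r)) = dRow k a (u (g (Sum.inr r))) from
        Finset.piecewise_eq_of_notMem S (fun m => cRow k a (u m)) (fun m => dRow k a (u m)) hmem]
      simp only [dRow, hcol, Matrix.vandermonde]
      rw [if_neg (by omega)]
      rw [hg, blockEquiv_inr]
      simp
  calc (PMat k a u S).det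
      = ((Q.submatrix g.symm g.symm).submatrix id (shuffle a b hab S hS hcS)).det := by
        rw [← h1, ← h0]
    _ = (Equiv.Perm.sign (shuffle a b hab S hS hcS) : ℝ) * (Q.submatrix g.symm g.symm).det :=
        Matrix.det_permute' _ _
    _ = ((Equiv.Perm.sign (shuffle a b hab S hS hcS) : ℤ) : ℝ)
        * ((Matrix.vandermonde fun r : Fin a => u (S.orderEmbOfFin hS r)).det
          * (Matrix.vandermonde fun r : Fin b => u (Sᶜ.orderEmbOfFin hcS r)).det) := by
        rw [Matrix.det_submatrix_equiv_self, h2, Matrix.det_fromBlocks_zero₁₂]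

private lemma shuffle_sign {k : ℕ} (a b : ℕ) (hab : a + b = k) :
    ∀ (n : ℕ) (S : Finset (Fin k)) (hS : S.card = a) (hcS : Sᶜ.card = b),
      (∑ m ∈ S, (m : ℕ)) = n →
      ((Equiv.Perm.sign (shuffle a b hab S hS hcS) : ℤ))
        = (-1) ^ ((∑ m ∈ S, (m : ℕ)) + a * (a - 1) / 2) := by
  intro n
  induction n using Nat.strong_induction_on with
  | _ n IH =>
  intro S hS hcS hw
  have ha' : a ≤ k := by omega
  have hb : b = k - a := by rw [← hcS, Finset.card_compl, Fintype.card_fin, hS]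
  by_cases hdesc : ∃ i : Fin k, i ∉ S ∧ ∃ h : (i : ℕ) + 1 < k, (⟨(i : ℕ) + 1, h⟩ : Fin k) ∈ S
  · -- inductive step: swap an adjacent pair
    obtain ⟨i, hiS, hik, hi1S⟩ := hdesc
    set i₁ : Fin k := ⟨(i : ℕ) + 1, hik⟩ with hi₁
    have hne : i ≠ i₁ := by
      intro h
      have := congrArg Fin.val h
      simp [hi₁] at this
    set S' := insert i (S.erase i₁) with hS'def
    have hiE : i ∉ S.erase i₁ := fun h => hiS (Finset.mem_of_mem_erase h)
    have hiS' : i ∈ S' := Finset.mem_insert_self _ _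
    have hi1S' : i₁ ∉ S' := by
      rw [hS'def, Finset.mem_insert]
      rintro (h | h)
      · exact hne h.symm
      · exact (Finset.ne_of_mem_erase h) rfl
    have hapos : 0 < a := by rw [← hS]; exact Finset.card_pos.2 ⟨i₁, hi1S⟩
    have hcard' : S'.card = a := by
      rw [hS'def, Finset.card_insert_of_notMem hiE, Finset.card_erase_of_mem hi1S, hS]
      omega
    have hccard' : S'ᶜ.card = b := by
      rw [Finset.card_compl, Fintype.card_fin, hcard']
      omega
    have hw' : (∑ m ∈ S', (m : ℕ)) + 1 = ∑ m ∈ S, (m : ℕ) := by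
      conv_rhs => rw [show S = insert i₁ (S.erase i₁) from (Finset.insert_erase hi1S).symm]
      rw [hS'def, Finset.sum_insert hiE, Finset.sum_insert (Finset.notMem_erase _ _)]
      simp [hi₁]
      omega
    -- order embeddings are related by the swap
    have hswapS : ∀ r : Fin a, S.orderEmbOfFin hS r
        = Equiv.swap i i₁ (S'.orderEmbOfFin hcard' r) := by
      have key := Finset.orderEmbOfFin_unique hS
        (f := fun r : Fin a => Equiv.swap i i₁ (S'.orderEmbOfFin hcard' r)) ?_ ?_
      · exact fun r => (congrFun key r).symm
      · intro r
        beta_reduce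
        have hx : S'.orderEmbOfFin hcard' r ∈ S' := Finset.orderEmbOfFin_mem _ _ _
        set x := S'.orderEmbOfFin hcard' r with hxdef
        by_cases hxi : x = i
        · rw [hxi, Equiv.swap_apply_left]; exact hi1S
        · have hxE : x ∈ S.erase i₁ := by
            rcases Finset.mem_insert.1 (hS'def ▸ hx) with h | h
            · exact absurd h hxi
            · exact h
          rw [Equiv.swap_apply_of_ne_of_ne hxi (Finset.ne_of_mem_erase hxE)]
          exact Finset.mem_of_mem_erase hxE
      · intro r s hrs
        beta_reduce
        have hxy : S'.orderEmbOfFin hcard' r < S'.orderEmbOfFin hcard' s :=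
          (S'.orderEmbOfFin hcard').strictMono hrs
        set x := S'.orderEmbOfFin hcard' r with hxdef
        set y := S'.orderEmbOfFin hcard' s with hydef
        have hxS' : x ∈ S' := Finset.orderEmbOfFin_mem _ _ _
        have hyS' : y ∈ S' := Finset.orderEmbOfFin_mem _ _ _
        have hx1 : x ≠ i₁ := fun h => hi1S' (h ▸ hxS')
        have hy1 : y ≠ i₁ := fun h => hi1S' (h ▸ hyS')
        have hv : (x : ℕ) < (y : ℕ) := hxy
        have hx1v : (x : ℕ) ≠ (i : ℕ) + 1 := fun h => hx1 (Fin.ext (by simp [hi₁, h]))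
        have hy1v : (y : ℕ) ≠ (i : ℕ) + 1 := fun h => hy1 (Fin.ext (by simp [hi₁, h]))
        rcases eq_or_ne x i with hxi | hxi <;> rcases eq_or_ne y i with hyi | hyi
        · exact absurd (hxi ▸ hyi ▸ hxy) (lt_irrefl _)
        · rw [hxi, Equiv.swap_apply_left, Equiv.swap_apply_of_ne_of_ne hyi hy1]
          rw [Fin.lt_def]
          have : (i : ℕ) < (y : ℕ) := by rw [← hxi]; exact hv
          simp only [hi₁]
          omega
        · rw [hyi, Equiv.swap_apply_left, Equiv.swap_apply_of_ne_of_ne hxi hx1]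
          rw [Fin.lt_def]
          have : (x : ℕ) < (i : ℕ) := by rw [← hyi]; exact hv
          simp only [hi₁]
          omega
        · rw [Equiv.swap_apply_of_ne_of_ne hxi hx1, Equiv.swap_apply_of_ne_of_ne hyi hy1]
          exact hxy
    have hswapC : ∀ r : Fin b, Sᶜ.orderEmbOfFin hcS r
        = Equiv.swap i i₁ (S'ᶜ.orderEmbOfFin hccard' r) := by
      have key := Finset.orderEmbOfFin_unique hcS
        (f := fun r : Fin b => Equiv.swap i i₁ (S'ᶜ.orderEmbOfFin hccard' r)) ?_ ?_
      · exact fun r => (congrFun key r).symm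
      · intro r
        beta_reduce
        have hx : S'ᶜ.orderEmbOfFin hccard' r ∈ S'ᶜ := Finset.orderEmbOfFin_mem _ _ _
        set x := S'ᶜ.orderEmbOfFin hccard' r with hxdef
        have hxS' : x ∉ S' := Finset.mem_compl.1 hx
        have hxi : x ≠ i := fun h => hxS' (h ▸ hiS')
        by_cases hx1 : x = i₁
        · rw [hx1, Equiv.swap_apply_right]
          exact Finset.mem_compl.2 hiS
        · rw [Equiv.swap_apply_of_ne_of_ne hxi hx1]
          refine Finset.mem_compl.2 fun hxS => ?_
          exact hxS' (hS'def ▸ Finset.mem_insert_of_mem (Finset.mem_erase.2 ⟨hx1, hxS⟩))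
      · intro r s hrs
        beta_reduce
        have hxy : S'ᶜ.orderEmbOfFin hccard' r < S'ᶜ.orderEmbOfFin hccard' s :=
          (S'ᶜ.orderEmbOfFin hccard').strictMono hrs
        set x := S'ᶜ.orderEmbOfFin hccard' r with hxdef
        set y := S'ᶜ.orderEmbOfFin hccard' s with hydef
        have hxS' : x ∉ S' := Finset.mem_compl.1 (Finset.orderEmbOfFin_mem _ _ _)
        have hyS' : y ∉ S' := Finset.mem_compl.1 (Finset.orderEmbOfFin_mem _ _ _)
        have hxi : x ≠ i := fun h => hxS' (h ▸ hiS')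
        have hyi : y ≠ i := fun h => hyS' (h ▸ hiS')
        have hv : (x : ℕ) < (y : ℕ) := hxy
        have hxiv : (x : ℕ) ≠ (i : ℕ) := fun h => hxi (Fin.ext h)
        have hyiv : (y : ℕ) ≠ (i : ℕ) := fun h => hyi (Fin.ext h)
        rcases eq_or_ne x i₁ with hx1 | hx1 <;> rcases eq_or_ne y i₁ with hy1 | hy1
        · exact absurd (hx1 ▸ hy1 ▸ hxy) (lt_irrefl _)
        · rw [hx1, Equiv.swap_apply_right, Equiv.swap_apply_of_ne_of_ne hyi hy1]
          rw [Fin.lt_def]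
          have : ((i₁ : Fin k) : ℕ) < (y : ℕ) := by rw [← hx1]; exact hv
          simp only [hi₁] at this ⊢
          omega
        · rw [hy1, Equiv.swap_apply_right, Equiv.swap_apply_of_ne_of_ne hxi hx1]
          rw [Fin.lt_def]
          have : (x : ℕ) < ((i₁ : Fin k) : ℕ) := by rw [← hy1]; exact hv
          have hx1v : (x : ℕ) ≠ (i : ℕ) + 1 := fun h => hx1 (Fin.ext (by simp [hi₁, h]))
          simp only [hi₁] at this ⊢
          omega
        · rw [Equiv.swap_apply_of_ne_of_ne hxi hx1, Equiv.swap_apply_of_ne_of_ne hyi hy1]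
          exact hxy
    have hperm : shuffle a b hab S hS hcS
        = Equiv.swap i i₁ * shuffle a b hab S' hcard' hccard' := by
      apply Equiv.ext
      intro j
      rw [Equiv.Perm.mul_apply]
      show blockEquiv S hS hcS ((finSumFinEquiv.trans (finCongr hab)).symm j)
        = Equiv.swap i i₁ (blockEquiv S' hcard' hccard'
            ((finSumFinEquiv.trans (finCongr hab)).symm j))
      rcases (finSumFinEquiv.trans (finCongr hab)).symm j with r | r
      · rw [blockEquiv_inl, blockEquiv_inl, hswapS r]
      · rw [blockEquiv_inr, blockEquiv_inr, hswapC r]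
    have hIH := IH (∑ m ∈ S', (m : ℕ)) (by omega) S' hcard' hccard' rfl
    rw [hperm, Equiv.Perm.sign_mul, Equiv.Perm.sign_swap hne]
    rw [Units.val_mul, hIH]
    have hexp : (∑ m ∈ S, (m : ℕ)) + a * (a - 1) / 2
        = ((∑ m ∈ S', (m : ℕ)) + a * (a - 1) / 2) + 1 := by omega
    rw [hexp, pow_succ]
    push_cast
    ring
  · -- base case: S is the initial segment
    push_neg at hdesc
    have step : ∀ (v : ℕ) (h : v + 1 < k), (⟨v + 1, h⟩ : Fin k) ∈ S →
        (⟨v, by omega⟩ : Fin k) ∈ S := by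
      intro v h hm
      by_contra hnot
      exact hdesc ⟨v, by omega⟩ hnot h hm
    have closure : ∀ (d r : ℕ) (h : r + d < k), (⟨r + d, h⟩ : Fin k) ∈ S →
        (⟨r, by omega⟩ : Fin k) ∈ S := by
      intro d
      induction d with
      | zero => intro r h hm; exact hm
      | succ d IHd =>
        intro r h hm
        exact IHd r (by omega) (step (r + d) h hm)
    have hiff : ∀ m : Fin k, m ∈ S ↔ (m : ℕ) < a := by
      intro m
      constructor
      · intro hm
        by_contra hma
        push_neg at hma
        have hsub : Finset.Iic m ⊆ S := by
          intro x hx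
          have hxm0 : x ≤ m := Finset.mem_Iic.1 hx
          have hxm : (x : ℕ) ≤ (m : ℕ) := hxm0
          have hm' : (⟨(x : ℕ) + ((m : ℕ) - (x : ℕ)), by omega⟩ : Fin k) ∈ S := by
            rw [show (⟨(x : ℕ) + ((m : ℕ) - (x : ℕ)), by omega⟩ : Fin k) = m from
              Fin.ext (by simp; omega)]
            exact hm
          have := closure ((m : ℕ) - (x : ℕ)) (x : ℕ) (by omega) hm'
          rwa [show (⟨(x : ℕ), by omega⟩ : Fin k) = x from Fin.ext rfl] at this
        have hcard := Finset.card_le_card hsub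
        rw [hS, Fin.card_Iic] at hcard
        omega
      · intro hma
        by_contra hm
        have hsub : S ⊆ Finset.Iio m := by
          intro x hx
          rw [Finset.mem_Iio]
          by_contra hxm
          push_neg at hxm
          apply hm
          have hxm' : (m : ℕ) ≤ (x : ℕ) := hxm
          have hm' : (⟨(m : ℕ) + ((x : ℕ) - (m : ℕ)), by omega⟩ : Fin k) ∈ S := by
            rw [show (⟨(m : ℕ) + ((x : ℕ) - (m : ℕ)), by omega⟩ : Fin k) = x from
              Fin.ext (by simp; omega)]
            exact hx
          have := closure ((x : ℕ) - (m : ℕ)) (m : ℕ) (by omega) hm'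
          rwa [show (⟨(m : ℕ), by omega⟩ : Fin k) = m from Fin.ext rfl] at this
        have hcard := Finset.card_le_card hsub
        rw [hS, Fin.card_Iio] at hcard
        omega
    have hembS : S.orderEmbOfFin hS = fun r : Fin a => (⟨(r : ℕ), by omega⟩ : Fin k) := by
      refine (Finset.orderEmbOfFin_unique hS ?_ ?_).symm
      · intro x
        rw [hiff]
        simp
      · intro x y hxy
        rw [Fin.lt_def]
        exact hxy
    have hembC : Sᶜ.orderEmbOfFin hcS = fun r : Fin b => (⟨a + (r : ℕ), by omega⟩ : Fin k) := by
      refine (Finset.orderEmbOfFin_unique hcS ?_ ?_).symm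
      · intro x
        rw [Finset.mem_compl, hiff]
        simp
      · intro x y hxy
        rw [Fin.lt_def]
        simp only
        omega
    have hshuffle : shuffle a b hab S hS hcS = Equiv.refl (Fin k) := by
      apply Equiv.ext
      intro j
      show blockEquiv S hS hcS ((finSumFinEquiv.trans (finCongr hab)).symm j) = j
      conv_rhs => rw [show j = (finSumFinEquiv.trans (finCongr hab))
        ((finSumFinEquiv.trans (finCongr hab)).symm j) from (Equiv.apply_symm_apply _ _).symm]
      rcases (finSumFinEquiv.trans (finCongr hab)).symm j with r | r
      · rw [blockEquiv_inl, congrFun hembS r]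
        apply Fin.ext
        simp
      · rw [blockEquiv_inr, congrFun hembC r]
        apply Fin.ext
        simp
    have hwval : (∑ m ∈ S, (m : ℕ)) = a * (a - 1) / 2 := by
      have himg : S = Finset.image (fun r : Fin a => (⟨(r : ℕ), by omega⟩ : Fin k))
          Finset.univ := by
        ext m
        simp only [Finset.mem_image, Finset.mem_univ, true_and, hiff]
        constructor
        · intro hma
          exact ⟨⟨(m : ℕ), hma⟩, Fin.ext rfl⟩
        · rintro ⟨r, rfl⟩
          exact r.2
      rw [himg, Finset.sum_image (by intro x _ y _ h; exact Fin.ext (by simpa using congrArg Fin.val h))]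
      simp only
      rw [Fin.sum_univ_eq_sum_range (fun i => i) a, Finset.sum_range_id]
    rw [hshuffle, Equiv.Perm.sign_refl, hwval]
    rw [show a * (a - 1) / 2 + a * (a - 1) / 2 = 2 * (a * (a - 1) / 2) from by omega]
    rw [pow_mul]
    norm_num

private lemma tri_eq (a : ℕ) : a + a * (a - 1) / 2 = a * (a + 1) / 2 := by
  rcases a with _ | n
  · rfl
  · simp only [Nat.add_sub_cancel]
    have hB : (n + 1) * (n + 1 + 1) = (n + 1) * n + 2 * (n + 1) := by ring
    have hA : 2 ∣ (n + 1) * n := by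
      have := Nat.even_mul_succ_self n
      rw [mul_comm] at this
      exact this.two_dvd
    generalize hA' : (n + 1) * n = A at *
    generalize hB' : (n + 1) * (n + 1 + 1) = B at *
    omega

/-- Lemma `lem:non_zero_det_vandermondelike`: for
`0 < u₁ < ⋯ < u_k`, the Vandermonde-like block determinant with entries
`(-1)^m u_m^{j-1}` (for rows `j ≤ a`) and `u_m^{j-a-1}` (for rows `j > a`) is nonzero;
more precisely, `(-1)^{a(a+1)/2} D > 0`. (Indices below are 0-based.) -/
theorem vandermonde_like_det_ne_zero (k : ℕ) (hk : 0 < k) (a : ℕ) (ha : a ≤ k)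
    (u : Fin k → ℝ) (hupos : ∀ j, 0 < u j) (humono : StrictMono u) :
    0 < (-1 : ℝ) ^ (a * (a + 1) / 2) *
        Matrix.det (Matrix.of fun j m : Fin k =>
          if (j : ℕ) < a then (-1 : ℝ) ^ ((m : ℕ) + 1) * u m ^ (j : ℕ)
          else u m ^ ((j : ℕ) - a)) ∧
      Matrix.det (Matrix.of fun j m : Fin k =>
          if (j : ℕ) < a then (-1 : ℝ) ^ ((m : ℕ) + 1) * u m ^ (j : ℕ)
          else u m ^ ((j : ℕ) - a)) ≠ 0 := by
  classical
  set b := k - a with hbdef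
  have hab : a + b = k := by omega
  set D := Matrix.det (Matrix.of fun j m : Fin k =>
      if (j : ℕ) < a then (-1 : ℝ) ^ ((m : ℕ) + 1) * u m ^ (j : ℕ)
      else u m ^ ((j : ℕ) - a)) with hDdef
  set e := a * (a + 1) / 2 with hedef
  set T := Finset.univ.filter (fun S : Finset (Fin k) => S.card = a) with hTdef
  set term : Finset (Fin k) → ℝ :=
    fun S => (∏ m ∈ S, (-1 : ℝ) ^ ((m : ℕ) + 1)) * (PMat k a u S).det with htermdef
  have hD : D = ∑ S ∈ T, term S := by
    rw [hDdef, detM_expand k a u, hTdef]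
    rw [Finset.sum_filter_of_ne]
    intro S _ hne
    by_contra hcard
    exact hne (by rw [htermdef]; simp [PMat_det_zero k a ha u S hcard])
  have key : ∀ S ∈ T, ∃ v : ℝ, 0 < v ∧ term S = (-1 : ℝ) ^ e * v := by
    intro S hST
    have hS : S.card = a := (Finset.mem_filter.1 hST).2
    have hcS : Sᶜ.card = b := by rw [Finset.card_compl, Fintype.card_fin, hS]
    have hdet := PMat_det_eq k a b hab u S hS hcS
    have hsign := shuffle_sign a b hab (∑ m ∈ S, (m : ℕ)) S hS hcS rfl
    have hv1 : 0 < (Matrix.vandermonde fun r : Fin a => u (S.orderEmbOfFin hS r)).det := by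
      rw [Matrix.det_vandermonde]
      refine Finset.prod_pos fun i _ => Finset.prod_pos fun j hj => ?_
      have hij : i < j := Finset.mem_Ioi.1 hj
      have := humono ((S.orderEmbOfFin hS).strictMono hij)
      linarith
    have hv2 : 0 < (Matrix.vandermonde fun r : Fin b => u (Sᶜ.orderEmbOfFin hcS r)).det := by
      rw [Matrix.det_vandermonde]
      refine Finset.prod_pos fun i _ => Finset.prod_pos fun j hj => ?_
      have hij : i < j := Finset.mem_Ioi.1 hj
      have := humono ((Sᶜ.orderEmbOfFin hcS).strictMono hij)
      linarith
    refine ⟨(Matrix.vandermonde fun r : Fin a => u (S.orderEmbOfFin hS r)).det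
      * (Matrix.vandermonde fun r : Fin b => u (Sᶜ.orderEmbOfFin hcS r)).det,
      mul_pos hv1 hv2, ?_⟩
    have hprod : (∏ m ∈ S, (-1 : ℝ) ^ ((m : ℕ) + 1))
        = (-1 : ℝ) ^ ((∑ m ∈ S, (m : ℕ)) + a) := by
      rw [Finset.prod_pow_eq_pow_sum, Finset.sum_add_distrib, Finset.sum_const, smul_eq_mul,
        mul_one, hS]
    rw [htermdef]
    simp only
    rw [hdet, hprod, hsign]
    push_cast
    rw [← mul_assoc, ← pow_add]
    congr 1
    have hpar : ((∑ m ∈ S, (m : ℕ)) + a) + ((∑ m ∈ S, (m : ℕ)) + a * (a - 1) / 2)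
        = 2 * (∑ m ∈ S, (m : ℕ)) + (a + a * (a - 1) / 2) := by ring
    rw [hpar, tri_eq a, ← hedef, pow_add, pow_mul]
    norm_num
  have hTne : T.Nonempty := by
    obtain ⟨S0, _, hcard0⟩ := Finset.exists_subset_card_eq (s := (Finset.univ : Finset (Fin k))) (n := a)
      (by simpa using ha)
    exact ⟨S0, Finset.mem_filter.2 ⟨Finset.mem_univ _, hcard0⟩⟩
  have h11 : (-1 : ℝ) ^ e * (-1 : ℝ) ^ e = 1 := by
    rw [← pow_add]
    exact Even.neg_one_pow ⟨e, rfl⟩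
  have hpos : 0 < (-1 : ℝ) ^ e * D := by
    rw [hD, Finset.mul_sum]
    refine Finset.sum_pos (fun S hST => ?_) hTne
    obtain ⟨v, hv, hterm⟩ := key S hST
    rw [hterm, ← mul_assoc, h11, one_mul]
    exact hv
  refine ⟨hpos, fun h0 => ?_⟩
  rw [h0, mul_zero] at hpos
  exact lt_irrefl _ hpos
end
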